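/- arXiv:2204.07694 — 6 statements merged into one kernel-verified Lean document; each statement's English description precedes it below -/
import Mathlib

section
/- For any density matrices ρ, σ on a finite-dimensional complex Hilbert space with σ positive definite and any n ∈ (0,∞) with n ≠ 1, the sandwiched Rényi relative entropy satisfies S_n(ρ‖σ) ≥ 0, and S_n(ρ‖σ) = 0 if and only if ρ = σ. -/
open Matrix
open scoped Kronecker ComplexOrder

/-- Real power of a Hermitian matrix via the spectral functional calculus
(junk value `0` on non-Hermitian matrices). -/
noncomputable def mpow {m : Type*} [Fintype m] [DecidableEq m]
    (A : Matrix m m ℂ) (r : ℝ) : Matrix m m ℂ :=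
  if hA : A.IsHermitian then
    (hA.eigenvectorUnitary : Matrix m m ℂ) *
      Matrix.diagonal (fun i => ((hA.eigenvalues i ^ r : ℝ) : ℂ)) *
      (star (hA.eigenvectorUnitary : Matrix m m ℂ))
  else 0

/-- Logarithm of a Hermitian matrix via the spectral functional calculus
(junk value `0` on non-Hermitian matrices). -/
noncomputable def mlog {m : Type*} [Fintype m] [DecidableEq m]
    (A : Matrix m m ℂ) : Matrix m m ℂ :=
  if hA : A.IsHermitian then
    (hA.eigenvectorUnitary : Matrix m m ℂ) *
      Matrix.diagonal (fun i => ((Real.log (hA.eigenvalues i) : ℝ) : ℂ)) *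
      (star (hA.eigenvectorUnitary : Matrix m m ℂ))
  else 0

/-- A density matrix: positive semidefinite with unit trace. -/
def IsDensity {m : Type*} [Fintype m] [DecidableEq m] (A : Matrix m m ℂ) : Prop :=
  A.PosSemidef ∧ A.trace = 1

/-- Sandwiched Rényi relative entropy
`S_n(ρ‖σ) = (n-1)⁻¹ log Tr[(σ^{(1-n)/(2n)} ρ σ^{(1-n)/(2n)})^n]`. -/
noncomputable def SRenyi {m : Type*} [Fintype m] [DecidableEq m]
    (n : ℝ) (ρ σ : Matrix m m ℂ) : ℝ :=
  (n - 1)⁻¹ *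
    Real.log ((mpow (mpow σ ((1 - n) / (2 * n)) * ρ * mpow σ ((1 - n) / (2 * n))) n).trace.re)

/-- Quantum relative entropy `S(ρ‖σ) = Tr(ρ log ρ) - Tr(ρ log σ)`. -/
noncomputable def relEnt {m : Type*} [Fintype m] [DecidableEq m]
    (ρ σ : Matrix m m ℂ) : ℝ :=
  ((ρ * mlog ρ).trace - (ρ * mlog σ).trace).re

/-- von Neumann entropy `S(τ) = -Tr(τ log τ)`. -/
noncomputable def vnEnt {m : Type*} [Fintype m] [DecidableEq m]
    (τ : Matrix m m ℂ) : ℝ :=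
  -((τ * mlog τ).trace.re)


namespace SRA

variable {m : Type*} [Fintype m] [DecidableEq m]

lemma conj_mul_conj {V : Matrix m m ℂ} (hV : V ∈ Matrix.unitaryGroup m ℂ) (d e : m → ℂ) :
    (V * diagonal d * star V) * (V * diagonal e * star V)
      = V * diagonal (fun i => d i * e i) * star V := by
  have h : star V * V = 1 := Matrix.mem_unitaryGroup_iff'.mp hV
  have key : V * diagonal d * star V * (V * diagonal e * star V)
      = V * (diagonal d * (star V * V) * diagonal e) * star V := by
    simp only [Matrix.mul_assoc]
  rw [key, h, mul_one, diagonal_mul_diagonal]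

lemma trace_conj {V : Matrix m m ℂ} (hV : V ∈ Matrix.unitaryGroup m ℂ) (d : m → ℂ) :
    (V * diagonal d * star V).trace = ∑ i, d i := by
  have h : star V * V = 1 := Matrix.mem_unitaryGroup_iff'.mp hV
  rw [Matrix.trace_mul_cycle, h, one_mul, trace_diagonal]

lemma posSemidef_conj {V : Matrix m m ℂ} (d : m → ℝ) (hd : ∀ i, 0 ≤ d i) :
    (V * diagonal (fun i => ((d i : ℝ) : ℂ)) * star V).PosSemidef := by
  have h : (diagonal (fun i => ((d i : ℝ) : ℂ))).PosSemidef := by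
    refine Matrix.posSemidef_diagonal_iff.mpr fun i => ?_
    exact_mod_cast hd i
  simpa [Matrix.star_eq_conjTranspose] using h.mul_mul_conjTranspose_same V

lemma trace_conj_mul_conj {U V : Matrix m m ℂ} (hU : U ∈ Matrix.unitaryGroup m ℂ)
    (d e : m → ℂ) :
    ((U * diagonal d * star U) * (V * diagonal e * star V)).trace
      = ∑ i, ∑ j, d i * e j * ((star U * V) i j * star ((star U * V) i j)) := by
  have hUU : U * star U = 1 := Matrix.mem_unitaryGroup_iff.mp hU
  set W := star U * V with hW
  have hsW : star W = star V * U := by rw [hW, StarMul.star_mul, star_star]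
  have key : (U * diagonal d * star U) * (V * diagonal e * star V)
      = U * (diagonal d * W * (diagonal e * star W)) * star U := by
    rw [hsW, hW]
    simp only [Matrix.mul_assoc, hUU, Matrix.mul_one]
  rw [key, Matrix.trace_mul_cycle, Matrix.mem_unitaryGroup_iff'.mp hU, one_mul]
  rw [Matrix.trace]
  congr 1
  funext i
  rw [Matrix.diag_apply, Matrix.mul_apply]
  congr 1
  funext j
  rw [Matrix.diagonal_mul, Matrix.diagonal_mul, Matrix.star_eq_conjTranspose,
    Matrix.conjTranspose_apply]
  ring

lemma conj_eq_conj_iff {U V : Matrix m m ℂ} (hU : U ∈ Matrix.unitaryGroup m ℂ)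
    (hV : V ∈ Matrix.unitaryGroup m ℂ) (d e : m → ℂ) :
    U * diagonal d * star U = V * diagonal e * star V
      ↔ ∀ i j, d i * (star U * V) i j = (star U * V) i j * e j := by
  have hU' : star U * U = 1 := Matrix.mem_unitaryGroup_iff'.mp hU
  have hV' : star V * V = 1 := Matrix.mem_unitaryGroup_iff'.mp hV
  have hUU : U * star U = 1 := Matrix.mem_unitaryGroup_iff.mp hU
  have hVV : V * star V = 1 := Matrix.mem_unitaryGroup_iff.mp hV
  constructor
  · intro h
    have h2 : diagonal d * (star U * V) = (star U * V) * diagonal e := by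
      have h3 := congrArg (fun X => star U * X * V) h
      simp only [Matrix.mul_assoc] at h3
      calc diagonal d * (star U * V) = star U * (U * (diagonal d * (star U * V))) := by
            rw [← Matrix.mul_assoc (star U) U, hU', one_mul]
        _ = star U * (V * (diagonal e * (star V * V))) := h3
        _ = (star U * V) * diagonal e := by
            rw [hV', mul_one, ← Matrix.mul_assoc]
    intro i j
    have := congrFun (congrFun h2 i) j
    rwa [Matrix.diagonal_mul, Matrix.mul_diagonal] at this
  · intro h
    have h2 : diagonal d * (star U * V) = (star U * V) * diagonal e := by
      ext i j
      rw [Matrix.diagonal_mul, Matrix.mul_diagonal]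
      exact h i j
    calc U * diagonal d * star U
        = U * (diagonal d * (star U * V)) * star V * (V * star V) := by
          simp only [Matrix.mul_assoc, hVV, Matrix.mul_one]
      _ = U * ((star U * V) * diagonal e) * star V * (V * star V) := by rw [h2]
      _ = (U * star U) * (V * diagonal e * star V) * (V * star V) := by
          simp only [Matrix.mul_assoc]
      _ = V * diagonal e * star V := by rw [hUU, hVV, one_mul, mul_one]


lemma mpow_eq {A : Matrix m m ℂ} (hA : A.IsHermitian) (r : ℝ) :
    mpow A r = (hA.eigenvectorUnitary : Matrix m m ℂ) *
      Matrix.diagonal (fun i => ((hA.eigenvalues i ^ r : ℝ) : ℂ)) *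
      (star (hA.eigenvectorUnitary : Matrix m m ℂ)) := dif_pos hA

lemma mpow_add {σ : Matrix m m ℂ} (hσ : σ.PosDef) (r r' : ℝ) :
    mpow σ r * mpow σ r' = mpow σ (r + r') := by
  have hh := hσ.1
  rw [mpow_eq hh r, mpow_eq hh r', mpow_eq hh (r + r'),
    conj_mul_conj (SetLike.coe_mem _)]
  have : (fun i => ((hh.eigenvalues i ^ r : ℝ) : ℂ) * ((hh.eigenvalues i ^ r' : ℝ) : ℂ))
      = fun i => ((hh.eigenvalues i ^ (r + r') : ℝ) : ℂ) := by
    funext i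
    rw [← Complex.ofReal_mul, ← Real.rpow_add (hσ.eigenvalues_pos i)]
  rw [this]

lemma mpow_zero {σ : Matrix m m ℂ} (hσ : σ.PosDef) : mpow σ 0 = 1 := by
  have hh := hσ.1
  rw [mpow_eq hh 0]
  have : (fun i => (((hh.eigenvalues i : ℝ) ^ (0:ℝ) : ℝ) : ℂ)) = fun _ => (1 : ℂ) := by
    funext i
    rw [Real.rpow_zero, Complex.ofReal_one]
  rw [this, diagonal_one, mul_one]
  exact Matrix.mem_unitaryGroup_iff.mp (SetLike.coe_mem _)

lemma mpow_one {σ : Matrix m m ℂ} (hσ : σ.PosDef) : mpow σ 1 = σ := by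
  have hh := hσ.1
  rw [mpow_eq hh 1]
  have : (fun i => (((hh.eigenvalues i : ℝ) ^ (1:ℝ) : ℝ) : ℂ)) = fun i => ((hh.eigenvalues i : ℝ) : ℂ) := by
    funext i; rw [Real.rpow_one]
  rw [this]
  exact hh.spectral_theorem.symm

lemma mpow_posSemidef {A : Matrix m m ℂ} (hA : A.PosSemidef) (r : ℝ) :
    (mpow A r).PosSemidef := by
  rw [mpow_eq hA.1 r]
  exact posSemidef_conj _ (fun i => Real.rpow_nonneg (hA.eigenvalues_nonneg i) r)

lemma mpow_isHermitian {A : Matrix m m ℂ} (hA : A.PosSemidef) (r : ℝ) :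
    (mpow A r).IsHermitian := (mpow_posSemidef hA r).1


lemma all0 {ι : Type*} [Fintype ι] (f : ι → ι → ℝ) (hf : ∀ i j, 0 ≤ f i j)
    (h0 : ∑ i, ∑ j, f i j = 0) : ∀ i j, f i j = 0 := by
  intro i j
  have h1 : ∀ i ∈ Finset.univ, (0:ℝ) ≤ ∑ j, f i j :=
    fun i _ => Finset.sum_nonneg (fun j _ => hf i j)
  have h2 := (Finset.sum_eq_zero_iff_of_nonneg h1).mp h0 i (Finset.mem_univ i)
  exact (Finset.sum_eq_zero_iff_of_nonneg (fun j _ => hf i j)).mp h2 j (Finset.mem_univ j)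

lemma core {ι : Type*} [Fintype ι] {n : ℝ} (hn : 0 < n) (lam s : ι → ℝ) (c : ι → ι → ℝ)
    (hlam : ∀ i, 0 ≤ lam i) (hs : ∀ j, 0 < s j) (hc : ∀ i j, 0 ≤ c i j)
    (hrow : ∀ i, ∑ j, c i j = 1) (hcol : ∀ j, ∑ i, c i j = 1)
    (hsum : ∑ j, s j = 1)
    (hcons : ∑ i, ∑ j, c i j * (lam i * s j ^ ((n - 1) / n)) = 1) :
    ((1 < n → 1 ≤ ∑ i, lam i ^ n) ∧ (n < 1 → (∑ i, lam i ^ n) ≤ 1)) ∧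
      (n ≠ 1 → ((∑ i, lam i ^ n) = 1 ↔ ∀ i j, c i j ≠ 0 → lam i = s j ^ (1 / n))) := by
  have hn0 : n ≠ 0 := ne_of_gt hn
  set v : ι → ι → ℝ := fun i j => lam i * s j ^ (-(1 / n)) with hv
  set w : ι → ι → ℝ := fun i j => c i j * s j with hw
  have hvnn : ∀ i j, 0 ≤ v i j := fun i j =>
    mul_nonneg (hlam i) (Real.rpow_nonneg (hs j).le _)
  have hwnn : ∀ i j, 0 ≤ w i j := fun i j => mul_nonneg (hc i j) (hs j).le
  have I1 : ∀ i j, w i j * v i j ^ n = c i j * lam i ^ n := by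
    intro i j
    have h1 : v i j ^ n = lam i ^ n * (s j)⁻¹ := by
      rw [hv]
      show (lam i * s j ^ (-(1 / n))) ^ n = _
      rw [Real.mul_rpow (hlam i) (Real.rpow_nonneg (hs j).le _),
        ← Real.rpow_mul (hs j).le]
      have : -(1 / n) * n = -1 := by field_simp
      rw [this, Real.rpow_neg_one]
    rw [h1, hw]
    show c i j * s j * (lam i ^ n * (s j)⁻¹) = _
    field_simp [(hs j).ne']
  have I2 : ∀ i j, w i j * v i j = c i j * (lam i * s j ^ ((n - 1) / n)) := by
    intro i j
    show c i j * s j * (lam i * s j ^ (-(1 / n))) = _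
    have h1 : s j * s j ^ (-(1 / n)) = s j ^ ((n - 1) / n) := by
      nth_rewrite 1 [← Real.rpow_one (s j)]
      rw [← Real.rpow_add (hs j)]
      congr 1
      field_simp
      ring
    calc c i j * s j * (lam i * s j ^ (-(1 / n)))
        = c i j * (lam i * (s j * s j ^ (-(1 / n)))) := by ring
      _ = _ := by rw [h1]
  have I3 : ∑ i, ∑ j, w i j = 1 := by
    rw [Finset.sum_comm]
    calc ∑ j, ∑ i, w i j = ∑ j, (∑ i, c i j) * s j := by
          refine Finset.sum_congr rfl fun j _ => ?_
          rw [Finset.sum_mul]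
      _ = ∑ j, s j := by
          refine Finset.sum_congr rfl fun j _ => ?_
          rw [hcol j, one_mul]
      _ = 1 := hsum
  have I4 : ∑ i, ∑ j, w i j * v i j = 1 := by
    calc ∑ i, ∑ j, w i j * v i j
        = ∑ i, ∑ j, c i j * (lam i * s j ^ ((n - 1) / n)) := by
          exact Finset.sum_congr rfl fun i _ => Finset.sum_congr rfl fun j _ => I2 i j
      _ = 1 := hcons
  have I5 : ∑ i, ∑ j, w i j * v i j ^ n = ∑ i, lam i ^ n := by
    refine Finset.sum_congr rfl fun i _ => ?_
    calc ∑ j, w i j * v i j ^ n = ∑ j, c i j * lam i ^ n := by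
          exact Finset.sum_congr rfl fun j _ => I1 i j
      _ = (∑ j, c i j) * lam i ^ n := by rw [Finset.sum_mul]
      _ = lam i ^ n := by rw [hrow i, one_mul]
  have expand : ∑ i, ∑ j, w i j * (v i j ^ n - 1 - n * (v i j - 1))
      = (∑ i, lam i ^ n) - 1 := by
    have e1 : ∀ i j, w i j * (v i j ^ n - 1 - n * (v i j - 1))
        = w i j * v i j ^ n - w i j - n * (w i j * v i j) + n * w i j := by
      intro i j; ring
    simp only [e1]
    simp only [Finset.sum_add_distrib, Finset.sum_sub_distrib, ← Finset.mul_sum]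
    rw [I5, I3, I4]
    ring
  have expand' : ∑ i, ∑ j, w i j * (1 + n * (v i j - 1) - v i j ^ n)
      = 1 - (∑ i, lam i ^ n) := by
    have e1 : ∀ i j, w i j * (1 + n * (v i j - 1) - v i j ^ n)
        = w i j + n * (w i j * v i j) - n * w i j - w i j * v i j ^ n := by
      intro i j; ring
    simp only [e1]
    simp only [Finset.sum_add_distrib, Finset.sum_sub_distrib, ← Finset.mul_sum]
    rw [I5, I3, I4]
    ring
  have vone : ∀ i j, v i j = 1 → lam i = s j ^ (1 / n) := by
    intro i j hvij
    have hsp : (0:ℝ) < s j ^ (1 / n) := Real.rpow_pos_of_pos (hs j) _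
    have : lam i * (s j ^ (1 / n))⁻¹ = 1 := by
      rw [← Real.rpow_neg (hs j).le]
      exact hvij
    rw [← div_eq_mul_inv] at this
    exact (div_eq_one_iff_eq hsp.ne').mp this
  have vone' : ∀ i j, lam i = s j ^ (1 / n) → v i j = 1 := by
    intro i j hl
    show lam i * s j ^ (-(1 / n)) = 1
    rw [hl, ← Real.rpow_add (hs j)]
    have : 1 / n + -(1 / n) = 0 := by ring
    rw [this, Real.rpow_zero]
  -- Bernoulli bounds
  have bern_le : 1 < n → ∀ i j, 1 + n * (v i j - 1) ≤ v i j ^ n := by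
    intro h1n i j
    have h := one_add_mul_self_le_rpow_one_add (s := v i j - 1) (by linarith [hvnn i j]) h1n.le
    rwa [show (1 : ℝ) + (v i j - 1) = v i j by ring] at h
  have bern_le' : n < 1 → ∀ i j, v i j ^ n ≤ 1 + n * (v i j - 1) := by
    intro h1n i j
    have h := rpow_one_add_le_one_add_mul_self (s := v i j - 1) (by linarith [hvnn i j]) hn.le h1n.le
    rwa [show (1 : ℝ) + (v i j - 1) = v i j by ring] at h
  constructor
  · constructor
    · intro h1n
      have h0 : 0 ≤ ∑ i, ∑ j, w i j * (v i j ^ n - 1 - n * (v i j - 1)) :=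
        Finset.sum_nonneg fun i _ => Finset.sum_nonneg fun j _ =>
          mul_nonneg (hwnn i j) (by linarith [bern_le h1n i j])
      linarith [expand ▸ h0]
    · intro h1n
      have h0 : 0 ≤ ∑ i, ∑ j, w i j * (1 + n * (v i j - 1) - v i j ^ n) :=
        Finset.sum_nonneg fun i _ => Finset.sum_nonneg fun j _ =>
          mul_nonneg (hwnn i j) (by linarith [bern_le' h1n i j])
      linarith [expand' ▸ h0]
  · intro hn1
    constructor
    · intro hq i j hcij
      have hwpos : 0 < w i j := mul_pos (lt_of_le_of_ne (hc i j) (Ne.symm hcij)) (hs j)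
      refine vone i j ?_
      by_contra hne
      have hne' : v i j - 1 ≠ 0 := sub_ne_zero.mpr hne
      rcases lt_or_gt_of_ne hn1 with hlt | hgt
      · -- n < 1 : strict Bernoulli gives positive gap
        have hstrict : v i j ^ n < 1 + n * (v i j - 1) := by
          have h := rpow_one_add_lt_one_add_mul_self (s := v i j - 1)
            (by linarith [hvnn i j]) hne' hn hlt
          rwa [show (1 : ℝ) + (v i j - 1) = v i j by ring] at h
        have hterm : ∀ i' j', 0 ≤ w i' j' * (1 + n * (v i' j' - 1) - v i' j' ^ n) :=
          fun i' j' => mul_nonneg (hwnn i' j') (by linarith [bern_le' hlt i' j'])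
        have hzero : ∑ i, ∑ j, w i j * (1 + n * (v i j - 1) - v i j ^ n) = 0 := by
          rw [expand', hq]; ring
        have := all0 _ hterm hzero i j
        nlinarith [hwpos, hstrict]
      · -- 1 < n
        have hstrict : 1 + n * (v i j - 1) < v i j ^ n := by
          have h := one_add_mul_self_lt_rpow_one_add (s := v i j - 1)
            (by linarith [hvnn i j]) hne' hgt
          rwa [show (1 : ℝ) + (v i j - 1) = v i j by ring] at h
        have hterm : ∀ i' j', 0 ≤ w i' j' * (v i' j' ^ n - 1 - n * (v i' j' - 1)) :=
          fun i' j' => mul_nonneg (hwnn i' j') (by linarith [bern_le hgt i' j'])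
        have hzero : ∑ i, ∑ j, w i j * (v i j ^ n - 1 - n * (v i j - 1)) = 0 := by
          rw [expand, hq]; ring
        have := all0 _ hterm hzero i j
        nlinarith [hwpos, hstrict]
    · intro h
      calc ∑ i, lam i ^ n = ∑ i, ∑ j, c i j * lam i ^ n := by
            refine Finset.sum_congr rfl fun i _ => ?_
            rw [← Finset.sum_mul, hrow i, one_mul]
        _ = ∑ i, ∑ j, w i j := by
            refine Finset.sum_congr rfl fun i _ => Finset.sum_congr rfl fun j _ => ?_
            show c i j * lam i ^ n = c i j * s j
            rcases eq_or_ne (c i j) 0 with h0 | h0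
            · rw [h0, zero_mul, zero_mul]
            · rw [h i j h0]
              show c i j * (s j ^ (1/n)) ^ n = c i j * s j
              rw [← Real.rpow_mul (hs j).le]
              have : 1 / n * n = 1 := by field_simp
              rw [this, Real.rpow_one]
        _ = 1 := I3

end SRA

/-- nonnegativity and faithfulness of the sandwiched Rényi relative entropy. -/
theorem srenyi_nonneg_and_faithful {m : Type*} [Fintype m] [DecidableEq m]
    (ρ σ : Matrix m m ℂ) (hρ : IsDensity ρ) (hσ : IsDensity σ) (hσpd : σ.PosDef)
    (n : ℝ) (hn : 0 < n) (hn1 : n ≠ 1) :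
    0 ≤ SRenyi n ρ σ ∧ (SRenyi n ρ σ = 0 ↔ ρ = σ) := by
  classical
  have hn0 : n ≠ 0 := ne_of_gt hn
  simp only [SRenyi]
  set a : ℝ := (1 - n) / (2 * n) with ha
  have hσh : σ.IsHermitian := hσpd.1
  set V : Matrix m m ℂ := (hσh.eigenvectorUnitary : Matrix m m ℂ) with hVdef
  have hVu : V ∈ Matrix.unitaryGroup m ℂ := SetLike.coe_mem _
  set s : m → ℝ := hσh.eigenvalues with hsdef
  have hspos : ∀ j, 0 < s j := fun j => hσpd.eigenvalues_pos j
  set A : Matrix m m ℂ := mpow σ a * ρ * mpow σ a with hA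
  have hX : (mpow σ a).IsHermitian := SRA.mpow_isHermitian hσpd.posSemidef a
  have hApsd : A.PosSemidef := by
    have h := hρ.1.mul_mul_conjTranspose_same (mpow σ a)
    rw [hX.eq] at h
    exact h
  have hAh : A.IsHermitian := hApsd.1
  set U : Matrix m m ℂ := (hAh.eigenvectorUnitary : Matrix m m ℂ) with hUdef
  have hUu : U ∈ Matrix.unitaryGroup m ℂ := SetLike.coe_mem _
  set lam : m → ℝ := hAh.eigenvalues with hlamdef
  have hlam : ∀ i, 0 ≤ lam i := hApsd.eigenvalues_nonneg
  set W : Matrix m m ℂ := star U * V with hWdef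
  set c : m → m → ℝ := fun i j => Complex.normSq (W i j) with hc
  have hcnn : ∀ i j, 0 ≤ c i j := fun i j => Complex.normSq_nonneg _
  have hWW : W * star W = 1 := by
    rw [hWdef, StarMul.star_mul, star_star]
    calc star U * V * (star V * U) = star U * (V * star V) * U := by
          simp only [Matrix.mul_assoc]
      _ = star U * U := by rw [Matrix.mem_unitaryGroup_iff.mp hVu, Matrix.mul_one]
      _ = 1 := Matrix.mem_unitaryGroup_iff'.mp hUu
  have hW'W : star W * W = 1 := by
    rw [hWdef, StarMul.star_mul, star_star]
    calc star V * U * (star U * V) = star V * (U * star U) * V := by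
          simp only [Matrix.mul_assoc]
      _ = star V * V := by rw [Matrix.mem_unitaryGroup_iff.mp hUu, Matrix.mul_one]
      _ = 1 := Matrix.mem_unitaryGroup_iff'.mp hVu
  have hrow : ∀ i, ∑ j, c i j = 1 := by
    intro i
    have h1 := congrFun (congrFun hWW i) i
    rw [Matrix.mul_apply, Matrix.one_apply_eq] at h1
    have h2 : ∀ j, W i j * (star W) j i = ((c i j : ℝ) : ℂ) := by
      intro j
      rw [Matrix.star_eq_conjTranspose, Matrix.conjTranspose_apply]
      exact Complex.mul_conj _
    have h3 : (∑ j, W i j * (star W) j i) = ((∑ j, c i j : ℝ) : ℂ) := by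
      push_cast
      exact Finset.sum_congr rfl fun j _ => h2 j
    rw [h3] at h1
    exact_mod_cast h1
  have hcol : ∀ j, ∑ i, c i j = 1 := by
    intro j
    have h1 := congrFun (congrFun hW'W j) j
    rw [Matrix.mul_apply, Matrix.one_apply_eq] at h1
    have h2 : ∀ i, (star W) j i * W i j = ((c i j : ℝ) : ℂ) := by
      intro i
      rw [Matrix.star_eq_conjTranspose, Matrix.conjTranspose_apply, mul_comm]
      exact Complex.mul_conj _
    have h3 : (∑ i, (star W) j i * W i j) = ((∑ i, c i j : ℝ) : ℂ) := by
      push_cast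
      exact Finset.sum_congr rfl fun i _ => h2 i
    rw [h3] at h1
    exact_mod_cast h1
  have hssum : ∑ j, s j = 1 := by
    have h1 : σ.trace = ((∑ j, s j : ℝ) : ℂ) := by
      conv_lhs => rw [show σ = V * diagonal (fun j => ((s j : ℝ) : ℂ)) * star V from hσh.spectral_theorem]
      rw [SRA.trace_conj hVu]
      push_cast
      rfl
    rw [hσ.2] at h1
    exact_mod_cast h1.symm
  have hinv : mpow σ (-a) * mpow σ a = 1 := by
    rw [SRA.mpow_add hσpd, neg_add_cancel, SRA.mpow_zero hσpd]
  have hinv' : mpow σ a * mpow σ (-a) = 1 := by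
    rw [SRA.mpow_add hσpd, add_neg_cancel, SRA.mpow_zero hσpd]
  have hrec : ρ = mpow σ (-a) * A * mpow σ (-a) := by
    rw [hA]
    calc ρ = (mpow σ (-a) * mpow σ a) * ρ * (mpow σ a * mpow σ (-a)) := by
          rw [hinv, hinv', one_mul, mul_one]
      _ = mpow σ (-a) * (mpow σ a * ρ * mpow σ a) * mpow σ (-a) := by
          simp only [Matrix.mul_assoc]
  have hYY : mpow σ (-a) * mpow σ (-a) = mpow σ ((n - 1) / n) := by
    have harith : -a + -a = (n - 1) / n := by
      rw [ha]
      rw [← neg_div, ← add_div, div_eq_div_iff (by positivity) (by positivity)]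
      ring
    rw [SRA.mpow_add hσpd, harith]
  have htr : ρ.trace = (A * mpow σ ((n - 1) / n)).trace := by
    conv_lhs => rw [hrec]
    rw [Matrix.trace_mul_cycle, Matrix.trace_mul_comm, hYY]
  have hAspec : A = U * diagonal (fun i => ((lam i : ℝ) : ℂ)) * star U :=
    hAh.spectral_theorem
  have hBspec : mpow σ ((n - 1) / n)
      = V * diagonal (fun j => ((s j ^ ((n - 1) / n) : ℝ) : ℂ)) * star V :=
    SRA.mpow_eq hσh _
  have htr2 : (A * mpow σ ((n - 1) / n)).trace
      = ((∑ i, ∑ j, c i j * (lam i * s j ^ ((n - 1) / n)) : ℝ) : ℂ) := by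
    conv_lhs => rw [hAspec, hBspec]
    rw [SRA.trace_conj_mul_conj hUu, ← hWdef]
    push_cast
    refine Finset.sum_congr rfl fun i _ => Finset.sum_congr rfl fun j _ => ?_
    simp only [hc]
    rw [Complex.star_def, Complex.mul_conj]
    push_cast
    ring
  have hcons : ∑ i, ∑ j, c i j * (lam i * s j ^ ((n - 1) / n)) = 1 := by
    have h5 : ((∑ i, ∑ j, c i j * (lam i * s j ^ ((n - 1) / n)) : ℝ) : ℂ) = 1 := by
      rw [← htr2, ← htr, hρ.2]
    exact_mod_cast h5
  set q : ℝ := ∑ i, lam i ^ n with hq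
  have hQ : (mpow A n).trace = ((q : ℝ) : ℂ) := by
    rw [SRA.mpow_eq hAh, SRA.trace_conj hUu, hq]
    push_cast
    rfl
  have hqre : (mpow A n).trace.re = q := by rw [hQ, Complex.ofReal_re]
  obtain ⟨⟨hub, hlb⟩, heqv⟩ :=
    SRA.core hn lam s c hlam hspos hcnn hrow hcol hssum hcons
  have hqnn : 0 ≤ q := Finset.sum_nonneg fun i _ => Real.rpow_nonneg (hlam i) n
  have hqpos : 0 < q := by
    rcases eq_or_lt_of_le hqnn with h0 | h
    · exfalso
      have hlam0 : ∀ i, lam i = 0 := by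
        intro i
        have h1 := (Finset.sum_eq_zero_iff_of_nonneg
          (fun i _ => Real.rpow_nonneg (hlam i) n)).mp h0.symm i (Finset.mem_univ i)
        exact (Real.rpow_eq_zero (hlam i) hn0).mp h1
      have : (1:ℝ) = 0 := by
        rw [← hcons]
        refine Finset.sum_eq_zero fun i _ => Finset.sum_eq_zero fun j _ => ?_
        rw [hlam0 i, zero_mul, mul_zero]
      norm_num at this
    · exact h
  -- key equivalence q = 1 ↔ ρ = σ
  have main2 : ρ = σ → q = 1 := by
    intro hrs
    have hA2 : A = mpow σ (1 / n) := by
      rw [hA, hrs]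
      calc mpow σ a * σ * mpow σ a = mpow σ a * mpow σ 1 * mpow σ a := by
            rw [SRA.mpow_one hσpd]
        _ = mpow σ (a + 1 + a) := by rw [SRA.mpow_add hσpd, SRA.mpow_add hσpd]
        _ = mpow σ (1 / n) := by
            have harith : a + 1 + a = 1 / n := by
              rw [ha]
              rw [div_add' _ _ _ (by positivity), ← add_div,
                div_eq_div_iff (by positivity) (by positivity)]
              ring
            rw [harith]
    have hA3 : A = V * diagonal (fun j => ((s j ^ (1 / n) : ℝ) : ℂ)) * star V := by
      rw [hA2]
      exact SRA.mpow_eq hσh _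
    have hent := (SRA.conj_eq_conj_iff hUu hVu _ _).mp (hAspec.symm.trans hA3)
    have hkey : ∀ i j, c i j ≠ 0 → lam i = s j ^ (1 / n) := by
      intro i j hcij
      have hW0 : W i j ≠ 0 := by
        intro h0
        apply hcij
        simp only [hc, h0, map_zero]
      have h := hent i j
      rw [mul_comm (W i j)] at h
      have h2 := mul_right_cancel₀ hW0 h
      exact_mod_cast h2
    exact (heqv hn1).mpr hkey
  have main1 : q = 1 → ρ = σ := by
    intro hq1
    have hkey : ∀ i j, c i j ≠ 0 → lam i = s j ^ (1 / n) := (heqv hn1).mp hq1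
    have hent : ∀ i j, ((lam i : ℝ) : ℂ) * W i j = W i j * ((s j ^ (1 / n) : ℝ) : ℂ) := by
      intro i j
      rcases eq_or_ne (W i j) 0 with h0 | h0
      · rw [h0, mul_zero, zero_mul]
      · have hcij : c i j ≠ 0 := by
          simp only [hc]
          exact fun hcc => h0 (Complex.normSq_eq_zero.mp hcc)
        rw [hkey i j hcij, mul_comm]
    have hAeq : A = V * diagonal (fun j => ((s j ^ (1 / n) : ℝ) : ℂ)) * star V := by
      rw [hAspec]
      exact (SRA.conj_eq_conj_iff hUu hVu _ _).mpr hent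
    have hmp : mpow σ (-a) = V * diagonal (fun j => ((s j ^ (-a) : ℝ) : ℂ)) * star V :=
      SRA.mpow_eq hσh _
    have harith : -a + 1 / n + -a = 1 := by
      rw [ha]
      rw [← neg_div, div_add_div _ _ (by positivity) hn0,
        div_add_div _ _ (by positivity) (by positivity), div_eq_one_iff_eq (by positivity)]
      ring
    calc ρ = mpow σ (-a) * A * mpow σ (-a) := hrec
      _ = (V * diagonal (fun j => ((s j ^ (-a) : ℝ) : ℂ)) * star V) *
            (V * diagonal (fun j => ((s j ^ (1 / n) : ℝ) : ℂ)) * star V) *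
            (V * diagonal (fun j => ((s j ^ (-a) : ℝ) : ℂ)) * star V) := by
          rw [← hmp, ← hAeq]
      _ = V * diagonal (fun j => ((s j : ℝ) : ℂ)) * star V := by
          rw [SRA.conj_mul_conj hVu, SRA.conj_mul_conj hVu]
          have hfun : (fun j => ((s j ^ (-a) : ℝ) : ℂ) * ((s j ^ (1 / n) : ℝ) : ℂ)
                * ((s j ^ (-a) : ℝ) : ℂ)) = fun j => ((s j : ℝ) : ℂ) := by
            funext j
            rw [← Complex.ofReal_mul, ← Complex.ofReal_mul,
              ← Real.rpow_add (hspos j), ← Real.rpow_add (hspos j), harith, Real.rpow_one]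
          show V * diagonal (fun j => ((s j ^ (-a) : ℝ) : ℂ) * ((s j ^ (1 / n) : ℝ) : ℂ)
              * ((s j ^ (-a) : ℝ) : ℂ)) * star V = _
          rw [hfun]
      _ = σ := hσh.spectral_theorem.symm
  rw [hqre]
  rcases lt_or_gt_of_ne hn1 with hlt | hgt
  · -- n < 1
    have hq1 : q ≤ 1 := hlb hlt
    have hinvle : (n - 1)⁻¹ ≤ 0 := inv_nonpos.mpr (by linarith)
    constructor
    · have hlognp : Real.log q ≤ 0 := Real.log_nonpos hqnn hq1
      nlinarith [mul_nonneg (neg_nonneg.2 hinvle) (neg_nonneg.2 hlognp)]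
    · constructor
      · intro h0
        have hlog : Real.log q = 0 := by
          rcases mul_eq_zero.mp h0 with h | h
          · exfalso
            have : n - 1 = 0 := inv_eq_zero.mp h
            exact hn1 (by linarith)
          · exact h
        have : q = 1 := by
          rcases Real.log_eq_zero.mp hlog with h | h | h
          · exact absurd h (ne_of_gt hqpos)
          · exact h
          · linarith [hqpos]
        exact main1 this
      · intro hrs
        rw [main2 hrs, Real.log_one, mul_zero]
  · -- 1 < n
    have hq1 : 1 ≤ q := hub hgt
    have hinvge : 0 ≤ (n - 1)⁻¹ := inv_nonneg.mpr (by linarith)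
    constructor
    · exact mul_nonneg hinvge (Real.log_nonneg hq1)
    · constructor
      · intro h0
        have hlog : Real.log q = 0 := by
          rcases mul_eq_zero.mp h0 with h | h
          · exfalso
            have : n - 1 = 0 := inv_eq_zero.mp h
            exact hn1 (by linarith)
          · exact h
        have : q = 1 := by
          rcases Real.log_eq_zero.mp hlog with h | h | h
          · exact absurd h (ne_of_gt hqpos)
          · exact h
          · linarith [hqpos]
        exact main1 this
      · intro hrs
        rw [main2 hrs, Real.log_one, mul_zero]
end

section
/- The von Neumann entropy of the encoded state satisfies the Ryu–Takayanagi-type formula: in the block setup, for ρ̃ = ⊕_α p_α ρ_{a_α} ⊗ χ_α, one has S(ρ̃) = Σ_α p_α S(χ_α) + Σ_α p_α S(ρ_{a_α}) − Σ_α p_α log p_α, where S(τ) = −Tr(τ log τ) denotes the von Neumann entropy. (The first term is Tr(ρ̃ L) for the area operator L = ⊕_α S(χ_α)·I, and the remaining terms form the algebraic entropy S(ρ_a : M).) -/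
open Matrix
open scoped Kronecker ComplexOrder

open Polynomial

section Helper
variable {m : Type*} [Fintype m] [DecidableEq m]

/-- determinant of z•1 - V D V* -/
lemma det_smul_one_sub_decomp (V : Matrix m m ℂ) (hV : V * star V = 1)
    (d : m → ℂ) (z : ℂ) :
    (z • (1 : Matrix m m ℂ) - V * Matrix.diagonal d * star V).det = ∏ i, (z - d i) := by
  have h1 : z • (1 : Matrix m m ℂ) = V * (z • (1 : Matrix m m ℂ)) * star V := by
    rw [mul_smul_comm, smul_mul_assoc, mul_one, hV]
  have h2 : z • (1 : Matrix m m ℂ) - V * Matrix.diagonal d * star V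
      = V * ((z • (1 : Matrix m m ℂ)) - Matrix.diagonal d) * star V := by
    rw [mul_sub, sub_mul, ← h1]
  have hdet : V.det * (star V).det = 1 := by
    rw [← Matrix.det_mul, hV, Matrix.det_one]
  rw [h2, Matrix.det_mul, Matrix.det_mul, mul_comm, ← mul_assoc, mul_comm (star V).det,
    hdet, one_mul]
  rw [Matrix.smul_one_eq_diagonal, Matrix.diagonal_sub, Matrix.det_diagonal]

lemma multiset_eq_of_decomp (A V W : Matrix m m ℂ) (hV : V * star V = 1)
    (hW : W * star W = 1) (d e : m → ℂ)
    (h1 : A = V * Matrix.diagonal d * star V)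
    (h2 : A = W * Matrix.diagonal e * star W) :
    Multiset.map d Finset.univ.val = Multiset.map e Finset.univ.val := by
  have key : (∏ i, (X - C (d i)) : ℂ[X]) = ∏ i, (X - C (e i)) := by
    apply Polynomial.funext
    intro z
    simp only [eval_prod, eval_sub, eval_X, eval_C]
    rw [← det_smul_one_sub_decomp V hV d z, ← det_smul_one_sub_decomp W hW e z, ← h1, ← h2]
  have rts : ∀ (f : m → ℂ), (∏ i, (X - C (f i)) : ℂ[X]).roots
      = Multiset.map f Finset.univ.val := by
    intro f
    rw [Finset.prod_eq_multiset_prod]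
    rw [show (Multiset.map (fun i => X - C (f i)) Finset.univ.val)
        = (Multiset.map f Finset.univ.val).map (fun a => X - C a) by
      rw [Multiset.map_map]; rfl]
    exact roots_multiset_prod_X_sub_C _
  rw [← rts d, ← rts e, key]

end Helper

section Helper2
variable {m : Type*} [Fintype m] [DecidableEq m]

lemma sum_f_eq_of_decomp (A V : Matrix m m ℂ) (d : m → ℝ)
    (hV : V * star V = 1)
    (hA : A = V * Matrix.diagonal (fun i => ((d i : ℝ) : ℂ)) * star V)
    (hherm : A.IsHermitian) (f : ℝ → ℝ) :
    ∑ i, f (hherm.eigenvalues i) = ∑ i, f (d i) := by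
  have hU : (hherm.eigenvectorUnitary : Matrix m m ℂ)
      * star (hherm.eigenvectorUnitary : Matrix m m ℂ) = 1 :=
    Matrix.mem_unitaryGroup_iff.mp hherm.eigenvectorUnitary.2
  have hspec := hherm.spectral_theorem
  have hmult := multiset_eq_of_decomp A (hherm.eigenvectorUnitary : Matrix m m ℂ) V hU hV
    (fun i => ((hherm.eigenvalues i : ℝ) : ℂ)) (fun i => ((d i : ℝ) : ℂ))
    (by simpa [Function.comp_def] using hspec) hA
  have h3 := congrArg (fun s => (Multiset.map (fun z : ℂ => f z.re) s).sum) hmult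
  simp only [Multiset.map_map, Function.comp] at h3
  rw [Finset.sum_eq_multiset_sum, Finset.sum_eq_multiset_sum]
  simpa using h3

lemma entTrace_of_decomp (A V : Matrix m m ℂ) (d : m → ℝ)
    (hV : V * star V = 1) (hV' : star V * V = 1)
    (hA : A = V * Matrix.diagonal (fun i => ((d i : ℝ) : ℂ)) * star V) :
    (A * mlog A).trace = ((∑ i, d i * Real.log (d i) : ℝ) : ℂ) := by
  have hherm : A.IsHermitian := by
    rw [hA]
    exact Matrix.isHermitian_mul_mul_conjTranspose V
      (Matrix.isHermitian_diagonal_iff.mpr fun i => Complex.conj_ofReal (d i))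
  have hU : (hherm.eigenvectorUnitary : Matrix m m ℂ)
      * star (hherm.eigenvectorUnitary : Matrix m m ℂ) = 1 :=
    Matrix.mem_unitaryGroup_iff.mp hherm.eigenvectorUnitary.2
  have hU' : star (hherm.eigenvectorUnitary : Matrix m m ℂ)
      * (hherm.eigenvectorUnitary : Matrix m m ℂ) = 1 :=
    Matrix.mem_unitaryGroup_iff'.mp hherm.eigenvectorUnitary.2
  set U := (hherm.eigenvectorUnitary : Matrix m m ℂ) with hUdef
  have hml : mlog A = U * Matrix.diagonal (fun i => ((Real.log (hherm.eigenvalues i) : ℝ) : ℂ))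
      * star U := by
    rw [mlog, dif_pos hherm]
  have hspec : A = U * Matrix.diagonal (fun i => ((hherm.eigenvalues i : ℝ) : ℂ)) * star U := by
    simpa [Function.comp_def] using hherm.spectral_theorem
  have hprod : A * mlog A = U * Matrix.diagonal
      (fun i => ((hherm.eigenvalues i * Real.log (hherm.eigenvalues i) : ℝ) : ℂ)) * star U := by
    rw [hml]
    nth_rewrite 1 [hspec]
    simp only [Matrix.mul_assoc]
    rw [show star U * (U * (Matrix.diagonal (fun i => ((Real.log (hherm.eigenvalues i) : ℝ) : ℂ))
        * star U)) = Matrix.diagonal (fun i => ((Real.log (hherm.eigenvalues i) : ℝ) : ℂ))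
        * star U from by rw [← Matrix.mul_assoc, hU', Matrix.one_mul]]
    rw [← Matrix.mul_assoc (Matrix.diagonal _), Matrix.diagonal_mul_diagonal]
    congr 2
    funext i
    push_cast
    ring
  have htr : (A * mlog A).trace
      = ((∑ i, hherm.eigenvalues i * Real.log (hherm.eigenvalues i) : ℝ) : ℂ) := by
    rw [hprod, Matrix.trace_mul_cycle, hU', Matrix.one_mul, Matrix.trace_diagonal]
    push_cast
    rfl
  rw [htr]
  exact_mod_cast congrArg (fun x : ℝ => (x : ℂ))
    (sum_f_eq_of_decomp A V d hV hA hherm (fun x => x * Real.log x))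

lemma trace_of_decomp (A V : Matrix m m ℂ) (d : m → ℝ)
    (hV' : star V * V = 1)
    (hA : A = V * Matrix.diagonal (fun i => ((d i : ℝ) : ℂ)) * star V) :
    A.trace = ((∑ i, d i : ℝ) : ℂ) := by
  rw [hA, Matrix.trace_mul_cycle, hV', Matrix.one_mul, Matrix.trace_diagonal]
  push_cast
  rfl

end Helper2

section Blocks

lemma kron_conjT {m n : Type*} [Fintype m] [Fintype n]
    (A : Matrix m m ℂ) (B : Matrix n n ℂ) : (A ⊗ₖ B)ᴴ = Aᴴ ⊗ₖ Bᴴ := by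
  ext ⟨i, j⟩ ⟨k, l⟩
  simp [Matrix.conjTranspose_apply, Matrix.kroneckerMap_apply, mul_comm]

variable {ι : Type*} [Fintype ι] [DecidableEq ι] {da db : ι → ℕ}

lemma block_unitary (U : ∀ α, Matrix (Fin (da α)) (Fin (da α)) ℂ)
    (W : ∀ α, Matrix (Fin (db α)) (Fin (db α)) ℂ)
    (hU : ∀ α, U α * star (U α) = 1) (hW : ∀ α, W α * star (W α) = 1) :
    Matrix.blockDiagonal' (fun α => U α ⊗ₖ W α)
      * star (Matrix.blockDiagonal' (fun α => U α ⊗ₖ W α)) = 1 := by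
  rw [Matrix.star_eq_conjTranspose, Matrix.blockDiagonal'_conjTranspose,
    ← Matrix.blockDiagonal'_mul (fun α => U α ⊗ₖ W α) (fun α => (U α ⊗ₖ W α)ᴴ)]
  have : (fun k => (U k ⊗ₖ W k) * (U k ⊗ₖ W k)ᴴ)
      = (1 : ∀ i, Matrix (Fin (da i) × Fin (db i)) (Fin (da i) × Fin (db i)) ℂ) := by
    funext k
    rw [kron_conjT, ← Matrix.mul_kronecker_mul, ← Matrix.star_eq_conjTranspose,
      ← Matrix.star_eq_conjTranspose, hU k, hW k]
    simpa using Matrix.one_kronecker_one (α := ℂ)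
  rw [this, Matrix.blockDiagonal'_one]

lemma block_decomp (U : ∀ α, Matrix (Fin (da α)) (Fin (da α)) ℂ)
    (W : ∀ α, Matrix (Fin (db α)) (Fin (db α)) ℂ)
    (lam : ∀ α, Fin (da α) → ℝ) (mu : ∀ α, Fin (db α) → ℝ) (p : ι → ℝ) :
    Matrix.blockDiagonal' (fun α => (p α : ℂ) •
        ((U α * Matrix.diagonal (fun i => ((lam α i : ℝ) : ℂ)) * star (U α)) ⊗ₖ
         (W α * Matrix.diagonal (fun j => ((mu α j : ℝ) : ℂ)) * star (W α))))
      = Matrix.blockDiagonal' (fun α => U α ⊗ₖ W α)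
        * Matrix.diagonal (fun x : Σ α, Fin (da α) × Fin (db α) =>
            ((p x.1 * (lam x.1 x.2.1 * mu x.1 x.2.2) : ℝ) : ℂ))
        * star (Matrix.blockDiagonal' (fun α => U α ⊗ₖ W α)) := by
  rw [Matrix.star_eq_conjTranspose, Matrix.blockDiagonal'_conjTranspose]
  have hdiag : (Matrix.diagonal (fun x : Σ α, Fin (da α) × Fin (db α) =>
      ((p x.1 * (lam x.1 x.2.1 * mu x.1 x.2.2) : ℝ) : ℂ)))
      = Matrix.blockDiagonal' (fun α => Matrix.diagonal
          (fun ij : Fin (da α) × Fin (db α) =>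
            ((p α * (lam α ij.1 * mu α ij.2) : ℝ) : ℂ))) := by
    exact (Matrix.blockDiagonal'_diagonal
      (fun α (ij : Fin (da α) × Fin (db α)) =>
        ((p α * (lam α ij.1 * mu α ij.2) : ℝ) : ℂ))).symm
  rw [hdiag]
  rw [← Matrix.blockDiagonal'_mul (fun α => U α ⊗ₖ W α)
    (fun α => Matrix.diagonal (fun ij : Fin (da α) × Fin (db α) =>
      ((p α * (lam α ij.1 * mu α ij.2) : ℝ) : ℂ)))]
  rw [← Matrix.blockDiagonal'_mul]
  refine congrArg Matrix.blockDiagonal' (funext fun α => ?_)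
  -- per-block identity
  rw [kron_conjT]
  rw [Matrix.mul_kronecker_mul, Matrix.mul_kronecker_mul]
  rw [Matrix.diagonal_kronecker_diagonal]
  rw [← Matrix.star_eq_conjTranspose, ← Matrix.star_eq_conjTranspose]
  rw [← smul_mul_assoc, ← mul_smul_comm]
  congr 2
  rw [← Matrix.diagonal_smul]
  refine congrArg Matrix.diagonal (funext fun ij => ?_)
  show (p α : ℂ) * ((lam α ij.1 : ℂ) * (mu α ij.2 : ℂ))
    = ((p α * (lam α ij.1 * mu α ij.2) : ℝ) : ℂ)
  push_cast
  ring

end Blocks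

section Arith

lemma dsum {n k : Type*} [Fintype n] [Fintype k] (a : n → ℝ) (b : k → ℝ) (c : ℝ) :
    ∑ i, ∑ j, a i * (b j * c) = (∑ i, a i) * ((∑ j, b j) * c) := by
  simp only [← Finset.sum_mul, ← Finset.mul_sum]

lemma ptlog {c x y : ℝ} (hc : 0 < c) (hx : 0 ≤ x) (hy : 0 ≤ y) :
    (c * (x * y)) * Real.log (c * (x * y))
      = x * (y * (c * Real.log c)) + (x * Real.log x) * (y * c)
        + x * ((y * Real.log y) * c) := by
  rcases hx.eq_or_lt with h | h
  · simp [← h]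
  rcases hy.eq_or_lt with h' | h'
  · simp [← h']
  rw [Real.log_mul hc.ne' (by positivity), Real.log_mul h.ne' h'.ne']
  ring

end Arith

/-- the Ryu–Takayanagi-type formula for the von Neumann entropy of the
block-diagonal encoded state `ρ̃ = ⊕_α p_α ρ_{a_α} ⊗ χ_α`. -/
theorem vnEnt_block_encoded {ι : Type*} [Fintype ι] [DecidableEq ι] (da db : ι → ℕ)
    (p : ι → ℝ) (hp : ∀ α, 0 < p α) (hp1 : ∑ α, p α = 1)
    (ρ : ∀ α, Matrix (Fin (da α)) (Fin (da α)) ℂ) (hρ : ∀ α, IsDensity (ρ α))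
    (χ : ∀ α, Matrix (Fin (db α)) (Fin (db α)) ℂ) (hχ : ∀ α, IsDensity (χ α))
    (hχpd : ∀ α, (χ α).PosDef) :
    vnEnt (Matrix.blockDiagonal' (fun α => ((p α : ℂ) • (ρ α ⊗ₖ χ α)))) =
      ∑ α, p α * vnEnt (χ α) + ∑ α, p α * vnEnt (ρ α) - ∑ α, p α * Real.log (p α) := by
  classical
  have hρh : ∀ α, (ρ α).IsHermitian := fun α => (hρ α).1.1
  have hχh : ∀ α, (χ α).IsHermitian := fun α => (hχ α).1.1
  set U : ∀ α, Matrix (Fin (da α)) (Fin (da α)) ℂ :=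
    fun α => ((hρh α).eigenvectorUnitary : Matrix (Fin (da α)) (Fin (da α)) ℂ) with hUdef
  set W : ∀ α, Matrix (Fin (db α)) (Fin (db α)) ℂ :=
    fun α => ((hχh α).eigenvectorUnitary : Matrix (Fin (db α)) (Fin (db α)) ℂ) with hWdef
  set lam : ∀ α, Fin (da α) → ℝ := fun α => (hρh α).eigenvalues with hlamdef
  set mu : ∀ α, Fin (db α) → ℝ := fun α => (hχh α).eigenvalues with hmudef
  have hU : ∀ α, U α * star (U α) = 1 :=
    fun α => Matrix.mem_unitaryGroup_iff.mp ((hρh α).eigenvectorUnitary).2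
  have hU' : ∀ α, star (U α) * U α = 1 :=
    fun α => Matrix.mem_unitaryGroup_iff'.mp ((hρh α).eigenvectorUnitary).2
  have hW : ∀ α, W α * star (W α) = 1 :=
    fun α => Matrix.mem_unitaryGroup_iff.mp ((hχh α).eigenvectorUnitary).2
  have hW' : ∀ α, star (W α) * W α = 1 :=
    fun α => Matrix.mem_unitaryGroup_iff'.mp ((hχh α).eigenvectorUnitary).2
  have hρspec : ∀ α, ρ α = U α * Matrix.diagonal (fun i => ((lam α i : ℝ) : ℂ)) * star (U α) :=
    fun α => by simpa [Function.comp_def] using (hρh α).spectral_theorem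
  have hχspec : ∀ α, χ α = W α * Matrix.diagonal (fun j => ((mu α j : ℝ) : ℂ)) * star (W α) :=
    fun α => by simpa [Function.comp_def] using (hχh α).spectral_theorem
  -- big decomposition
  have harg : (fun α => ((p α : ℂ) • (ρ α ⊗ₖ χ α)))
      = fun α => (p α : ℂ) •
        ((U α * Matrix.diagonal (fun i => ((lam α i : ℝ) : ℂ)) * star (U α)) ⊗ₖ
         (W α * Matrix.diagonal (fun j => ((mu α j : ℝ) : ℂ)) * star (W α))) :=
    funext fun α => by rw [← hρspec α, ← hχspec α]
  have hbig : Matrix.blockDiagonal' (fun α => ((p α : ℂ) • (ρ α ⊗ₖ χ α)))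
      = Matrix.blockDiagonal' (fun α => U α ⊗ₖ W α)
        * Matrix.diagonal (fun x : Σ α, Fin (da α) × Fin (db α) =>
            ((p x.1 * (lam x.1 x.2.1 * mu x.1 x.2.2) : ℝ) : ℂ))
        * star (Matrix.blockDiagonal' (fun α => U α ⊗ₖ W α)) := by
    rw [harg]
    exact block_decomp U W lam mu p
  have hVu : Matrix.blockDiagonal' (fun α => U α ⊗ₖ W α)
      * star (Matrix.blockDiagonal' (fun α => U α ⊗ₖ W α)) = 1 := block_unitary U W hU hW
  have hVu' : star (Matrix.blockDiagonal' (fun α => U α ⊗ₖ W α))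
      * Matrix.blockDiagonal' (fun α => U α ⊗ₖ W α) = 1 :=
    mul_eq_one_comm.mp hVu
  have hEnt := entTrace_of_decomp _ _ _ hVu hVu' hbig
  -- per-block entropies and traces
  have hρEnt : ∀ α, vnEnt (ρ α) = -(∑ i, lam α i * Real.log (lam α i)) := fun α => by
    rw [vnEnt, entTrace_of_decomp (ρ α) (U α) (lam α) (hU α) (hU' α) (hρspec α),
      Complex.ofReal_re]
  have hχEnt : ∀ α, vnEnt (χ α) = -(∑ j, mu α j * Real.log (mu α j)) := fun α => by
    rw [vnEnt, entTrace_of_decomp (χ α) (W α) (mu α) (hW α) (hW' α) (hχspec α),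
      Complex.ofReal_re]
  have hρtr : ∀ α, ∑ i, lam α i = 1 := fun α => by
    have h := trace_of_decomp (ρ α) (U α) (lam α) (hU' α) (hρspec α)
    rw [(hρ α).2] at h
    exact_mod_cast h.symm
  have hχtr : ∀ α, ∑ j, mu α j = 1 := fun α => by
    have h := trace_of_decomp (χ α) (W α) (mu α) (hW' α) (hχspec α)
    rw [(hχ α).2] at h
    exact_mod_cast h.symm
  have hl0 : ∀ α i, 0 ≤ lam α i := fun α i => (hρ α).1.eigenvalues_nonneg i
  have hm0 : ∀ α j, 0 ≤ mu α j := fun α j => (hχ α).1.eigenvalues_nonneg j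
  -- assemble
  rw [vnEnt, hEnt, Complex.ofReal_re]
  rw [← Finset.univ_sigma_univ, Finset.sum_sigma]
  have key : ∀ α, (∑ ij : Fin (da α) × Fin (db α),
        (p α * (lam α ij.1 * mu α ij.2)) * Real.log (p α * (lam α ij.1 * mu α ij.2)))
      = p α * Real.log (p α) - p α * vnEnt (ρ α) - p α * vnEnt (χ α) := by
    intro α
    rw [Fintype.sum_prod_type]
    have pt : ∀ (i : Fin (da α)) (j : Fin (db α)),
        (p α * (lam α i * mu α j)) * Real.log (p α * (lam α i * mu α j))
          = lam α i * (mu α j * (p α * Real.log (p α)))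
            + (lam α i * Real.log (lam α i)) * (mu α j * p α)
            + lam α i * ((mu α j * Real.log (mu α j)) * p α) :=
      fun i j => ptlog (hp α) (hl0 α i) (hm0 α j)
    simp_rw [pt, Finset.sum_add_distrib]
    rw [dsum (fun i => lam α i) (fun j => mu α j) (p α * Real.log (p α))]
    rw [show (∑ i, ∑ j, (lam α i * Real.log (lam α i)) * (mu α j * p α))
        = (∑ i, lam α i * Real.log (lam α i)) * ((∑ j, mu α j) * p α) from
      dsum _ _ _]
    rw [show (∑ i, ∑ j, lam α i * ((mu α j * Real.log (mu α j)) * p α))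
        = (∑ i, lam α i) * ((∑ j, mu α j * Real.log (mu α j)) * p α) from by
      simp only [← Finset.sum_mul, ← Finset.mul_sum]]
    rw [hρtr α, hχtr α, hρEnt α, hχEnt α]
    ring
  rw [Finset.sum_congr rfl fun α _ => key α]
  rw [Finset.sum_sub_distrib, Finset.sum_sub_distrib]
  ring
end

section
/- Equality of bulk and boundary relative entropy for algebraic encodings: in the block setup, with encoded states ρ̃_A = U(⊕_α p_α ρ_{a_α} ⊗ χ_α)U† and σ̃_A = U(⊕_α q_α σ_{a_α} ⊗ χ_α)U† for a unitary U, the relative entropy satisfies S(ρ̃_A ‖ σ̃_A) = Σ_α p_α log(p_α/q_α) + Σ_α p_α S(ρ_{a_α} ‖ σ_{a_α}). -/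
open Matrix
open scoped Kronecker ComplexOrder

section AuxLemmas
open Polynomial
variable {n : Type*} [Fintype n] [DecidableEq n]

lemma mconj_pow (W : Matrix.unitaryGroup n ℂ) (M : Matrix n n ℂ) (k : ℕ) :
    ((W : Matrix n n ℂ) * M * star (W : Matrix n n ℂ)) ^ k
      = (W : Matrix n n ℂ) * M ^ k * star (W : Matrix n n ℂ) := by
  have h1 : (W : Matrix n n ℂ) * star (W : Matrix n n ℂ) = 1 :=
    mem_unitaryGroup_iff.mp W.2
  have h2 : star (W : Matrix n n ℂ) * (W : Matrix n n ℂ) = 1 :=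
    mem_unitaryGroup_iff'.mp W.2
  induction k with
  | zero => simpa using h1.symm
  | succ k ih =>
      rw [pow_succ, pow_succ, ih]
      calc (W : Matrix n n ℂ) * M ^ k * star (W : Matrix n n ℂ) *
            ((W : Matrix n n ℂ) * M * star (W : Matrix n n ℂ))
          = (W : Matrix n n ℂ) * M ^ k *
            (star (W : Matrix n n ℂ) * (W : Matrix n n ℂ)) * M * star (W : Matrix n n ℂ) := by
            simp only [Matrix.mul_assoc]
        _ = (W : Matrix n n ℂ) * (M ^ k * M) * star (W : Matrix n n ℂ) := by
            rw [h2]; simp only [Matrix.mul_one, Matrix.mul_assoc]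

lemma aeval_conj_unitary (W : Matrix.unitaryGroup n ℂ) (M : Matrix n n ℂ) (g : ℂ[X]) :
    aeval ((W : Matrix n n ℂ) * M * star (W : Matrix n n ℂ)) g
      = (W : Matrix n n ℂ) * aeval M g * star (W : Matrix n n ℂ) := by
  induction g using Polynomial.induction_on' with
  | add p q hp hq => simp [map_add, hp, hq, Matrix.mul_add, Matrix.add_mul]
  | monomial k a =>
      rw [aeval_monomial, aeval_monomial, mconj_pow]
      simp [Algebra.algebraMap_eq_smul_one, smul_mul_assoc, mul_smul_comm]

lemma aeval_diagonal_c (d : n → ℂ) (g : ℂ[X]) :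
    aeval (Matrix.diagonal d) g = Matrix.diagonal (fun i => aeval (d i) g) := by
  have h : Matrix.diagonal d = Matrix.diagonalAlgHom ℂ d := rfl
  rw [h, aeval_algHom_apply]
  simp only [diagonalAlgHom_apply]
  exact congrArg Matrix.diagonal (funext fun i => aeval_fn_apply g d i)

lemma aeval_map_ofReal (x : ℝ) (g : ℝ[X]) :
    aeval ((x : ℂ)) (g.map (algebraMap ℝ ℂ)) = ((g.eval x : ℝ) : ℂ) := by
  rw [aeval_map_algebraMap]
  rw [show ((x : ℂ)) = algebraMap ℝ ℂ x from rfl, aeval_algebraMap_apply]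
  simp [aeval_def]


lemma conj_diag_aeval (W : Matrix.unitaryGroup n ℂ) (d : n → ℝ) (g : ℝ[X]) :
    aeval ((W : Matrix n n ℂ) * Matrix.diagonal (fun i => (d i : ℂ)) * star (W : Matrix n n ℂ))
        (g.map (algebraMap ℝ ℂ))
      = (W : Matrix n n ℂ) * Matrix.diagonal (fun i => ((g.eval (d i) : ℝ) : ℂ)) *
          star (W : Matrix n n ℂ) := by
  rw [aeval_conj_unitary, aeval_diagonal_c,
    show (fun i => aeval ((d i : ℂ)) (g.map (algebraMap ℝ ℂ)))
        = (fun i => ((g.eval (d i) : ℝ) : ℂ)) from funext fun i => aeval_map_ofReal (d i) g]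

lemma isHermitian_conj_diag (W : Matrix.unitaryGroup n ℂ) (d : n → ℝ) :
    ((W : Matrix n n ℂ) * Matrix.diagonal (fun i => (d i : ℂ)) *
      star (W : Matrix n n ℂ)).IsHermitian := by
  have hd : (Matrix.diagonal (fun i => (d i : ℂ))).IsHermitian :=
    isHermitian_diagonal_of_self_adjoint _
      (by funext i; simp [Pi.star_apply, Complex.conj_ofReal])
  unfold Matrix.IsHermitian
  simp [star_eq_conjTranspose, conjTranspose_mul, Matrix.mul_assoc, hd.eq]

lemma mlog_conj_diag (W : Matrix.unitaryGroup n ℂ) (d : n → ℝ) :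
    mlog ((W : Matrix n n ℂ) * Matrix.diagonal (fun i => (d i : ℂ)) * star (W : Matrix n n ℂ))
      = (W : Matrix n n ℂ) * Matrix.diagonal (fun i => ((Real.log (d i) : ℝ) : ℂ)) *
          star (W : Matrix n n ℂ) := by
  classical
  have hA := isHermitian_conj_diag W d
  rw [mlog, dif_pos hA]
  set s : Finset ℝ := Finset.image d Finset.univ ∪ Finset.image hA.eigenvalues Finset.univ
    with hs
  have hinj : Set.InjOn id (s : Set ℝ) := Function.injective_id.injOn
  set g : ℝ[X] := Lagrange.interpolate s id Real.log with hg
  have hnode : ∀ x ∈ s, g.eval x = Real.log x := fun x hx => by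
    simpa [hg] using Lagrange.eval_interpolate_at_node (v := id) (r := Real.log) hinj hx
  have hgd : ∀ i, g.eval (d i) = Real.log (d i) := fun i =>
    hnode _ (Finset.mem_union_left _ (Finset.mem_image_of_mem d (Finset.mem_univ i)))
  have hge : ∀ i, g.eval (hA.eigenvalues i) = Real.log (hA.eigenvalues i) := fun i =>
    hnode _ (Finset.mem_union_right _ (Finset.mem_image_of_mem _ (Finset.mem_univ i)))
  have h1 := conj_diag_aeval W d g
  have h2 := conj_diag_aeval hA.eigenvectorUnitary hA.eigenvalues g
  rw [hA.spectral_theorem] at h1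
  rw [show (Matrix.diagonal ((RCLike.ofReal : ℝ → ℂ) ∘ hA.eigenvalues))
      = Matrix.diagonal (fun i => ((hA.eigenvalues i : ℝ) : ℂ)) from rfl] at h1
  rw [Unitary.conjStarAlgAut_apply] at h1
  rw [h2] at h1
  calc (hA.eigenvectorUnitary : Matrix n n ℂ) *
        Matrix.diagonal (fun i => ((Real.log (hA.eigenvalues i) : ℝ) : ℂ)) *
        star (hA.eigenvectorUnitary : Matrix n n ℂ)
      = (hA.eigenvectorUnitary : Matrix n n ℂ) *
        Matrix.diagonal (fun i => ((g.eval (hA.eigenvalues i) : ℝ) : ℂ)) *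
        star (hA.eigenvectorUnitary : Matrix n n ℂ) := by
        simp only [hge]
    _ = (W : Matrix n n ℂ) * Matrix.diagonal (fun i => ((g.eval (d i) : ℝ) : ℂ)) *
        star (W : Matrix n n ℂ) := h1
    _ = (W : Matrix n n ℂ) * Matrix.diagonal (fun i => ((Real.log (d i) : ℝ) : ℂ)) *
        star (W : Matrix n n ℂ) := by simp only [hgd]


lemma star_kron {m m' : Type*} [Fintype m] [DecidableEq m] [Fintype m'] [DecidableEq m']
    (A : Matrix m m ℂ) (B : Matrix m' m' ℂ) :
    star (A ⊗ₖ B) = star A ⊗ₖ star B := by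
  ext ⟨i, j⟩ ⟨k, l⟩
  simp [star_eq_conjTranspose, conjTranspose_apply, kroneckerMap_apply, mul_comm]

noncomputable def kronUnitary {m m' : Type*} [Fintype m] [DecidableEq m] [Fintype m']
    [DecidableEq m'] (A : Matrix.unitaryGroup m ℂ) (B : Matrix.unitaryGroup m' ℂ) :
    Matrix.unitaryGroup (m × m') ℂ :=
  ⟨(A : Matrix m m ℂ) ⊗ₖ (B : Matrix m' m' ℂ), by
    rw [Matrix.mem_unitaryGroup_iff, star_kron, ← mul_kronecker_mul,
      mem_unitaryGroup_iff.mp A.2, mem_unitaryGroup_iff.mp B.2, one_kronecker_one]⟩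

@[simp] lemma kronUnitary_coe {m m' : Type*} [Fintype m] [DecidableEq m] [Fintype m']
    [DecidableEq m'] (A : Matrix.unitaryGroup m ℂ) (B : Matrix.unitaryGroup m' ℂ) :
    (kronUnitary A B : Matrix (m × m') (m × m') ℂ) = (A : Matrix m m ℂ) ⊗ₖ (B : Matrix m' m' ℂ) := rfl

noncomputable def blockUnitary {ι : Type*} [Fintype ι] [DecidableEq ι] {m : ι → Type*}
    [∀ i, Fintype (m i)] [∀ i, DecidableEq (m i)]
    (V : ∀ i, Matrix.unitaryGroup (m i) ℂ) :
    Matrix.unitaryGroup ((i : ι) × m i) ℂ :=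
  ⟨blockDiagonal' (fun i => (V i : Matrix (m i) (m i) ℂ)), by
    rw [Matrix.mem_unitaryGroup_iff, star_eq_conjTranspose, blockDiagonal'_conjTranspose,
      ← blockDiagonal'_mul]
    have : (fun k => (V k : Matrix (m k) (m k) ℂ) * ((V k : Matrix (m k) (m k) ℂ))ᴴ)
        = (1 : ∀ k, Matrix (m k) (m k) ℂ) := by
      funext k
      rw [← star_eq_conjTranspose, mem_unitaryGroup_iff.mp (V k).2]
      simp
    rw [this, blockDiagonal'_one]⟩

@[simp] lemma blockUnitary_coe {ι : Type*} [Fintype ι] [DecidableEq ι] {m : ι → Type*}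
    [∀ i, Fintype (m i)] [∀ i, DecidableEq (m i)] (V : ∀ i, Matrix.unitaryGroup (m i) ℂ) :
    (blockUnitary V : Matrix ((i : ι) × m i) ((i : ι) × m i) ℂ)
      = blockDiagonal' (fun i => (V i : Matrix (m i) (m i) ℂ)) := rfl

lemma kron_decomp {m m' : Type*} [Fintype m] [DecidableEq m] [Fintype m'] [DecidableEq m']
    (V : Matrix.unitaryGroup m ℂ) (W : Matrix.unitaryGroup m' ℂ) (c : ℝ) (e : m → ℝ)
    (f : m' → ℝ) :
    (c : ℂ) • (((V : Matrix m m ℂ) * Matrix.diagonal (fun i => (e i : ℂ)) *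
          star (V : Matrix m m ℂ)) ⊗ₖ
        ((W : Matrix m' m' ℂ) * Matrix.diagonal (fun j => (f j : ℂ)) *
          star (W : Matrix m' m' ℂ)))
      = (kronUnitary V W : Matrix (m × m') (m × m') ℂ) *
          Matrix.diagonal (fun y => ((c * e y.1 * f y.2 : ℝ) : ℂ)) *
          star (kronUnitary V W : Matrix (m × m') (m × m') ℂ) := by
  conv_rhs => rw [kronUnitary_coe, star_kron]
  have hd : Matrix.diagonal (fun y : m × m' => ((c * e y.1 * f y.2 : ℝ) : ℂ))
      = (c : ℂ) • (Matrix.diagonal (fun i => (e i : ℂ)) ⊗ₖ Matrix.diagonal (fun j => (f j : ℂ))) := by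
    rw [diagonal_kronecker_diagonal, ← Matrix.diagonal_smul]
    exact congrArg Matrix.diagonal (funext fun y => by
      simp only [Pi.smul_apply, smul_eq_mul]; push_cast; ring)
  rw [hd, mul_smul_comm, smul_mul_assoc, mul_kronecker_mul, mul_kronecker_mul]


lemma kron_log_split {m m' : Type*} [Fintype m] [DecidableEq m] [Fintype m'] [DecidableEq m']
    (V : Matrix.unitaryGroup m ℂ) (W : Matrix.unitaryGroup m' ℂ) (c : ℝ) (e : m → ℝ)
    (f : m' → ℝ) (hc : 0 < c) (he : ∀ i, 0 < e i) (hf : ∀ j, 0 < f j) :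
    ((V : Matrix m m ℂ) ⊗ₖ (W : Matrix m' m' ℂ)) *
        Matrix.diagonal (fun y : m × m' => ((Real.log (c * e y.1 * f y.2) : ℝ) : ℂ)) *
        star ((V : Matrix m m ℂ) ⊗ₖ (W : Matrix m' m' ℂ))
      = ((Real.log c : ℝ) : ℂ) • 1 +
        ((V : Matrix m m ℂ) * Matrix.diagonal (fun i => ((Real.log (e i) : ℝ) : ℂ)) *
          star (V : Matrix m m ℂ)) ⊗ₖ (1 : Matrix m' m' ℂ) +
        (1 : Matrix m m ℂ) ⊗ₖ ((W : Matrix m' m' ℂ) *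
          Matrix.diagonal (fun j => ((Real.log (f j) : ℝ) : ℂ)) * star (W : Matrix m' m' ℂ)) := by
  have hV : (V : Matrix m m ℂ) * star (V : Matrix m m ℂ) = 1 := mem_unitaryGroup_iff.mp V.2
  have hW : (W : Matrix m' m' ℂ) * star (W : Matrix m' m' ℂ) = 1 := mem_unitaryGroup_iff.mp W.2
  have hlog : (fun y : m × m' => ((Real.log (c * e y.1 * f y.2) : ℝ) : ℂ))
      = fun y : m × m' => ((Real.log c : ℝ) : ℂ) + ((Real.log (e y.1) : ℝ) : ℂ) +
          ((Real.log (f y.2) : ℝ) : ℂ) := by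
    funext y
    rw [Real.log_mul (mul_pos hc (he y.1)).ne' (hf y.2).ne', Real.log_mul hc.ne' (he y.1).ne']
    push_cast
    ring
  have hsplit : Matrix.diagonal (fun y : m × m' => ((Real.log c : ℝ) : ℂ) +
        ((Real.log (e y.1) : ℝ) : ℂ) + ((Real.log (f y.2) : ℝ) : ℂ))
      = ((Real.log c : ℝ) : ℂ) • (1 : Matrix (m × m') (m × m') ℂ) +
        Matrix.diagonal (fun i => ((Real.log (e i) : ℝ) : ℂ)) ⊗ₖ (1 : Matrix m' m' ℂ) +
         (1 : Matrix m m ℂ) ⊗ₖ Matrix.diagonal (fun j => ((Real.log (f j) : ℝ) : ℂ)) := by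
    ext ⟨i, j⟩ ⟨k, l⟩
    by_cases hik : i = k <;> by_cases hjl : j = l <;>
      simp [Matrix.diagonal_apply, Matrix.one_apply, Matrix.smul_apply, Matrix.add_apply,
        kroneckerMap_apply, hik, hjl, Prod.ext_iff] <;> ring
  have t1 : ((V : Matrix m m ℂ) ⊗ₖ (W : Matrix m' m' ℂ)) *
        (((Real.log c : ℝ) : ℂ) • (1 : Matrix (m × m') (m × m') ℂ)) *
        star ((V : Matrix m m ℂ) ⊗ₖ (W : Matrix m' m' ℂ))
      = ((Real.log c : ℝ) : ℂ) • 1 := by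
    rw [mul_smul_comm, smul_mul_assoc, Matrix.mul_one, star_kron, ← mul_kronecker_mul,
      hV, hW, one_kronecker_one]
  have t2 : ((V : Matrix m m ℂ) ⊗ₖ (W : Matrix m' m' ℂ)) *
        (Matrix.diagonal (fun i => ((Real.log (e i) : ℝ) : ℂ)) ⊗ₖ (1 : Matrix m' m' ℂ)) *
        star ((V : Matrix m m ℂ) ⊗ₖ (W : Matrix m' m' ℂ))
      = ((V : Matrix m m ℂ) * Matrix.diagonal (fun i => ((Real.log (e i) : ℝ) : ℂ)) *
          star (V : Matrix m m ℂ)) ⊗ₖ (1 : Matrix m' m' ℂ) := by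
    rw [star_kron, ← mul_kronecker_mul, ← mul_kronecker_mul, Matrix.mul_one, hW]
  have t3 : ((V : Matrix m m ℂ) ⊗ₖ (W : Matrix m' m' ℂ)) *
        ((1 : Matrix m m ℂ) ⊗ₖ Matrix.diagonal (fun j => ((Real.log (f j) : ℝ) : ℂ))) *
        star ((V : Matrix m m ℂ) ⊗ₖ (W : Matrix m' m' ℂ))
      = (1 : Matrix m m ℂ) ⊗ₖ ((W : Matrix m' m' ℂ) *
          Matrix.diagonal (fun j => ((Real.log (f j) : ℝ) : ℂ)) * star (W : Matrix m' m' ℂ)) := by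
    rw [star_kron, ← mul_kronecker_mul, ← mul_kronecker_mul, Matrix.mul_one, hV]
  rw [hlog, hsplit, Matrix.mul_add, Matrix.mul_add, Matrix.add_mul, Matrix.add_mul, t1, t2, t3]


lemma star_blockDiagonal' {ι : Type*} [Fintype ι] [DecidableEq ι] {m : ι → Type*}
    [∀ i, Fintype (m i)] [∀ i, DecidableEq (m i)] (M : ∀ i, Matrix (m i) (m i) ℂ) :
    star (blockDiagonal' M) = blockDiagonal' (fun i => star (M i)) := by
  rw [star_eq_conjTranspose, blockDiagonal'_conjTranspose]
  rfl

lemma mlog_spectral {m : Type*} [Fintype m] [DecidableEq m] {A : Matrix m m ℂ}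
    (hA : A.IsHermitian) :
    mlog A = (hA.eigenvectorUnitary : Matrix m m ℂ) *
      Matrix.diagonal (fun i => ((Real.log (hA.eigenvalues i) : ℝ) : ℂ)) *
      star (hA.eigenvectorUnitary : Matrix m m ℂ) := by
  conv_lhs => rw [hA.spectral_theorem]
  exact mlog_conj_diag hA.eigenvectorUnitary hA.eigenvalues

lemma encoded_mlog {ι : Type*} [Fintype ι] [DecidableEq ι] {m m' : ι → Type*}
    [∀ α, Fintype (m α)] [∀ α, DecidableEq (m α)] [∀ α, Fintype (m' α)]
    [∀ α, DecidableEq (m' α)]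
    (c : ι → ℝ) (hc : ∀ α, 0 < c α)
    (ρ : ∀ α, Matrix (m α) (m α) ℂ) (χ : ∀ α, Matrix (m' α) (m' α) ℂ)
    (hρ : ∀ α, (ρ α).PosDef) (hχ : ∀ α, (χ α).PosDef)
    (U : Matrix.unitaryGroup ((α : ι) × (m α × m' α)) ℂ) :
    mlog ((U : Matrix ((α : ι) × (m α × m' α)) ((α : ι) × (m α × m' α)) ℂ) *
        blockDiagonal' (fun α => (c α : ℂ) • (ρ α ⊗ₖ χ α)) *
        star (U : Matrix ((α : ι) × (m α × m' α)) ((α : ι) × (m α × m' α)) ℂ))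
      = (U : Matrix ((α : ι) × (m α × m' α)) ((α : ι) × (m α × m' α)) ℂ) *
          blockDiagonal' (fun α =>
            ((Real.log (c α) : ℝ) : ℂ) • 1 + mlog (ρ α) ⊗ₖ 1 + 1 ⊗ₖ mlog (χ α)) *
          star (U : Matrix ((α : ι) × (m α × m' α)) ((α : ι) × (m α × m' α)) ℂ) := by
  classical
  have hρH : ∀ α, (ρ α).IsHermitian := fun α => (hρ α).1
  have hχH : ∀ α, (χ α).IsHermitian := fun α => (hχ α).1
  have hev : ∀ α i, 0 < (hρH α).eigenvalues i := fun α => (hρ α).eigenvalues_pos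
  have hfv : ∀ α j, 0 < (hχH α).eigenvalues j := fun α => (hχ α).eigenvalues_pos
  set KV : Matrix.unitaryGroup ((α : ι) × (m α × m' α)) ℂ :=
    blockUnitary (fun α => kronUnitary (hρH α).eigenvectorUnitary (hχH α).eigenvectorUnitary)
    with hKV
  set K : Matrix.unitaryGroup ((α : ι) × (m α × m' α)) ℂ := U * KV with hK
  have hKcoe : (K : Matrix ((α : ι) × (m α × m' α)) ((α : ι) × (m α × m' α)) ℂ)
      = (U : Matrix _ _ ℂ) * (KV : Matrix _ _ ℂ) := rfl
  have hb : (fun α => (c α : ℂ) • (ρ α ⊗ₖ χ α)) = fun α =>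
      (kronUnitary (hρH α).eigenvectorUnitary (hχH α).eigenvectorUnitary :
          Matrix (m α × m' α) (m α × m' α) ℂ) *
        Matrix.diagonal (fun y : m α × m' α =>
          ((c α * (hρH α).eigenvalues y.1 * (hχH α).eigenvalues y.2 : ℝ) : ℂ)) *
        star (kronUnitary (hρH α).eigenvectorUnitary (hχH α).eigenvectorUnitary :
          Matrix (m α × m' α) (m α × m' α) ℂ) := by
    funext α
    conv_lhs => rw [(hρH α).spectral_theorem, (hχH α).spectral_theorem]
    exact kron_decomp _ _ (c α) (hρH α).eigenvalues (hχH α).eigenvalues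
  have hbd : blockDiagonal' (fun α => (c α : ℂ) • (ρ α ⊗ₖ χ α))
      = (KV : Matrix _ _ ℂ) *
          Matrix.diagonal (fun x : (α : ι) × (m α × m' α) =>
            ((c x.1 * (hρH x.1).eigenvalues x.2.1 * (hχH x.1).eigenvalues x.2.2 : ℝ) : ℂ)) *
          star (KV : Matrix _ _ ℂ) := by
    rw [hb, hKV, blockUnitary_coe, star_blockDiagonal']
    rw [← blockDiagonal'_diagonal
      (fun α => fun y : m α × m' α =>
        ((c α * (hρH α).eigenvalues y.1 * (hχH α).eigenvalues y.2 : ℝ) : ℂ))]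
    rw [← blockDiagonal'_mul, ← blockDiagonal'_mul]
  have hdecomp : (U : Matrix _ _ ℂ) * blockDiagonal' (fun α => (c α : ℂ) • (ρ α ⊗ₖ χ α)) *
        star (U : Matrix _ _ ℂ)
      = (K : Matrix _ _ ℂ) *
          Matrix.diagonal (fun x : (α : ι) × (m α × m' α) =>
            ((c x.1 * (hρH x.1).eigenvalues x.2.1 * (hχH x.1).eigenvalues x.2.2 : ℝ) : ℂ)) *
          star (K : Matrix _ _ ℂ) := by
    rw [hbd, hKcoe, Matrix.star_mul]
    simp only [Matrix.mul_assoc]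
  rw [hdecomp,
    mlog_conj_diag K (fun x : (α : ι) × (m α × m' α) =>
      c x.1 * (hρH x.1).eigenvalues x.2.1 * (hχH x.1).eigenvalues x.2.2)]
  have hlogdiag : blockDiagonal' (fun α => Matrix.diagonal (fun y : m α × m' α =>
          ((Real.log (c α * (hρH α).eigenvalues y.1 * (hχH α).eigenvalues y.2) : ℝ) : ℂ)))
      = Matrix.diagonal (fun x : (α : ι) × (m α × m' α) =>
        ((Real.log (c x.1 * (hρH x.1).eigenvalues x.2.1 * (hχH x.1).eigenvalues x.2.2) : ℝ) : ℂ)) := by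
    rw [blockDiagonal'_diagonal]
  rw [hKcoe, Matrix.star_mul, hKV, blockUnitary_coe, star_blockDiagonal', ← hlogdiag]
  have hmid : blockDiagonal' (fun α =>
        (kronUnitary (hρH α).eigenvectorUnitary (hχH α).eigenvectorUnitary :
          Matrix (m α × m' α) (m α × m' α) ℂ)) *
      blockDiagonal' (fun α => Matrix.diagonal (fun y : m α × m' α =>
          ((Real.log (c α * (hρH α).eigenvalues y.1 * (hχH α).eigenvalues y.2) : ℝ) : ℂ))) *
      blockDiagonal' (fun α =>
        star (kronUnitary (hρH α).eigenvectorUnitary (hχH α).eigenvectorUnitary :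
          Matrix (m α × m' α) (m α × m' α) ℂ))
      = blockDiagonal' (fun α =>
          ((Real.log (c α) : ℝ) : ℂ) • 1 + mlog (ρ α) ⊗ₖ 1 + 1 ⊗ₖ mlog (χ α)) := by
    rw [← blockDiagonal'_mul, ← blockDiagonal'_mul]
    refine congrArg blockDiagonal' (funext fun α => ?_)
    rw [kronUnitary_coe,
      kron_log_split _ _ (c α) (hρH α).eigenvalues (hχH α).eigenvalues (hc α) (hev α) (hfv α),
      ← mlog_spectral (hρH α), ← mlog_spectral (hχH α)]
  simp only [Matrix.mul_assoc] at hmid ⊢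
  rw [← hmid]
  simp only [Matrix.mul_assoc]


lemma trace_conj_mul_conj {n : Type*} [Fintype n] [DecidableEq n]
    (U : Matrix.unitaryGroup n ℂ) (X Y : Matrix n n ℂ) :
    (((U : Matrix n n ℂ) * X * star (U : Matrix n n ℂ)) *
      ((U : Matrix n n ℂ) * Y * star (U : Matrix n n ℂ))).trace = (X * Y).trace := by
  have h2 : star (U : Matrix n n ℂ) * (U : Matrix n n ℂ) = 1 := mem_unitaryGroup_iff'.mp U.2
  have key : ((U : Matrix n n ℂ) * X * star (U : Matrix n n ℂ)) *
      ((U : Matrix n n ℂ) * Y * star (U : Matrix n n ℂ))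
      = (U : Matrix n n ℂ) * (X * Y) * star (U : Matrix n n ℂ) := by
    trans (U : Matrix n n ℂ) * (X * ((star (U : Matrix n n ℂ) * (U : Matrix n n ℂ)) *
      (Y * star (U : Matrix n n ℂ))))
    · simp only [Matrix.mul_assoc]
    · rw [h2, Matrix.one_mul]
      simp only [Matrix.mul_assoc]
  rw [key, trace_mul_cycle, ← Matrix.mul_assoc, h2, Matrix.one_mul]

lemma block_trace {m m' : Type*} [Fintype m] [DecidableEq m] [Fintype m'] [DecidableEq m']
    (c a : ℝ) (ρ : Matrix m m ℂ) (χ : Matrix m' m' ℂ) (X : Matrix m m ℂ) (Y : Matrix m' m' ℂ)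
    (hρtr : ρ.trace = 1) (hχtr : χ.trace = 1) :
    (((c : ℂ) • (ρ ⊗ₖ χ)) * (((a : ℝ) : ℂ) • 1 + X ⊗ₖ 1 + 1 ⊗ₖ Y)).trace
      = (c : ℂ) * ((a : ℂ) + (ρ * X).trace + (χ * Y).trace) := by
  rw [Matrix.mul_add, Matrix.mul_add, trace_add, trace_add]
  rw [smul_mul_assoc, smul_mul_assoc, smul_mul_assoc, mul_smul_comm, Matrix.mul_one,
    ← mul_kronecker_mul, ← mul_kronecker_mul]
  simp only [trace_smul, trace_kronecker, hρtr, hχtr, smul_eq_mul, Matrix.mul_one]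
  ring


end AuxLemmas

/-- equality of bulk and boundary relative entropy for algebraic encodings:
`S(ρ̃_A ‖ σ̃_A) = Σ_α p_α log(p_α/q_α) + Σ_α p_α S(ρ_{a_α} ‖ σ_{a_α})`. -/
theorem relEnt_block_encoded {ι : Type*} [Fintype ι] [DecidableEq ι] (da db : ι → ℕ)
    (p q : ι → ℝ) (hp : ∀ α, 0 < p α) (hp1 : ∑ α, p α = 1)
    (hq : ∀ α, 0 < q α) (hq1 : ∑ α, q α = 1)
    (ρ σ : ∀ α, Matrix (Fin (da α)) (Fin (da α)) ℂ)
    (hρ : ∀ α, IsDensity (ρ α)) (hσ : ∀ α, IsDensity (σ α))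
    (hρpd : ∀ α, (ρ α).PosDef) (hσpd : ∀ α, (σ α).PosDef)
    (χ : ∀ α, Matrix (Fin (db α)) (Fin (db α)) ℂ) (hχ : ∀ α, IsDensity (χ α))
    (hχpd : ∀ α, (χ α).PosDef)
    (U : Matrix.unitaryGroup ((α : ι) × (Fin (da α) × Fin (db α))) ℂ) :
    relEnt
      ((U : Matrix _ _ ℂ) *
        Matrix.blockDiagonal' (fun α => ((p α : ℂ) • (ρ α ⊗ₖ χ α))) * star (U : Matrix _ _ ℂ))
      ((U : Matrix _ _ ℂ) *
        Matrix.blockDiagonal' (fun α => ((q α : ℂ) • (σ α ⊗ₖ χ α))) * star (U : Matrix _ _ ℂ)) =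
      ∑ α, p α * Real.log (p α / q α) + ∑ α, p α * relEnt (ρ α) (σ α) := by
  classical
  have hmlogR := encoded_mlog p hp ρ χ hρpd hχpd U
  have hmlogS := encoded_mlog q hq σ χ hσpd hχpd U
  simp only [relEnt]
  rw [hmlogR, hmlogS, trace_conj_mul_conj, trace_conj_mul_conj,
    ← blockDiagonal'_mul, ← blockDiagonal'_mul, trace_blockDiagonal', trace_blockDiagonal']
  have e1 : ∀ α ∈ Finset.univ (α := ι),
      (((p α : ℂ) • (ρ α ⊗ₖ χ α)) *
        (((Real.log (p α) : ℝ) : ℂ) • 1 + mlog (ρ α) ⊗ₖ 1 + 1 ⊗ₖ mlog (χ α))).trace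
      = (p α : ℂ) * ((Real.log (p α) : ℂ) + (ρ α * mlog (ρ α)).trace +
          (χ α * mlog (χ α)).trace) := fun α _ =>
    block_trace (p α) (Real.log (p α)) _ _ _ _ (hρ α).2 (hχ α).2
  have e2 : ∀ α ∈ Finset.univ (α := ι),
      (((p α : ℂ) • (ρ α ⊗ₖ χ α)) *
        (((Real.log (q α) : ℝ) : ℂ) • 1 + mlog (σ α) ⊗ₖ 1 + 1 ⊗ₖ mlog (χ α))).trace
      = (p α : ℂ) * ((Real.log (q α) : ℂ) + (ρ α * mlog (σ α)).trace +
          (χ α * mlog (χ α)).trace) := fun α _ =>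
    block_trace (p α) (Real.log (q α)) _ _ _ _ (hρ α).2 (hχ α).2
  rw [Finset.sum_congr rfl e1, Finset.sum_congr rfl e2]
  rw [← Finset.sum_sub_distrib, Complex.re_sum, ← Finset.sum_add_distrib]
  refine Finset.sum_congr rfl fun α _ => ?_
  rw [Real.log_div (hp α).ne' (hq α).ne', ← mul_sub, Complex.re_ofReal_mul]
  simp only [Complex.sub_re, Complex.add_re, Complex.ofReal_re]
  ring
end

section
/- Equality of bulk and boundary sandwiched Rényi relative entropy for algebraic encodings: in the block setup, with encoded states ρ̃_A = U(⊕_α p_α ρ_{a_α} ⊗ χ_α)U† and σ̃_A = U(⊕_α q_α σ_{a_α} ⊗ χ_α)U† for a unitary U, for every n ∈ (0,∞) with n ≠ 1 one has S_n(ρ̃_A ‖ σ̃_A) = (n−1)⁻¹ · log [ Σ_α p_α^n q_α^{1−n} · exp((n−1) S_n(ρ_{a_α} ‖ σ_{a_α})) ]. -/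
open Matrix
open scoped Kronecker ComplexOrder

namespace SRB
open Polynomial

variable {m : Type*} [Fintype m] [DecidableEq m]

/-- spectral representation -/
structure Rep (A : Matrix m m ℂ) (V : Matrix m m ℂ) (d : m → ℝ) : Prop where
  h1 : V * star V = 1
  h2 : star V * V = 1
  h3 : A = V * Matrix.diagonal (fun i => (d i : ℂ)) * star V

noncomputable def conjAlgHom (V : Matrix m m ℂ) (h1 : V * star V = 1) (h2 : star V * V = 1) :
    Matrix m m ℂ →ₐ[ℂ] Matrix m m ℂ where
  toFun X := V * X * star V
  map_one' := by simp only [mul_one]; exact h1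
  map_mul' X Y := by
    have h2' : ∀ Z : Matrix m m ℂ, star V * (V * Z) = Z := fun Z => by
      rw [← mul_assoc, h2, one_mul]
    simp only [mul_assoc, h2']
  map_zero' := by simp
  map_add' X Y := by simp only [Matrix.mul_add, Matrix.add_mul]
  commutes' c := by
    simp only [Algebra.algebraMap_eq_smul_one]
    rw [mul_smul_comm, mul_one, smul_mul_assoc, h1]

lemma aeval_conj_diag (V : Matrix m m ℂ) (h1 : V * star V = 1) (h2 : star V * V = 1)
    (d : m → ℝ) (p : ℝ[X]) :
    Polynomial.aeval (V * Matrix.diagonal (fun i => (d i : ℂ)) * star V)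
        (p.map (algebraMap ℝ ℂ)) =
      V * Matrix.diagonal (fun i => ((p.eval (d i) : ℝ) : ℂ)) * star V := by
  have key := Polynomial.aeval_algHom_apply (conjAlgHom V h1 h2)
    (Matrix.diagonal (fun i => (d i : ℂ))) (p.map (algebraMap ℝ ℂ))
  have hpt : ∀ i : m, Polynomial.aeval ((d i : ℂ)) (p.map (algebraMap ℝ ℂ))
      = ((p.eval (d i) : ℝ) : ℂ) := by
    intro i
    rw [Polynomial.aeval_map_algebraMap,
      show ((d i : ℂ)) = algebraMap ℝ ℂ (d i) from rfl, Polynomial.aeval_algebraMap_apply]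
    simp [Polynomial.aeval_def, Polynomial.eval₂_eq_eval_map]
  have hfun : (Polynomial.aeval (fun i : m => ((d i : ℂ)))) (p.map (algebraMap ℝ ℂ))
      = fun i => ((p.eval (d i) : ℝ) : ℂ) := by
    funext i
    have h3 := Polynomial.aeval_algHom_apply (Pi.evalAlgHom ℂ (fun _ : m => ℂ) i)
      (fun j => (d j : ℂ)) (p.map (algebraMap ℝ ℂ))
    simp only [Pi.evalAlgHom_apply] at h3
    rw [← h3, hpt i]
  have hdiag : Polynomial.aeval (Matrix.diagonal (fun i => (d i : ℂ))) (p.map (algebraMap ℝ ℂ))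
      = Matrix.diagonal (fun i => ((p.eval (d i) : ℝ) : ℂ)) := by
    have h4 := Polynomial.aeval_algHom_apply (Matrix.diagonalAlgHom (n := m) (α := ℂ) ℂ)
      (fun i => (d i : ℂ)) (p.map (algebraMap ℝ ℂ))
    simp only [Matrix.diagonalAlgHom_apply] at h4
    rw [h4, hfun]
  have hφ : (V * Matrix.diagonal (fun i => (d i : ℂ)) * star V)
      = conjAlgHom V h1 h2 (Matrix.diagonal (fun i => (d i : ℂ))) := rfl
  rw [hφ, key, hdiag]
  rfl


lemma rep_welldef {V W : Matrix m m ℂ} {d e : m → ℝ}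
    (hV1 : V * star V = 1) (hV2 : star V * V = 1)
    (hW1 : W * star W = 1) (hW2 : star W * W = 1)
    (h : V * Matrix.diagonal (fun i => (d i : ℂ)) * star V
       = W * Matrix.diagonal (fun i => (e i : ℂ)) * star W) (f : ℝ → ℝ) :
    V * Matrix.diagonal (fun i => ((f (d i) : ℝ) : ℂ)) * star V
      = W * Matrix.diagonal (fun i => ((f (e i) : ℝ) : ℂ)) * star W := by
  classical
  set s : Finset ℝ := Finset.image d Finset.univ ∪ Finset.image e Finset.univ with hs
  set p : Polynomial ℝ := Lagrange.interpolate s id f with hp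
  have hd : ∀ i, p.eval (d i) = f (d i) := fun i => by
    have : d i ∈ s := by simp [hs]
    simpa [hp] using Lagrange.eval_interpolate_at_node f (Set.injOn_id _) this
  have he : ∀ i, p.eval (e i) = f (e i) := fun i => by
    have : e i ∈ s := by simp [hs]
    simpa [hp] using Lagrange.eval_interpolate_at_node f (Set.injOn_id _) this
  have k1 := aeval_conj_diag V hV1 hV2 d p
  have k2 := aeval_conj_diag W hW1 hW2 e p
  rw [h] at k1
  rw [k2] at k1
  calc V * Matrix.diagonal (fun i => ((f (d i) : ℝ) : ℂ)) * star V
      = V * Matrix.diagonal (fun i => ((p.eval (d i) : ℝ) : ℂ)) * star V := by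
        simp only [hd]
    _ = W * Matrix.diagonal (fun i => ((p.eval (e i) : ℝ) : ℂ)) * star W := k1.symm
    _ = W * Matrix.diagonal (fun i => ((f (e i) : ℝ) : ℂ)) * star W := by
        simp only [he]

lemma Rep.isHermitian {A V : Matrix m m ℂ} {d : m → ℝ} (h : Rep A V d) :
    A.IsHermitian := by
  have : star A = A := by
    rw [h.h3]
    have hst : (star fun i : m => ((d i : ℂ))) = fun i : m => ((d i : ℂ)) :=
      funext fun i => Complex.conj_ofReal _
    have hd : star (Matrix.diagonal (fun i => (d i : ℂ)))
        = Matrix.diagonal (fun i => (d i : ℂ)) := by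
      rw [Matrix.star_eq_conjTranspose, Matrix.diagonal_conjTranspose, hst]
    rw [StarMul.star_mul, StarMul.star_mul, star_star, hd, mul_assoc]
  exact this

lemma Rep.apply_fun {A V : Matrix m m ℂ} {d : m → ℝ} (h : Rep A V d) (f : ℝ → ℝ)
    (hA : A.IsHermitian) :
    (hA.eigenvectorUnitary : Matrix m m ℂ) *
        Matrix.diagonal (fun i => ((f (hA.eigenvalues i) : ℝ) : ℂ)) *
        (star (hA.eigenvectorUnitary : Matrix m m ℂ))
      = V * Matrix.diagonal (fun i => ((f (d i) : ℝ) : ℂ)) * star V := by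
  have hU1 : (hA.eigenvectorUnitary : Matrix m m ℂ) * star (hA.eigenvectorUnitary : Matrix m m ℂ) = 1 :=
    hA.eigenvectorUnitary.2.2
  have hU2 : star (hA.eigenvectorUnitary : Matrix m m ℂ) * (hA.eigenvectorUnitary : Matrix m m ℂ) = 1 :=
    hA.eigenvectorUnitary.2.1
  refine rep_welldef hU1 hU2 h.h1 h.h2 ?_ f
  rw [← h.h3]
  exact hA.spectral_theorem.symm

/-- mpow along a spectral representation. -/
lemma Rep.mpow {A V : Matrix m m ℂ} {d : m → ℝ} (h : Rep A V d) (r : ℝ) :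
    Rep (mpow A r) V (fun i => d i ^ r) := by
  have hA := h.isHermitian
  refine ⟨h.h1, h.h2, ?_⟩
  rw [_root_.mpow, dif_pos hA]
  exact h.apply_fun (fun x => x ^ r) hA

lemma Rep.trace {A V : Matrix m m ℂ} {d : m → ℝ} (h : Rep A V d) :
    A.trace = ∑ i, (d i : ℂ) := by
  rw [h.h3, Matrix.trace_mul_cycle, h.h2, one_mul, Matrix.trace_diagonal]


lemma Rep.ofHermitian {A : Matrix m m ℂ} (hA : A.IsHermitian) :
    Rep A (hA.eigenvectorUnitary : Matrix m m ℂ) hA.eigenvalues :=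
  ⟨hA.eigenvectorUnitary.2.2, hA.eigenvectorUnitary.2.1, hA.spectral_theorem⟩

lemma Rep.smul {A V : Matrix m m ℂ} {d : m → ℝ} (h : Rep A V d) (c : ℝ) :
    Rep ((c : ℂ) • A) V (fun i => c * d i) := by
  refine ⟨h.h1, h.h2, ?_⟩
  have hdiag : Matrix.diagonal (fun i => ((c * d i : ℝ) : ℂ))
      = (c : ℂ) • Matrix.diagonal (fun i => ((d i : ℝ) : ℂ)) := by
    have hfun : (fun i : m => ((c * d i : ℝ) : ℂ))
        = (c : ℂ) • (fun i : m => ((d i : ℝ) : ℂ)) := by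
      funext i
      show ((c * d i : ℝ) : ℂ) = (c : ℂ) • ((d i : ℝ) : ℂ)
      rw [smul_eq_mul]
      push_cast
      ring
    rw [hfun, Matrix.diagonal_smul]
  rw [h.h3, hdiag, Matrix.mul_smul, Matrix.smul_mul]

lemma star_kronecker {l : Type*} [Fintype l] [DecidableEq l]
    (A : Matrix m m ℂ) (B : Matrix l l ℂ) :
    star (A ⊗ₖ B) = (star A) ⊗ₖ (star B) := by
  ext ⟨i, j⟩ ⟨k, r⟩
  simp [Matrix.star_eq_conjTranspose, Matrix.conjTranspose_apply, Matrix.kroneckerMap_apply]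

lemma Rep.kron {l : Type*} [Fintype l] [DecidableEq l]
    {A V : Matrix m m ℂ} {d : m → ℝ} {B W : Matrix l l ℂ} {e : l → ℝ}
    (hA : Rep A V d) (hB : Rep B W e) :
    Rep (A ⊗ₖ B) (V ⊗ₖ W) (fun x : m × l => d x.1 * e x.2) := by
  have hdiag : Matrix.diagonal (fun i : m => ((d i : ℝ) : ℂ)) ⊗ₖ
        Matrix.diagonal (fun j : l => ((e j : ℝ) : ℂ))
      = Matrix.diagonal (fun x : m × l => ((d x.1 * e x.2 : ℝ) : ℂ)) := by
    rw [Matrix.diagonal_kronecker_diagonal]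
    congr 1
    funext x
    push_cast
    ring
  refine ⟨?_, ?_, ?_⟩
  · rw [star_kronecker, ← Matrix.mul_kronecker_mul, hA.h1, hB.h1, Matrix.one_kronecker_one]
  · rw [star_kronecker, ← Matrix.mul_kronecker_mul, hA.h2, hB.h2, Matrix.one_kronecker_one]
  · rw [hA.h3, hB.h3, Matrix.mul_kronecker_mul, Matrix.mul_kronecker_mul, hdiag,
      star_kronecker]

lemma Rep.blockDiagonal' {ι : Type*} [Fintype ι] [DecidableEq ι]
    {k : ι → Type*} [∀ α, Fintype (k α)] [∀ α, DecidableEq (k α)]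
    {A V : ∀ α, Matrix (k α) (k α) ℂ} {d : ∀ α, k α → ℝ}
    (h : ∀ α, Rep (A α) (V α) (d α)) :
    Rep (Matrix.blockDiagonal' A) (Matrix.blockDiagonal' V)
      (fun x : Σ α, k α => d x.1 x.2) := by
  have hstar : star (Matrix.blockDiagonal' V) = Matrix.blockDiagonal' (fun α => star (V α)) := by
    rw [Matrix.star_eq_conjTranspose, Matrix.blockDiagonal'_conjTranspose]
    rfl
  refine ⟨?_, ?_, ?_⟩
  · rw [hstar, ← Matrix.blockDiagonal'_mul,
      show (fun α => V α * star (V α)) = fun _ => (1 : Matrix (k _) (k _) ℂ) from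
        funext fun α => (h α).h1]
    exact Matrix.blockDiagonal'_one
  · rw [hstar, ← Matrix.blockDiagonal'_mul,
      show (fun α => star (V α) * V α) = fun _ => (1 : Matrix (k _) (k _) ℂ) from
        funext fun α => (h α).h2]
    exact Matrix.blockDiagonal'_one
  · rw [hstar, ← Matrix.blockDiagonal'_diagonal (fun α j => ((d α j : ℝ) : ℂ)),
      ← Matrix.blockDiagonal'_mul, ← Matrix.blockDiagonal'_mul]
    rw [show A = (fun α => V α * Matrix.diagonal (fun j => ((d α j : ℝ) : ℂ)) * star (V α)) from
      funext fun α => (h α).h3]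

lemma Rep.conj {A V : Matrix m m ℂ} {d : m → ℝ} (h : Rep A V d)
    (W : Matrix m m ℂ) (hW1 : W * star W = 1) (hW2 : star W * W = 1) :
    Rep (W * A * star W) (W * V) d := by
  refine ⟨?_, ?_, ?_⟩
  · rw [StarMul.star_mul]
    calc W * V * (star V * star W) = W * (V * star V) * star W := by
          simp only [Matrix.mul_assoc]
      _ = 1 := by rw [h.h1, mul_one, hW1]
  · rw [StarMul.star_mul]
    calc star V * star W * (W * V) = star V * (star W * W) * V := by
          simp only [Matrix.mul_assoc]
      _ = 1 := by rw [hW2, mul_one, h.h2]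
  · rw [h.h3, StarMul.star_mul]
    simp only [Matrix.mul_assoc]


lemma conj3 {W A B C : Matrix m m ℂ} (hW2 : star W * W = 1) :
    (W * A * star W) * (W * B * star W) * (W * C * star W) = W * (A * B * C) * star W := by
  have hW2' : ∀ Z : Matrix m m ℂ, star W * (W * Z) = Z := fun Z => by
    rw [← mul_assoc, hW2, one_mul]
  simp only [Matrix.mul_assoc, hW2']

lemma diag_conj_mul {V : Matrix m m ℂ} (hV2 : star V * V = 1) (a b : m → ℂ) :
    (V * Matrix.diagonal a * star V) * (V * Matrix.diagonal b * star V)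
      = V * Matrix.diagonal (fun i => a i * b i) * star V := by
  have hV2' : ∀ Z : Matrix m m ℂ, star V * (V * Z) = Z := fun Z => by
    rw [← mul_assoc, hV2, one_mul]
  have : V * (Matrix.diagonal a * Matrix.diagonal b) * star V
      = V * Matrix.diagonal (fun i => a i * b i) * star V := by
    rw [Matrix.diagonal_mul_diagonal]
  rw [← this]
  simp only [Matrix.mul_assoc, hV2']

end SRB


/-- equality of bulk and boundary sandwiched Rényi relative entropy for
algebraic encodings. -/
theorem srenyi_block_encoded {ι : Type*} [Fintype ι] [DecidableEq ι] (da db : ι → ℕ)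
    (p q : ι → ℝ) (hp : ∀ α, 0 < p α) (hp1 : ∑ α, p α = 1)
    (hq : ∀ α, 0 < q α) (hq1 : ∑ α, q α = 1)
    (ρ σ : ∀ α, Matrix (Fin (da α)) (Fin (da α)) ℂ)
    (hρ : ∀ α, IsDensity (ρ α)) (hσ : ∀ α, IsDensity (σ α))
    (hσpd : ∀ α, (σ α).PosDef)
    (χ : ∀ α, Matrix (Fin (db α)) (Fin (db α)) ℂ) (hχ : ∀ α, IsDensity (χ α))
    (hχpd : ∀ α, (χ α).PosDef)
    (U : Matrix.unitaryGroup ((α : ι) × (Fin (da α) × Fin (db α))) ℂ)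
    (n : ℝ) (hn : 0 < n) (hn1 : n ≠ 1) :
    SRenyi n
      ((U : Matrix _ _ ℂ) *
        Matrix.blockDiagonal' (fun α => ((p α : ℂ) • (ρ α ⊗ₖ χ α))) * star (U : Matrix _ _ ℂ))
      ((U : Matrix _ _ ℂ) *
        Matrix.blockDiagonal' (fun α => ((q α : ℂ) • (σ α ⊗ₖ χ α))) * star (U : Matrix _ _ ℂ)) =
      (n - 1)⁻¹ *
        Real.log (∑ α, p α ^ n * q α ^ (1 - n) *
          Real.exp ((n - 1) * SRenyi n (ρ α) (σ α))) := by

  classical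
  have hn0 : n ≠ 0 := ne_of_gt hn
  have hn1' : n - 1 ≠ 0 := sub_ne_zero.2 hn1
  set s : ℝ := (1 - n) / (2 * n) with hs
  -- block spectral data
  have hσH : ∀ α, (σ α).IsHermitian := fun α => (hσpd α).1
  have hχH : ∀ α, (χ α).IsHermitian := fun α => (hχpd α).1
  set Vσ : ∀ α, Matrix (Fin (da α)) (Fin (da α)) ℂ :=
    fun α => ((hσH α).eigenvectorUnitary : Matrix _ _ ℂ) with hVσdef
  set sv : ∀ α, Fin (da α) → ℝ := fun α => (hσH α).eigenvalues with hsvdef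
  set Wχ : ∀ α, Matrix (Fin (db α)) (Fin (db α)) ℂ :=
    fun α => ((hχH α).eigenvectorUnitary : Matrix _ _ ℂ) with hWχdef
  set cv : ∀ α, Fin (db α) → ℝ := fun α => (hχH α).eigenvalues with hcvdef
  have Rσ : ∀ α, SRB.Rep (σ α) (Vσ α) (sv α) := fun α => SRB.Rep.ofHermitian (hσH α)
  have Rχ : ∀ α, SRB.Rep (χ α) (Wχ α) (cv α) := fun α => SRB.Rep.ofHermitian (hχH α)
  have hsvpos : ∀ α i, 0 < sv α i := fun α i => (hσpd α).eigenvalues_pos i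
  have hcvpos : ∀ α j, 0 < cv α j := fun α j => (hχpd α).eigenvalues_pos j
  have hcsum : ∀ α, ∑ j, cv α j = 1 := by
    intro α
    have h1 := (Rχ α).trace
    rw [(hχ α).2] at h1
    have h2 : ((∑ j, cv α j : ℝ) : ℂ) = ((1 : ℝ) : ℂ) := by
      push_cast
      rw [← h1]
    exact_mod_cast h2
  -- T blocks
  have RSig : ∀ α, SRB.Rep (mpow (σ α) s) (Vσ α) (fun i => sv α i ^ s) :=
    fun α => (Rσ α).mpow s
  have hTpsd : ∀ α, (mpow (σ α) s * ρ α * mpow (σ α) s).PosSemidef := by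
    intro α
    have h := (hρ α).1.mul_mul_conjTranspose_same (mpow (σ α) s)
    rwa [(RSig α).isHermitian.eq] at h
  set HT : ∀ α, (mpow (σ α) s * ρ α * mpow (σ α) s).IsHermitian := fun α => (hTpsd α).1
    with hHTdef
  set XT : ∀ α, Matrix (Fin (da α)) (Fin (da α)) ℂ :=
    fun α => ((HT α).eigenvectorUnitary : Matrix _ _ ℂ) with hXTdef
  set tv : ∀ α, Fin (da α) → ℝ := fun α => (HT α).eigenvalues with htvdef
  have RT : ∀ α, SRB.Rep (mpow (σ α) s * ρ α * mpow (σ α) s) (XT α) (tv α) :=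
    fun α => SRB.Rep.ofHermitian (HT α)
  have htv : ∀ α i, 0 ≤ tv α i := fun α i => (hTpsd α).eigenvalues_nonneg i
  set E : ι → ℝ := fun α => ∑ i, tv α i ^ n with hEdef
  -- positivity of E
  have hEpos : ∀ α, 0 < E α := by
    intro α
    have hnn : ∀ i, 0 ≤ tv α i ^ n := fun i => Real.rpow_nonneg (htv α i) n
    rcases lt_or_eq_of_le (Finset.sum_nonneg fun i _ => hnn i) with hlt | heq
    · exact hlt
    · exfalso
      have hall := (Finset.sum_eq_zero_iff_of_nonneg fun i _ => hnn i).1 heq.symm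
      have htv0 : ∀ i, tv α i = 0 := by
        intro i
        have h := hall i (Finset.mem_univ i)
        rcases (Real.rpow_eq_zero_iff_of_nonneg (htv α i)).1 h with ⟨h0, _⟩
        exact h0
      have hT0 : mpow (σ α) s * ρ α * mpow (σ α) s = 0 := by
        rw [(RT α).h3]
        have : (fun i => ((tv α i : ℝ) : ℂ)) = fun _ => (0 : ℂ) := by
          funext i; rw [htv0 i]; simp
        rw [this]
        simp
      -- recover ρ α from T α
      set Sinv : Matrix (Fin (da α)) (Fin (da α)) ℂ :=
        Vσ α * Matrix.diagonal (fun i => ((sv α i ^ (-s) : ℝ) : ℂ)) * star (Vσ α) with hSinv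
      have hid : (fun i => ((sv α i ^ (-s) : ℝ) : ℂ) * ((sv α i ^ s : ℝ) : ℂ))
          = fun _ => (1 : ℂ) := by
        funext i
        rw [← Complex.ofReal_mul, ← Real.rpow_add (hsvpos α i), neg_add_cancel,
          Real.rpow_zero, Complex.ofReal_one]
      have hid' : (fun i => ((sv α i ^ s : ℝ) : ℂ) * ((sv α i ^ (-s) : ℝ) : ℂ))
          = fun _ => (1 : ℂ) := by
        funext i
        rw [← Complex.ofReal_mul, ← Real.rpow_add (hsvpos α i), add_neg_cancel,
          Real.rpow_zero, Complex.ofReal_one]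
      have h1 : Sinv * mpow (σ α) s = 1 := by
        rw [hSinv, (RSig α).h3, SRB.diag_conj_mul (Rσ α).h2, hid, Matrix.diagonal_one,
          mul_one, (Rσ α).h1]
      have h2 : mpow (σ α) s * Sinv = 1 := by
        rw [hSinv, (RSig α).h3, SRB.diag_conj_mul (Rσ α).h2, hid', Matrix.diagonal_one,
          mul_one, (Rσ α).h1]
      have hrec : Sinv * (mpow (σ α) s * ρ α * mpow (σ α) s) * Sinv = ρ α := by
        calc Sinv * (mpow (σ α) s * ρ α * mpow (σ α) s) * Sinv
            = (Sinv * mpow (σ α) s) * ρ α * (mpow (σ α) s * Sinv) := by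
              simp only [Matrix.mul_assoc]
          _ = ρ α := by rw [h1, h2, one_mul, mul_one]
      rw [hT0] at hrec
      simp only [Matrix.mul_zero, Matrix.zero_mul] at hrec
      have := (hρ α).2
      rw [← hrec] at this
      simp at this
  -- exp identity
  have hexp : ∀ α, Real.exp ((n - 1) * SRenyi n (ρ α) (σ α)) = E α := by
    intro α
    have RTn := (RT α).mpow n
    have hre : (mpow (mpow (σ α) s * ρ α * mpow (σ α) s) n).trace.re = E α := by
      rw [RTn.trace]
      have : (∑ i, ((tv α i ^ n : ℝ) : ℂ)) = ((∑ i, tv α i ^ n : ℝ) : ℂ) := by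
        push_cast; ring
      rw [this, Complex.ofReal_re, hEdef]
    have hSR : SRenyi n (ρ α) (σ α) = (n - 1)⁻¹ * Real.log (E α) := by
      rw [SRenyi, ← hs, hre]
    rw [hSR, ← mul_assoc, mul_inv_cancel₀ hn1', one_mul, Real.exp_log (hEpos α)]
  -- global reps
  set UM : Matrix ((α : ι) × (Fin (da α) × Fin (db α))) ((α : ι) × (Fin (da α) × Fin (db α))) ℂ :=
    (U : Matrix ((α : ι) × (Fin (da α) × Fin (db α))) ((α : ι) × (Fin (da α) × Fin (db α))) ℂ)
    with hUMdef
  have hU1 : UM * star UM = 1 := U.2.2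
  have hU2 : star UM * UM = 1 := U.2.1
  set BV : Matrix ((α : ι) × (Fin (da α) × Fin (db α))) ((α : ι) × (Fin (da α) × Fin (db α))) ℂ :=
    Matrix.blockDiagonal' (fun α => Vσ α ⊗ₖ Wχ α) with hBVdef
  have RBσ : SRB.Rep (Matrix.blockDiagonal' (fun α => ((q α : ℂ) • (σ α ⊗ₖ χ α)))) BV
      (fun x => q x.1 * (sv x.1 x.2.1 * cv x.1 x.2.2)) :=
    SRB.Rep.blockDiagonal' (fun α => ((Rσ α).kron (Rχ α)).smul (q α))
  have Rσt : SRB.Rep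
      (UM * Matrix.blockDiagonal' (fun α => ((q α : ℂ) • (σ α ⊗ₖ χ α))) * star UM)
      (UM * BV)
      (fun x => q x.1 * (sv x.1 x.2.1 * cv x.1 x.2.2)) :=
    RBσ.conj _ hU1 hU2
  have RSt := Rσt.mpow s
  -- the sandwich matrix as a conjugated block diagonal
  set PB : ∀ α, Matrix (Fin (da α) × Fin (db α)) (Fin (da α) × Fin (db α)) ℂ :=
    fun α => (Vσ α ⊗ₖ Wχ α) *
      Matrix.diagonal (fun y : Fin (da α) × Fin (db α) =>
        (((q α * (sv α y.1 * cv α y.2)) ^ s : ℝ) : ℂ)) * star (Vσ α ⊗ₖ Wχ α) with hPBdef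
  have RPB : ∀ α, SRB.Rep (PB α) (Vσ α ⊗ₖ Wχ α)
      (fun y : Fin (da α) × Fin (db α) => (q α * (sv α y.1 * cv α y.2)) ^ s) := by
    intro α
    exact ⟨((Rσ α).kron (Rχ α)).h1, ((Rσ α).kron (Rχ α)).h2, rfl⟩
  have RP := SRB.Rep.blockDiagonal' RPB
  have hPmpow : mpow (UM * Matrix.blockDiagonal' (fun α => ((q α : ℂ) • (σ α ⊗ₖ χ α))) * star UM) s
      = UM * Matrix.blockDiagonal' PB * star UM := by
    rw [RSt.h3, RP.h3, StarMul.star_mul]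
    simp only [Matrix.mul_assoc, hBVdef]
  -- per-block scalar form of PB
  set χs : ∀ α, Matrix (Fin (db α)) (Fin (db α)) ℂ :=
    fun α => Wχ α * Matrix.diagonal (fun j => ((cv α j ^ s : ℝ) : ℂ)) * star (Wχ α) with hχsdef
  have Rχs : ∀ α, SRB.Rep (χs α) (Wχ α) (fun j => cv α j ^ s) :=
    fun α => ⟨(Rχ α).h1, (Rχ α).h2, rfl⟩
  have hPBalt : ∀ α, PB α = ((q α ^ s : ℝ) : ℂ) • (mpow (σ α) s ⊗ₖ χs α) := by
    intro α
    have R2 : SRB.Rep (((q α ^ s : ℝ) : ℂ) • (mpow (σ α) s ⊗ₖ χs α)) (Vσ α ⊗ₖ Wχ α)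
        (fun y : Fin (da α) × Fin (db α) => q α ^ s * (sv α y.1 ^ s * cv α y.2 ^ s)) :=
      ((RSig α).kron (Rχs α)).smul _
    have hfun : (fun y : Fin (da α) × Fin (db α) =>
          (((q α * (sv α y.1 * cv α y.2)) ^ s : ℝ) : ℂ))
        = fun y : Fin (da α) × Fin (db α) =>
          (((q α ^ s * (sv α y.1 ^ s * cv α y.2 ^ s)) : ℝ) : ℂ) := by
      funext y
      rw [Real.mul_rpow (hq α).le (mul_nonneg (hsvpos α y.1).le (hcvpos α y.2).le),
        Real.mul_rpow (hsvpos α y.1).le (hcvpos α y.2).le]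
    rw [(RPB α).h3, R2.h3, hfun]
  -- middle chi power
  set χmid : ∀ α, Matrix (Fin (db α)) (Fin (db α)) ℂ :=
    fun α => Wχ α * Matrix.diagonal (fun j => ((cv α j ^ (2 * s + 1) : ℝ) : ℂ)) * star (Wχ α)
    with hχmiddef
  have Rχmid : ∀ α, SRB.Rep (χmid α) (Wχ α) (fun j => cv α j ^ (2 * s + 1)) :=
    fun α => ⟨(Rχ α).h1, (Rχ α).h2, rfl⟩
  have hχsandwich : ∀ α, χs α * χ α * χs α = χmid α := by
    intro α
    have hfun : (fun j => ((cv α j ^ s : ℝ) : ℂ) * ((cv α j : ℝ) : ℂ) * ((cv α j ^ s : ℝ) : ℂ))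
        = fun j => ((cv α j ^ (2 * s + 1) : ℝ) : ℂ) := by
      funext j
      rw [← Complex.ofReal_mul, ← Complex.ofReal_mul]
      congr 1
      rw [show (2 * s + 1 : ℝ) = s + 1 + s by ring, Real.rpow_add (hcvpos α j),
        Real.rpow_add (hcvpos α j), Real.rpow_one]
    rw [(Rχs α).h3, (Rχ α).h3, (Rχmid α).h3,
      SRB.diag_conj_mul (Rχ α).h2, SRB.diag_conj_mul (Rχ α).h2, hfun]
  -- block product
  set Z : ∀ α, Matrix (Fin (da α) × Fin (db α)) (Fin (da α) × Fin (db α)) ℂ :=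
    fun α => (((p α * q α ^ (2 * s)) : ℝ) : ℂ) • ((mpow (σ α) s * ρ α * mpow (σ α) s) ⊗ₖ χmid α)
    with hZdef
  have hblock : ∀ α, PB α * ((p α : ℂ) • (ρ α ⊗ₖ χ α)) * PB α = Z α := by
    intro α
    rw [hPBalt α]
    rw [Matrix.smul_mul, Matrix.mul_smul, Matrix.smul_mul, Matrix.mul_smul, Matrix.smul_mul]
    rw [← Matrix.mul_kronecker_mul, ← Matrix.mul_kronecker_mul]
    rw [hχsandwich α, hZdef]
    rw [smul_smul, smul_smul]
    congr 1
    have harith : q α ^ s * q α ^ s * p α = p α * q α ^ (2 * s) := by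
      rw [show (2 * s : ℝ) = s + s by ring, Real.rpow_add (hq α)]
      ring
    push_cast [← harith]
    ring
  have hMeq : mpow (UM * Matrix.blockDiagonal' (fun α => ((q α : ℂ) • (σ α ⊗ₖ χ α))) * star UM) s
        * (UM * Matrix.blockDiagonal' (fun α => ((p α : ℂ) • (ρ α ⊗ₖ χ α))) * star UM)
        * mpow (UM * Matrix.blockDiagonal' (fun α => ((q α : ℂ) • (σ α ⊗ₖ χ α))) * star UM) s
      = UM * Matrix.blockDiagonal' Z * star UM := by
    have h1 : Matrix.blockDiagonal' Z = Matrix.blockDiagonal' PB *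
        Matrix.blockDiagonal' (fun α => ((p α : ℂ) • (ρ α ⊗ₖ χ α))) *
        Matrix.blockDiagonal' PB := by
      rw [← Matrix.blockDiagonal'_mul, ← Matrix.blockDiagonal'_mul]
      refine congrArg Matrix.blockDiagonal' (funext fun α => ?_)
      exact (hblock α).symm
    rw [hPmpow, SRB.conj3 hU2, ← h1]
  -- representation of the sandwiched matrix and its n-th power
  have RZ : ∀ α, SRB.Rep (Z α) (XT α ⊗ₖ Wχ α)
      (fun y : Fin (da α) × Fin (db α) =>
        (p α * q α ^ (2 * s)) * (tv α y.1 * cv α y.2 ^ (2 * s + 1))) :=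
    fun α => ((RT α).kron (Rχmid α)).smul _
  have RM : SRB.Rep
      (mpow (UM * Matrix.blockDiagonal' (fun α => ((q α : ℂ) • (σ α ⊗ₖ χ α))) * star UM) s
        * (UM * Matrix.blockDiagonal' (fun α => ((p α : ℂ) • (ρ α ⊗ₖ χ α))) * star UM)
        * mpow (UM * Matrix.blockDiagonal' (fun α => ((q α : ℂ) • (σ α ⊗ₖ χ α))) * star UM) s)
      (UM * Matrix.blockDiagonal' (fun α => XT α ⊗ₖ Wχ α))
      (fun x : (α : ι) × (Fin (da α) × Fin (db α)) =>
        (p x.1 * q x.1 ^ (2 * s)) * (tv x.1 x.2.1 * cv x.1 x.2.2 ^ (2 * s + 1))) := by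
    have h := (SRB.Rep.blockDiagonal' RZ).conj UM hU1 hU2
    rw [← hMeq] at h
    exact h
  have RMn := RM.mpow n
  -- arithmetic identities for exponents
  have h2sn : 2 * s * n = 1 - n := by rw [hs]; field_simp
  have h2s1 : (2 * s + 1) * n = 1 := by
    have h' : (2 * s + 1) * n = 2 * s * n + n := by ring
    rw [h', h2sn]; ring
  -- rewrite RHS using hexp
  have hRHS : (∑ α, p α ^ n * q α ^ (1 - n) * Real.exp ((n - 1) * SRenyi n (ρ α) (σ α)))
      = ∑ α, p α ^ n * q α ^ (1 - n) * E α :=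
    Finset.sum_congr rfl fun α _ => by rw [hexp α]
  rw [hRHS]
  unfold SRenyi
  rw [← hs]
  congr 2
  rw [RMn.trace, Complex.re_sum]
  have hterm : ∀ x : (α : ι) × (Fin (da α) × Fin (db α)),
      ((((p x.1 * q x.1 ^ (2 * s)) * (tv x.1 x.2.1 * cv x.1 x.2.2 ^ (2 * s + 1))) ^ n : ℝ) : ℂ).re
        = p x.1 ^ n * q x.1 ^ (1 - n) * (tv x.1 x.2.1 ^ n * cv x.1 x.2.2) := by
    rintro ⟨α, i, j⟩
    rw [Complex.ofReal_re]
    have hA : (0 : ℝ) ≤ p α * q α ^ (2 * s) :=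
      mul_nonneg (hp α).le (Real.rpow_nonneg (hq α).le _)
    have hB : (0 : ℝ) ≤ tv α i * cv α j ^ (2 * s + 1) :=
      mul_nonneg (htv α i) (Real.rpow_nonneg (hcvpos α j).le _)
    rw [Real.mul_rpow hA hB,
      Real.mul_rpow (hp α).le (Real.rpow_nonneg (hq α).le _),
      Real.mul_rpow (htv α i) (Real.rpow_nonneg (hcvpos α j).le _),
      ← Real.rpow_mul (hq α).le, ← Real.rpow_mul (hcvpos α j).le,
      h2sn, h2s1, Real.rpow_one]
  calc ∑ x : (α : ι) × (Fin (da α) × Fin (db α)),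
        ((((p x.1 * q x.1 ^ (2 * s)) * (tv x.1 x.2.1 * cv x.1 x.2.2 ^ (2 * s + 1))) ^ n : ℝ) : ℂ).re
      = ∑ x : (α : ι) × (Fin (da α) × Fin (db α)),
          p x.1 ^ n * q x.1 ^ (1 - n) * (tv x.1 x.2.1 ^ n * cv x.1 x.2.2) :=
        Finset.sum_congr rfl fun x _ => hterm x
    _ = ∑ α, ∑ y : Fin (da α) × Fin (db α),
          p α ^ n * q α ^ (1 - n) * (tv α y.1 ^ n * cv α y.2) := by
        rw [← Finset.univ_sigma_univ, Finset.sum_sigma]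
    _ = ∑ α, p α ^ n * q α ^ (1 - n) * E α := by
        refine Finset.sum_congr rfl fun α _ => ?_
        rw [Fintype.sum_prod_type]
        calc ∑ i, ∑ j, p α ^ n * q α ^ (1 - n) * (tv α i ^ n * cv α j)
            = ∑ i, ∑ j, (p α ^ n * q α ^ (1 - n)) * ((fun i => tv α i ^ n) i * (fun j => cv α j) j) := rfl
          _ = (p α ^ n * q α ^ (1 - n)) * ((∑ i, tv α i ^ n) * (∑ j, cv α j)) := by
              rw [Finset.sum_mul_sum, Finset.mul_sum]
              refine Finset.sum_congr rfl fun i _ => ?_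
              rw [Finset.mul_sum]
          _ = p α ^ n * q α ^ (1 - n) * E α := by
              rw [hcsum α, mul_one, hEdef]
end

section
/- The algebraic sandwiched Rényi relative entropy dominates the classical Rényi relative entropy of the block probability distributions: in the block setup, for every n > 1, (n−1)⁻¹ · log [ Σ_α p_α^n q_α^{1−n} · exp((n−1) S_n(ρ_{a_α} ‖ σ_{a_α})) ] ≥ (n−1)⁻¹ · log [ Σ_α p_α^n q_α^{1−n} ], with equality if and only if ρ_{a_α} = σ_{a_α} for all α. -/
open Matrix
open scoped Kronecker ComplexOrder

section Aux
variable {m : Type*} [Fintype m] [DecidableEq m]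

lemma continuousOn_spec (f : ℝ → ℝ) (A : Matrix m m ℂ) :
    ContinuousOn f (spectrum ℝ A) :=
  (Matrix.finite_real_spectrum (A := A)).continuousOn f

lemma mpow_eq_cfc {A : Matrix m m ℂ} (hA : A.IsHermitian) (r : ℝ) :
    mpow A r = cfc (fun x : ℝ => x ^ r) A := by
  rw [Matrix.IsHermitian.cfc_eq, mpow, dif_pos hA]
  rfl

lemma mpow_isHermitian {A : Matrix m m ℂ} (hA : A.IsHermitian) (r : ℝ) :
    (mpow A r).IsHermitian := by
  rw [mpow_eq_cfc hA]
  exact cfc_predicate _ A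

lemma spec_nonneg {A : Matrix m m ℂ} (hA : A.PosSemidef) :
    ∀ x ∈ spectrum ℝ A, 0 ≤ x := by
  intro x hx
  rw [Matrix.IsHermitian.spectrum_real_eq_range_eigenvalues hA.1] at hx
  obtain ⟨i, rfl⟩ := hx
  exact hA.eigenvalues_nonneg i

lemma spec_pos {A : Matrix m m ℂ} (hA : A.PosDef) :
    ∀ x ∈ spectrum ℝ A, 0 < x := by
  intro x hx
  rw [Matrix.IsHermitian.spectrum_real_eq_range_eigenvalues hA.1] at hx
  obtain ⟨i, rfl⟩ := hx
  exact hA.eigenvalues_pos i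

lemma mpow_posSemidef {A : Matrix m m ℂ} (hA : A.PosSemidef) (r : ℝ) :
    (mpow A r).PosSemidef := by
  rw [mpow, dif_pos hA.1, star_eq_conjTranspose]
  apply Matrix.PosSemidef.mul_mul_conjTranspose_same
  refine Matrix.posSemidef_diagonal_iff.mpr fun i => ?_
  rw [RCLike.nonneg_iff]
  constructor
  · simpa using Real.rpow_nonneg (hA.eigenvalues_nonneg i) r
  · simp

lemma trace_mpow {A : Matrix m m ℂ} (hA : A.IsHermitian) (r : ℝ) :
    (mpow A r).trace = ∑ i, ((hA.eigenvalues i ^ r : ℝ) : ℂ) := by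
  rw [mpow, dif_pos hA, Matrix.trace_mul_cycle]
  have : (star (hA.eigenvectorUnitary : Matrix m m ℂ)) *
      (hA.eigenvectorUnitary : Matrix m m ℂ) = 1 :=
    Unitary.star_mul_self_of_mem hA.eigenvectorUnitary.2
  rw [this, Matrix.one_mul, Matrix.trace_diagonal]

lemma mpow_mul_mpow {A : Matrix m m ℂ} (hA : A.PosDef) (r s : ℝ) :
    mpow A r * mpow A s = mpow A (r + s) := by
  rw [mpow_eq_cfc hA.1, mpow_eq_cfc hA.1, mpow_eq_cfc hA.1,
    ← cfc_mul _ _ A (continuousOn_spec _ A) (continuousOn_spec _ A)]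
  exact cfc_congr fun x hx => (Real.rpow_add (spec_pos hA x hx) r s).symm

lemma mpow_zero {A : Matrix m m ℂ} (hA : A.IsHermitian) : mpow A 0 = 1 := by
  rw [mpow_eq_cfc hA]
  have : cfc (fun x : ℝ => x ^ (0:ℝ)) A = cfc (fun _ : ℝ => (1:ℝ)) A :=
    cfc_congr fun x _ => Real.rpow_zero x
  rw [this, cfc_const_one ℝ A]

lemma mpow_one {A : Matrix m m ℂ} (hA : A.IsHermitian) : mpow A 1 = A := by
  rw [mpow_eq_cfc hA]
  have : cfc (fun x : ℝ => x ^ (1:ℝ)) A = cfc (fun x : ℝ => x) A :=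
    cfc_congr fun x _ => Real.rpow_one x
  rw [this, cfc_id' ℝ A]

lemma mpow_mpow {A : Matrix m m ℂ} (hA : A.PosSemidef) (r s : ℝ) :
    mpow (mpow A r) s = mpow A (r * s) := by
  have h1 : (mpow A r).IsHermitian := mpow_isHermitian hA.1 r
  rw [mpow_eq_cfc h1, mpow_eq_cfc hA.1, mpow_eq_cfc hA.1,
    ← cfc_comp (fun x : ℝ => x ^ s) (fun x : ℝ => x ^ r) A hA.1.isSelfAdjoint
      (((Matrix.finite_real_spectrum (A := A)).image _).continuousOn _) (continuousOn_spec _ A)]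
  refine cfc_congr fun x hx => ?_
  simp only [Function.comp]
  rw [← Real.rpow_mul (spec_nonneg hA x hx)]

lemma young_eq {a b : ℝ} (ha : 0 ≤ a) (hb : 0 ≤ b) {p q : ℝ}
    (hpq : p.HolderConjugate q) (h : a * b = a ^ p / p + b ^ q / q) :
    a ^ p = b ^ q := by
  rcases eq_or_lt_of_le ha with rfl | ha'
  · rw [Real.zero_rpow hpq.ne_zero, eq_comm]
    rw [Real.zero_rpow hpq.ne_zero, zero_mul, eq_comm, zero_div, zero_add,
      div_eq_zero_iff] at h
    rcases h with h | h
    · exact h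
    · exact absurd h hpq.symm.ne_zero
  rcases eq_or_lt_of_le hb with rfl | hb'
  · rw [Real.zero_rpow hpq.symm.ne_zero]
    rw [Real.zero_rpow hpq.symm.ne_zero, mul_zero, eq_comm, zero_div, add_zero,
      div_eq_zero_iff] at h
    rcases h with h | h
    · exact h
    · exact absurd h hpq.ne_zero
  by_contra hne
  have key : a * b < a ^ p / p + b ^ q / q := by
    have h1 : a * b = Real.exp (p⁻¹ * Real.log (a ^ p) + q⁻¹ * Real.log (b ^ q)) := by
      rw [Real.log_rpow ha', Real.log_rpow hb']
      rw [Real.exp_add]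
      rw [← mul_assoc, inv_mul_cancel₀ hpq.ne_zero, one_mul,
        ← mul_assoc, inv_mul_cancel₀ hpq.symm.ne_zero, one_mul,
        Real.exp_log ha', Real.exp_log hb']
    have hlogne : Real.log (a ^ p) ≠ Real.log (b ^ q) := by
      intro hlog
      exact hne (Real.log_injOn_pos (Set.mem_Ioi.mpr (Real.rpow_pos_of_pos ha' p))
        (Set.mem_Ioi.mpr (Real.rpow_pos_of_pos hb' q)) hlog)
    have := strictConvexOn_exp.2 (Set.mem_univ (Real.log (a ^ p)))
      (Set.mem_univ (Real.log (b ^ q))) hlogne hpq.inv_pos hpq.symm.inv_pos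
      hpq.inv_add_inv_eq_one
    rw [h1]
    calc Real.exp (p⁻¹ * Real.log (a ^ p) + q⁻¹ * Real.log (b ^ q))
        < p⁻¹ * Real.exp (Real.log (a ^ p)) + q⁻¹ * Real.exp (Real.log (b ^ q)) := by
          simpa [smul_eq_mul] using this
      _ = a ^ p / p + b ^ q / q := by
          rw [Real.exp_log (Real.rpow_pos_of_pos ha' p),
            Real.exp_log (Real.rpow_pos_of_pos hb' q)]
          ring
  exact absurd h key.ne

lemma trace_conj_diag (W : Matrix m m ℂ) (d e : m → ℂ) :
    (Matrix.diagonal d * W * Matrix.diagonal e * star W).trace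
      = ∑ i, ∑ j, d i * e j * (W i j * (starRingEnd ℂ) (W i j)) := by
  rw [star_eq_conjTranspose, Matrix.trace]
  refine Finset.sum_congr rfl fun i _ => ?_
  rw [Matrix.diag, Matrix.mul_apply]
  refine Finset.sum_congr rfl fun j _ => ?_
  rw [Matrix.mul_diagonal, Matrix.diagonal_mul, Matrix.conjTranspose_apply, RCLike.star_def]
  ring

lemma trace_young {A B : Matrix m m ℂ} (hA : A.PosSemidef) (hB : B.PosSemidef)
    {p q : ℝ} (hpq : p.HolderConjugate q) :
    (A * B).trace.re ≤ p⁻¹ * (mpow A p).trace.re + q⁻¹ * (mpow B q).trace.re ∧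
    ((A * B).trace.re = p⁻¹ * (mpow A p).trace.re + q⁻¹ * (mpow B q).trace.re →
      mpow A p = mpow B q) := by
  set U : Matrix m m ℂ := (hA.1.eigenvectorUnitary : Matrix m m ℂ) with hU
  set V : Matrix m m ℂ := (hB.1.eigenvectorUnitary : Matrix m m ℂ) with hV
  set a := hA.1.eigenvalues with ha
  set b := hB.1.eigenvalues with hb
  set W : Matrix m m ℂ := star U * V with hW
  have hU1 : U * star U = 1 := Unitary.mul_star_self_of_mem hA.1.eigenvectorUnitary.2
  have hU2 : star U * U = 1 := Unitary.star_mul_self_of_mem hA.1.eigenvectorUnitary.2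
  have hV1 : V * star V = 1 := Unitary.mul_star_self_of_mem hB.1.eigenvectorUnitary.2
  have hV2 : star V * V = 1 := Unitary.star_mul_self_of_mem hB.1.eigenvectorUnitary.2
  have hWW : W * star W = 1 := by
    rw [hW, Matrix.star_mul, star_star, Matrix.mul_assoc, ← Matrix.mul_assoc V, hV1,
      Matrix.one_mul, hU2]
  have hWW2 : star W * W = 1 := by
    rw [hW, Matrix.star_mul, star_star, Matrix.mul_assoc, ← Matrix.mul_assoc U, hU1,
      Matrix.one_mul, hV2]
  set d : m → m → ℝ := fun i j => Complex.normSq (W i j) with hd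
  -- trace formula
  have htr : (A * B).trace = ∑ i, ∑ j, ((a i : ℂ) * (b j : ℂ) * (W i j * (starRingEnd ℂ) (W i j))) := by
    conv_lhs => rw [hA.1.spectral_theorem, hB.1.spectral_theorem]
    simp only [Unitary.conjStarAlgAut_apply, Unitary.coe_star]
    have h1 : (U * Matrix.diagonal (RCLike.ofReal ∘ a) * star U) *
        (V * Matrix.diagonal (RCLike.ofReal ∘ b) * star V)
        = U * (Matrix.diagonal (RCLike.ofReal ∘ a) * W * Matrix.diagonal (RCLike.ofReal ∘ b)
            * star W * star U) := by
      rw [hW, Matrix.star_mul, star_star]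
      simp only [Matrix.mul_assoc]
      rw [hU1, Matrix.mul_one]
    rw [h1, Matrix.trace_mul_comm]
    have h2 : (Matrix.diagonal (RCLike.ofReal ∘ a) * W * Matrix.diagonal (RCLike.ofReal ∘ b)
        * star W * star U) * U
        = Matrix.diagonal (RCLike.ofReal ∘ a) * W * Matrix.diagonal (RCLike.ofReal ∘ b)
            * star W := by
      rw [Matrix.mul_assoc _ (star U) U, hU2, Matrix.mul_one]
    rw [h2, trace_conj_diag]
    rfl
  have htr_re : (A * B).trace.re = ∑ i, ∑ j, a i * b j * d i j := by
    rw [htr]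
    have : ∀ i j, (a i : ℂ) * (b j : ℂ) * (W i j * (starRingEnd ℂ) (W i j))
        = ((a i * b j * d i j : ℝ) : ℂ) := by
      intro i j
      rw [Complex.mul_conj, hd]
      push_cast
      ring
    simp only [this]
    push_cast
    simp
  have hdnn : ∀ i j, 0 ≤ d i j := fun i j => Complex.normSq_nonneg _
  have hrow : ∀ i, ∑ j, d i j = 1 := by
    intro i
    have h0 : (W * star W) i i = (1 : Matrix m m ℂ) i i := by rw [hWW]
    rw [Matrix.mul_apply, Matrix.one_apply_eq] at h0
    have h1 : ∀ j, W i j * star W j i = ((d i j : ℝ) : ℂ) := by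
      intro j
      rw [star_eq_conjTranspose, Matrix.conjTranspose_apply, RCLike.star_def, Complex.mul_conj]
    rw [Finset.sum_congr rfl fun j _ => h1 j] at h0
    exact_mod_cast h0
  have hcol : ∀ j, ∑ i, d i j = 1 := by
    intro j
    have h0 : (star W * W) j j = (1 : Matrix m m ℂ) j j := by rw [hWW2]
    rw [Matrix.mul_apply, Matrix.one_apply_eq] at h0
    have h1 : ∀ i, star W j i * W i j = ((d i j : ℝ) : ℂ) := by
      intro i
      rw [star_eq_conjTranspose, Matrix.conjTranspose_apply, RCLike.star_def, mul_comm,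
        Complex.mul_conj]
    rw [Finset.sum_congr rfl fun i _ => h1 i] at h0
    exact_mod_cast h0
  have hTA : (mpow A p).trace.re = ∑ i, a i ^ p := by
    rw [trace_mpow hA.1, Complex.re_sum]
    simp
    rfl
  have hTB : (mpow B q).trace.re = ∑ j, b j ^ q := by
    rw [trace_mpow hB.1, Complex.re_sum]
    simp
    rfl
  have hterm : ∀ i j, a i * b j * d i j ≤ (a i ^ p / p + b j ^ q / q) * d i j := by
    intro i j
    exact mul_le_mul_of_nonneg_right
      (Real.young_inequality_of_nonneg (hA.eigenvalues_nonneg i) (hB.eigenvalues_nonneg j) hpq)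
      (hdnn i j)
  have hRHS : ∑ i, ∑ j, (a i ^ p / p + b j ^ q / q) * d i j
      = p⁻¹ * (mpow A p).trace.re + q⁻¹ * (mpow B q).trace.re := by
    rw [hTA, hTB]
    have : ∀ i, ∑ j, (a i ^ p / p + b j ^ q / q) * d i j
        = (∑ j, (a i ^ p / p) * d i j) + ∑ j, (b j ^ q / q) * d i j := by
      intro i
      rw [← Finset.sum_add_distrib]
      exact Finset.sum_congr rfl fun j _ => by ring
    rw [Finset.sum_congr rfl fun i _ => this i, Finset.sum_add_distrib]
    have h1 : ∑ i, ∑ j, (a i ^ p / p) * d i j = p⁻¹ * ∑ i, a i ^ p := by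
      rw [Finset.mul_sum]
      refine Finset.sum_congr rfl fun i _ => ?_
      rw [← Finset.mul_sum, hrow i, mul_one, div_eq_inv_mul, mul_comm p⁻¹ _]
    have h2 : ∑ i, ∑ j, (b j ^ q / q) * d i j = q⁻¹ * ∑ j, b j ^ q := by
      rw [Finset.sum_comm, Finset.mul_sum]
      refine Finset.sum_congr rfl fun j _ => ?_
      rw [← Finset.mul_sum, hcol j, mul_one, div_eq_inv_mul, mul_comm q⁻¹ _]
    rw [h1, h2]
  have hineq : (A * B).trace.re ≤ p⁻¹ * (mpow A p).trace.re + q⁻¹ * (mpow B q).trace.re := by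
    rw [htr_re, ← hRHS]
    exact Finset.sum_le_sum fun i _ => Finset.sum_le_sum fun j _ => hterm i j
  refine ⟨hineq, fun heq => ?_⟩
  -- equality case
  have heq' : ∑ i, ∑ j, a i * b j * d i j = ∑ i, ∑ j, (a i ^ p / p + b j ^ q / q) * d i j := by
    rw [← htr_re, hRHS, heq]
  have hinner : ∀ i ∈ Finset.univ, ∑ j, a i * b j * d i j
      = ∑ j, (a i ^ p / p + b j ^ q / q) * d i j :=
    (Finset.sum_eq_sum_iff_of_le
      (fun i _ => Finset.sum_le_sum fun j _ => hterm i j)).mp heq'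
  have hptwise : ∀ i j, a i * b j * d i j = (a i ^ p / p + b j ^ q / q) * d i j := by
    intro i j
    exact (Finset.sum_eq_sum_iff_of_le (fun j _ => hterm i j)).mp
      (hinner i (Finset.mem_univ i)) j (Finset.mem_univ j)
  have hab : ∀ i j, W i j ≠ 0 → ((a i ^ p : ℝ) : ℂ) = ((b j ^ q : ℝ) : ℂ) := by
    intro i j hw
    have hd0 : d i j ≠ 0 := fun h0 => hw (Complex.normSq_eq_zero.mp h0)
    have := mul_right_cancel₀ hd0 (hptwise i j)
    exact_mod_cast congrArg Complex.ofReal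
      (young_eq (hA.eigenvalues_nonneg i) (hB.eigenvalues_nonneg j) hpq this)
  have hDW : Matrix.diagonal (fun i => ((a i ^ p : ℝ) : ℂ)) * W
      = W * Matrix.diagonal (fun j => ((b j ^ q : ℝ) : ℂ)) := by
    ext i j
    rw [Matrix.diagonal_mul, Matrix.mul_diagonal]
    rcases eq_or_ne (W i j) 0 with h0 | h0
    · rw [h0, mul_zero, zero_mul]
    · rw [hab i j h0]; ring
  have hUW : U * W = V := by
    rw [hW, ← Matrix.mul_assoc, hU1, Matrix.one_mul]
  have hsWU : star W * star U = star V := by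
    rw [← Matrix.star_mul, hUW]
  rw [mpow, dif_pos hA.1, mpow, dif_pos hB.1]
  calc U * Matrix.diagonal (fun i => ((a i ^ p : ℝ) : ℂ)) * star U
      = U * (Matrix.diagonal (fun i => ((a i ^ p : ℝ) : ℂ)) * (W * star W)) * star U := by
        rw [hWW, Matrix.mul_one]
    _ = U * (Matrix.diagonal (fun i => ((a i ^ p : ℝ) : ℂ)) * W) * (star W * star U) := by
        simp only [Matrix.mul_assoc]
    _ = U * (W * Matrix.diagonal (fun j => ((b j ^ q : ℝ) : ℂ))) * (star W * star U) := by
        rw [hDW]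
    _ = (U * W) * Matrix.diagonal (fun j => ((b j ^ q : ℝ) : ℂ)) * (star W * star U) := by
        simp only [Matrix.mul_assoc]
    _ = V * Matrix.diagonal (fun j => ((b j ^ q : ℝ) : ℂ)) * star V := by
        rw [hUW, hsWU]

lemma mpow_mul_self {σ : Matrix m m ℂ} (hσ : σ.PosDef) (c : ℝ) :
    mpow σ c * σ = mpow σ (c + 1) := by
  have h := mpow_mul_mpow hσ c 1
  rwa [mpow_one hσ.1] at h

lemma key_block {ρ σ : Matrix m m ℂ} (hρ : ρ.PosSemidef) (hρ1 : ρ.trace = 1)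
    (hσpd : σ.PosDef) (hσ1 : σ.trace = 1) {n : ℝ} (hn : 1 < n) :
    1 ≤ (mpow (mpow σ ((1 - n) / (2 * n)) * ρ * mpow σ ((1 - n) / (2 * n))) n).trace.re ∧
    ((mpow (mpow σ ((1 - n) / (2 * n)) * ρ * mpow σ ((1 - n) / (2 * n))) n).trace.re = 1
      ↔ ρ = σ) := by
  have hn0 : (0:ℝ) < n := lt_trans zero_lt_one hn
  have hn1 : n - 1 ≠ 0 := sub_ne_zero.mpr (ne_of_gt hn)
  set γ : ℝ := (1 - n) / (2 * n) with hγ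
  set A : Matrix m m ℂ := mpow σ γ * ρ * mpow σ γ with hAdef
  have hmγ : (mpow σ γ).IsHermitian := mpow_isHermitian hσpd.1 γ
  have hA : A.PosSemidef := by
    have h := hρ.mul_mul_conjTranspose_same (mpow σ γ)
    rwa [hmγ.eq] at h
  set B : Matrix m m ℂ := mpow σ ((n - 1) / n) with hBdef
  have hB : B.PosSemidef := mpow_posSemidef hσpd.posSemidef _
  have hpq : n.HolderConjugate (n / (n - 1)) := Real.HolderConjugate.conjExponent hn
  -- Tr(AB) = 1
  have htrAB : (A * B).trace = 1 := by
    have e1 : A * B = mpow σ γ * ρ * mpow σ (γ + (n - 1) / n) := by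
      rw [hAdef, hBdef, Matrix.mul_assoc, Matrix.mul_assoc, mpow_mul_mpow hσpd,
        ← Matrix.mul_assoc]
    rw [e1, Matrix.trace_mul_cycle, mpow_mul_mpow hσpd]
    have e2 : γ + (n - 1) / n + γ = 0 := by
      rw [hγ]; field_simp; ring
    rw [e2, mpow_zero hσpd.1, Matrix.one_mul, hρ1]
  -- B^{n'} = σ
  have hBq : mpow B (n / (n - 1)) = σ := by
    rw [hBdef, mpow_mpow hσpd.posSemidef]
    have : (n - 1) / n * (n / (n - 1)) = 1 := by field_simp
    rw [this, mpow_one hσpd.1]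
  have hBqtr : (mpow B (n / (n - 1))).trace.re = 1 := by
    rw [hBq, hσ1, Complex.one_re]
  have hconj : (n / (n - 1))⁻¹ = 1 - n⁻¹ := by field_simp
  obtain ⟨hle, heqc⟩ := trace_young hA hB hpq
  rw [htrAB, Complex.one_re, hBqtr, mul_one, hconj] at hle heqc
  set T : ℝ := (mpow A n).trace.re with hT
  have hT1 : 1 ≤ T := by
    have h2 : n⁻¹ * 1 ≤ n⁻¹ * T := by linarith
    exact le_of_mul_le_mul_left h2 (inv_pos.mpr hn0)
  refine ⟨hT1, ⟨fun hTeq => ?_, fun hρσ => ?_⟩⟩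
  · -- equality implies ρ = σ
    have hAn : mpow A n = σ := by
      rw [← hBq]
      exact heqc (by rw [hTeq]; ring)
    have hA_eq : A = mpow σ n⁻¹ := by
      calc A = mpow A 1 := (mpow_one hA.1).symm
        _ = mpow (mpow A n) n⁻¹ := by
            rw [mpow_mpow hA, mul_inv_cancel₀ (ne_of_gt hn0)]
        _ = mpow σ n⁻¹ := by rw [hAn]
    have hrec : mpow σ (-γ) * A * mpow σ (-γ) = ρ := by
      rw [hAdef, Matrix.mul_assoc, Matrix.mul_assoc, mpow_mul_mpow hσpd, add_neg_cancel,
        mpow_zero hσpd.1, Matrix.mul_one, ← Matrix.mul_assoc, mpow_mul_mpow hσpd,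
        neg_add_cancel, mpow_zero hσpd.1, Matrix.one_mul]
    rw [hA_eq] at hrec
    rw [← hrec, mpow_mul_mpow hσpd, mpow_mul_mpow hσpd]
    have : -γ + n⁻¹ + -γ = 1 := by rw [hγ]; field_simp; ring
    rw [this, mpow_one hσpd.1]
  · -- ρ = σ implies T = 1
    have hAσ : A = mpow σ n⁻¹ := by
      rw [hAdef, hρσ, mpow_mul_self hσpd, mpow_mul_mpow hσpd,
        show γ + 1 + γ = n⁻¹ by
          rw [hγ, div_add' _ _ _ (by positivity),
            div_add_div _ _ (by positivity : (2:ℝ)*n ≠ 0) (by positivity : (2:ℝ)*n ≠ 0),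
            inv_eq_one_div, div_eq_div_iff (by positivity) (ne_of_gt hn0)]
          ring]
    rw [hT, hAσ, mpow_mpow hσpd.posSemidef,
      inv_mul_cancel₀ (ne_of_gt hn0), mpow_one hσpd.1, hσ1, Complex.one_re]

end Aux

/-- the algebraic sandwiched Rényi relative entropy dominates the classical
Rényi relative entropy of the block probability distributions, with equality iff all
`ρ_{a_α} = σ_{a_α}`. -/
theorem srenyi_alg_ge_classical {ι : Type*} [Fintype ι] (da : ι → ℕ)
    (p q : ι → ℝ) (hp : ∀ α, 0 < p α) (hp1 : ∑ α, p α = 1)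
    (hq : ∀ α, 0 < q α) (hq1 : ∑ α, q α = 1)
    (ρ σ : ∀ α, Matrix (Fin (da α)) (Fin (da α)) ℂ)
    (hρ : ∀ α, IsDensity (ρ α)) (hσ : ∀ α, IsDensity (σ α))
    (hσpd : ∀ α, (σ α).PosDef)
    (n : ℝ) (hn : 1 < n) :
    (n - 1)⁻¹ *
        Real.log (∑ α, p α ^ n * q α ^ (1 - n) * Real.exp ((n - 1) * SRenyi n (ρ α) (σ α))) ≥
      (n - 1)⁻¹ * Real.log (∑ α, p α ^ n * q α ^ (1 - n)) ∧
    ((n - 1)⁻¹ *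
        Real.log (∑ α, p α ^ n * q α ^ (1 - n) * Real.exp ((n - 1) * SRenyi n (ρ α) (σ α))) =
      (n - 1)⁻¹ * Real.log (∑ α, p α ^ n * q α ^ (1 - n)) ↔ ∀ α, ρ α = σ α) := by

  have hn1 : n - 1 ≠ 0 := sub_ne_zero.mpr (ne_of_gt hn)
  set T : ι → ℝ := fun α =>
    (mpow (mpow (σ α) ((1 - n) / (2 * n)) * ρ α * mpow (σ α) ((1 - n) / (2 * n))) n).trace.re
    with hTdef
  have hkey : ∀ α, 1 ≤ T α ∧ (T α = 1 ↔ ρ α = σ α) := fun α =>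
    key_block (hρ α).1 (hρ α).2 (hσpd α) (hσ α).2 hn
  have hexp : ∀ α, Real.exp ((n - 1) * SRenyi n (ρ α) (σ α)) = T α := by
    intro α
    rw [SRenyi, ← mul_assoc, mul_inv_cancel₀ hn1, one_mul,
      Real.exp_log (lt_of_lt_of_le one_pos (hkey α).1)]
  set c : ι → ℝ := fun α => p α ^ n * q α ^ (1 - n) with hcdef
  have hc : ∀ α, 0 < c α := fun α =>
    mul_pos (Real.rpow_pos_of_pos (hp α) n) (Real.rpow_pos_of_pos (hq α) _)
  have hterm : ∀ α ∈ Finset.univ, c α ≤ c α * T α := fun α _ =>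
    le_mul_of_one_le_right (hc α).le (hkey α).1
  have hsum_le : ∑ α, c α ≤ ∑ α, c α * T α := Finset.sum_le_sum hterm
  have hne : (Finset.univ : Finset ι).Nonempty := by
    rcases (Finset.univ : Finset ι).eq_empty_or_nonempty with h | h
    · rw [h, Finset.sum_empty] at hp1
      norm_num at hp1
    · exact h
  have hpos : 0 < ∑ α, c α := Finset.sum_pos (fun α _ => hc α) hne
  have hpos2 : 0 < ∑ α, c α * T α := lt_of_lt_of_le hpos hsum_le
  have hsum_eq : ∑ α, p α ^ n * q α ^ (1 - n) * Real.exp ((n - 1) * SRenyi n (ρ α) (σ α))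
      = ∑ α, c α * T α :=
    Finset.sum_congr rfl fun α _ => by rw [hexp α]
  rw [hsum_eq]
  constructor
  · exact mul_le_mul_of_nonneg_left (Real.log_le_log hpos hsum_le)
      (inv_nonneg.mpr (by linarith))
  · constructor
    · intro heq
      have hlog : Real.log (∑ α, c α * T α) = Real.log (∑ α, c α) :=
        mul_left_cancel₀ (inv_ne_zero hn1) heq
      have hsums : (∑ α, c α * T α) = ∑ α, c α :=
        Real.log_injOn_pos (Set.mem_Ioi.mpr hpos2) (Set.mem_Ioi.mpr hpos) hlog
      have hall := (Finset.sum_eq_sum_iff_of_le hterm).mp hsums.symm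
      intro α
      have h1 : c α * 1 = c α * T α := by
        rw [mul_one]; exact hall α (Finset.mem_univ α)
      exact (hkey α).2.mp (mul_left_cancel₀ (hc α).ne' h1).symm
    · intro hall
      have hT1 : ∀ α, T α = 1 := fun α => (hkey α).2.mpr (hall α)
      rw [Finset.sum_congr rfl fun α _ => by rw [hT1 α, mul_one]]
end

section
/- The algebraic sandwiched Rényi relative entropy converges to the algebraic relative entropy as the Rényi index tends to 1: in the block setup with each ρ_{a_α} also positive definite, lim_{n→1} (n−1)⁻¹ · log [ Σ_α p_α^n q_α^{1−n} · exp((n−1) S_n(ρ_{a_α} ‖ σ_{a_α})) ] = Σ_α p_α log(p_α/q_α) + Σ_α p_α S(ρ_{a_α} ‖ σ_{a_α}). -/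
open Matrix
open scoped Kronecker ComplexOrder

namespace SRenyiProof

open Matrix Filter Polynomial

variable {d : Type*} [Fintype d] [DecidableEq d]

lemma mpow_eq {A : Matrix d d ℂ} (hA : A.IsHermitian) (r : ℝ) :
    mpow A r = (hA.eigenvectorUnitary : Matrix d d ℂ) *
      Matrix.diagonal (fun i => ((hA.eigenvalues i ^ r : ℝ) : ℂ)) *
      (star (hA.eigenvectorUnitary : Matrix d d ℂ)) := dif_pos hA

lemma mlog_eq {A : Matrix d d ℂ} (hA : A.IsHermitian) :
    mlog A = (hA.eigenvectorUnitary : Matrix d d ℂ) *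
      Matrix.diagonal (fun i => ((Real.log (hA.eigenvalues i) : ℝ) : ℂ)) *
      (star (hA.eigenvectorUnitary : Matrix d d ℂ)) := dif_pos hA

lemma conj_mul_conj (U : Matrix.unitaryGroup d ℂ) (D E : Matrix d d ℂ) :
    ((U : Matrix d d ℂ) * D * star (U : Matrix d d ℂ)) *
      ((U : Matrix d d ℂ) * E * star (U : Matrix d d ℂ))
      = (U : Matrix d d ℂ) * (D * E) * star (U : Matrix d d ℂ) := by
  have h : star (U : Matrix d d ℂ) * (U : Matrix d d ℂ) = 1 :=
    Matrix.UnitaryGroup.star_mul_self U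
  calc ((U : Matrix d d ℂ) * D * star (U : Matrix d d ℂ)) *
      ((U : Matrix d d ℂ) * E * star (U : Matrix d d ℂ))
      = (U : Matrix d d ℂ) * (D * ((star (U : Matrix d d ℂ) * (U : Matrix d d ℂ)) * E))
          * star (U : Matrix d d ℂ) := by noncomm_ring
    _ = (U : Matrix d d ℂ) * (D * E) * star (U : Matrix d d ℂ) := by
        rw [h, one_mul]

lemma conj_pow (U : Matrix.unitaryGroup d ℂ) (D : Matrix d d ℂ) (k : ℕ) :
    ((U : Matrix d d ℂ) * D * star (U : Matrix d d ℂ)) ^ k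
      = (U : Matrix d d ℂ) * D ^ k * star (U : Matrix d d ℂ) := by
  induction k with
  | zero =>
      simp only [pow_zero, Matrix.mul_one]
      exact U.2.2.symm
  | succ k ih =>
      rw [pow_succ, ih, conj_mul_conj, ← pow_succ]

lemma trace_conj (U : Matrix.unitaryGroup d ℂ) (D : Matrix d d ℂ) :
    ((U : Matrix d d ℂ) * D * star (U : Matrix d d ℂ)).trace = D.trace := by
  rw [Matrix.trace_mul_cycle, Matrix.UnitaryGroup.star_mul_self, Matrix.one_mul]

lemma trace_mul_conj (U : Matrix.unitaryGroup d ℂ) (D B : Matrix d d ℂ) :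
    (((U : Matrix d d ℂ) * D * star (U : Matrix d d ℂ)) * B).trace
      = (D * (star (U : Matrix d d ℂ) * B * (U : Matrix d d ℂ))).trace := by
  rw [Matrix.trace_mul_cycle, ← Matrix.mul_assoc, Matrix.trace_mul_cycle, ← Matrix.mul_assoc,
    ← Matrix.mul_assoc, Matrix.trace_mul_cycle]

lemma trace_diagonal_mul (f : d → ℂ) (B : Matrix d d ℂ) :
    (Matrix.diagonal f * B).trace = ∑ i, f i * B i i := by
  simp [Matrix.trace, Matrix.diag, Matrix.diagonal_mul]

lemma mpow_isHermitian {A : Matrix d d ℂ} (hA : A.IsHermitian) (r : ℝ) :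
    (mpow A r).IsHermitian := by
  rw [mpow_eq hA r, Matrix.star_eq_conjTranspose]
  exact Matrix.isHermitian_mul_mul_conjTranspose _
    (Matrix.isHermitian_diagonal_of_self_adjoint _
      (by
        show star _ = _
        funext i
        simp [Complex.star_def, Complex.conj_ofReal]))

lemma mpow_trace {A : Matrix d d ℂ} (hA : A.IsHermitian) (r : ℝ) :
    (mpow A r).trace = ((∑ i, hA.eigenvalues i ^ r : ℝ) : ℂ) := by
  rw [mpow_eq hA r, trace_conj, Matrix.trace_diagonal]
  push_cast
  rfl

lemma herm_trace {A : Matrix d d ℂ} (hA : A.IsHermitian) :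
    A.trace = ((∑ i, hA.eigenvalues i : ℝ) : ℂ) := by
  conv_lhs => rw [hA.spectral_theorem, Unitary.conjStarAlgAut_apply]
  rw [trace_conj, Matrix.trace_diagonal]
  push_cast
  rfl

lemma herm_pow_trace {A : Matrix d d ℂ} (hA : A.IsHermitian) (k : ℕ) :
    (A ^ k).trace = ((∑ i, hA.eigenvalues i ^ k : ℝ) : ℂ) := by
  conv_lhs => rw [hA.spectral_theorem, Unitary.conjStarAlgAut_apply]
  rw [conj_pow, trace_conj, Matrix.diagonal_pow, Matrix.trace_diagonal]
  push_cast
  rfl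

lemma mpow_zero {A : Matrix d d ℂ} (hA : A.IsHermitian) : mpow A 0 = 1 := by
  rw [mpow_eq hA 0]
  simp only [Real.rpow_zero, Complex.ofReal_one]
  rw [Matrix.diagonal_one, Matrix.mul_one]
  exact (hA.eigenvectorUnitary).2.2

lemma mpow_det {A : Matrix d d ℂ} (hA : A.IsHermitian) (r : ℝ) :
    (mpow A r).det = ((∏ i, hA.eigenvalues i ^ r : ℝ) : ℂ) := by
  rw [mpow_eq hA r, Matrix.det_mul, Matrix.det_mul]
  rw [mul_comm, ← mul_assoc, ← Matrix.det_mul, Matrix.UnitaryGroup.star_mul_self,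
    Matrix.det_one, one_mul, Matrix.det_diagonal]
  push_cast
  rfl

lemma mpow_mul_mpow {A : Matrix d d ℂ} (hA : A.PosDef) (r s : ℝ) :
    mpow A r * mpow A s = mpow A (r + s) := by
  rw [mpow_eq hA.1 r, mpow_eq hA.1 s, mpow_eq hA.1 (r + s), conj_mul_conj,
    Matrix.diagonal_mul_diagonal]
  have : (fun i => ((hA.1.eigenvalues i ^ r : ℝ) : ℂ) * ((hA.1.eigenvalues i ^ s : ℝ) : ℂ))
      = fun i => ((hA.1.eigenvalues i ^ (r + s) : ℝ) : ℂ) := by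
    funext i
    rw [← Complex.ofReal_mul, ← Real.rpow_add (hA.eigenvalues_pos i)]
  rw [this]


/-- exponent function -/
noncomputable def cc (n : ℝ) : ℝ := (1 - n) / (2 * n)

/-- sandwiched matrix as a function of the exponent -/
noncomputable def NN (ρ σ : Matrix d d ℂ) (r : ℝ) : Matrix d d ℂ :=
  mpow σ r * ρ * mpow σ r

lemma NN_posSemidef (ρ σ : Matrix d d ℂ) (hρ : ρ.PosDef) (hσ : σ.PosDef) (r : ℝ) :
    (NN ρ σ r).PosSemidef := by
  have h := mpow_isHermitian hσ.1 r
  have := hρ.posSemidef.conjTranspose_mul_mul_same (mpow σ r)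
  rwa [h] at this

/-- eigenvalues of the sandwiched matrix -/
noncomputable def muN (ρ σ : Matrix d d ℂ) (hρ : ρ.PosDef) (hσ : σ.PosDef) (r : ℝ) : d → ℝ :=
  (NN_posSemidef ρ σ hρ hσ r).isHermitian.eigenvalues

/-- diagonal entries of ρ in the σ eigenbasis -/
noncomputable def rr (ρ σ : Matrix d d ℂ) (hσ : σ.PosDef) : d → ℝ := fun j =>
  ((star (hσ.1.eigenvectorUnitary : Matrix d d ℂ) * ρ * (hσ.1.eigenvectorUnitary : Matrix d d ℂ))
    j j).re

variable (ρ σ : Matrix d d ℂ) (hρ : ρ.PosDef) (hσ : σ.PosDef)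

lemma muN_nonneg (r : ℝ) (i : d) : 0 ≤ muN ρ σ hρ hσ r i :=
  (NN_posSemidef ρ σ hρ hσ r).eigenvalues_nonneg i

lemma prod_muN (r : ℝ) :
    ∏ i, muN ρ σ hρ hσ r i = (∏ i, hσ.1.eigenvalues i ^ r) ^ 2 * ∏ i, hρ.1.eigenvalues i := by
  have h1 : (NN ρ σ r).det = (((∏ i, hσ.1.eigenvalues i ^ r) ^ 2 * ∏ i, hρ.1.eigenvalues i : ℝ)
      : ℂ) := by
    rw [NN, Matrix.det_mul, Matrix.det_mul, mpow_det hσ.1 r, hρ.1.det_eq_prod_eigenvalues]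
    push_cast
    ring_nf
    rfl
  have h2 := (NN_posSemidef ρ σ hρ hσ r).isHermitian.det_eq_prod_eigenvalues
  rw [h1] at h2
  have h3 : ((((∏ i, hσ.1.eigenvalues i ^ r) ^ 2 * ∏ i, hρ.1.eigenvalues i : ℝ)) : ℂ)
      = ((∏ i, muN ρ σ hρ hσ r i : ℝ) : ℂ) := by
    rw [h2]; push_cast; rfl
  exact_mod_cast h3.symm

lemma muN_pos (r : ℝ) (i : d) : 0 < muN ρ σ hρ hσ r i := by
  rcases (muN_nonneg ρ σ hρ hσ r i).lt_or_eq with h | h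
  · exact h
  · exfalso
    have hp : ∏ i, muN ρ σ hρ hσ r i = 0 :=
      Finset.prod_eq_zero (Finset.mem_univ i) h.symm
    rw [prod_muN] at hp
    have h1 : 0 < (∏ i, hσ.1.eigenvalues i ^ r) ^ 2 * ∏ i, hρ.1.eigenvalues i := by
      apply mul_pos
      · exact pow_pos (Finset.prod_pos fun i _ =>
          Real.rpow_pos_of_pos (hσ.eigenvalues_pos i) r) 2
      · exact Finset.prod_pos fun i _ => hρ.eigenvalues_pos i
    · exact h1.ne' hp

lemma sum_muN (r : ℝ) : ∑ i, muN ρ σ hρ hσ r i = (NN ρ σ r).trace.re := by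
  rw [herm_trace (NN_posSemidef ρ σ hρ hσ r).isHermitian, Complex.ofReal_re]
  rfl

lemma trace_NN (r : ℝ) :
    (NN ρ σ r).trace.re = ∑ j, rr ρ σ hσ j * hσ.1.eigenvalues j ^ (2 * r) := by
  have h0 : (NN ρ σ r).trace = (mpow σ (2 * r) * ρ).trace := by
    rw [NN, Matrix.trace_mul_cycle, mpow_mul_mpow hσ r r, two_mul]
  rw [h0, mpow_eq hσ.1 (2 * r), trace_mul_conj, trace_diagonal_mul, Complex.re_sum]
  refine Finset.sum_congr rfl fun j _ => ?_
  rw [Complex.re_ofReal_mul, mul_comm]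
  rfl

lemma psd_diag_re_nonneg {X : Matrix d d ℂ} (hX : X.PosSemidef) (j : d) : 0 ≤ (X j j).re := by
  have h := hX.re_dotProduct_nonneg (Pi.single j 1)
  have hs : star (Pi.single j 1 : d → ℂ) = (Pi.single j 1 : d → ℂ) := by
    funext i
    simp [Pi.single_apply, apply_ite]
  have e : star (Pi.single j 1 : d → ℂ) ⬝ᵥ (X *ᵥ (Pi.single j 1 : d → ℂ)) = X j j := by
    rw [hs]
    simp [dotProduct, Matrix.mulVec, Pi.single_apply, ite_mul, mul_ite,
      Finset.sum_ite_eq, Finset.mul_sum]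
  rwa [e] at h

lemma rr_nonneg (hρ : ρ.PosDef) (j : d) : 0 ≤ rr ρ σ hσ j := by
  have h := hρ.posSemidef.conjTranspose_mul_mul_same (hσ.1.eigenvectorUnitary : Matrix d d ℂ)
  rw [← Matrix.star_eq_conjTranspose] at h
  exact psd_diag_re_nonneg h j

lemma rpow_le_max {x t : ℝ} (hx : 0 < x) (ht : |t| ≤ 1) :
    x ^ t ≤ max x x⁻¹ ∧ min x x⁻¹ ≤ x ^ t := by
  obtain ⟨ht1, ht2⟩ := abs_le.1 ht
  rcases le_or_gt 1 x with h1 | h1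
  · constructor
    · refine le_max_iff.2 (Or.inl ?_)
      calc x ^ t ≤ x ^ (1 : ℝ) := Real.rpow_le_rpow_of_exponent_le h1 ht2
        _ = x := Real.rpow_one x
    · refine min_le_iff.2 (Or.inr ?_)
      calc x⁻¹ = x ^ (-1 : ℝ) := (Real.rpow_neg_one x).symm
        _ ≤ x ^ t := Real.rpow_le_rpow_of_exponent_le h1 ht1
  · constructor
    · refine le_max_iff.2 (Or.inr ?_)
      calc x ^ t ≤ x ^ (-1 : ℝ) := Real.rpow_le_rpow_of_exponent_ge hx h1.le ht1
        _ = x⁻¹ := Real.rpow_neg_one x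
    · refine min_le_iff.2 (Or.inl ?_)
      calc x = x ^ (1 : ℝ) := (Real.rpow_one x).symm
        _ ≤ x ^ t := Real.rpow_le_rpow_of_exponent_ge hx h1.le ht2

lemma cc_hasDerivAt : HasDerivAt cc (-(1 / 2) : ℝ) 1 := by
  have h1 : HasDerivAt (fun n : ℝ => 1 - n) (-1) 1 := by
    simpa using (hasDerivAt_id (1 : ℝ)).const_sub 1
  have h2 : HasDerivAt (fun n : ℝ => 2 * n) 2 1 := by
    simpa using (hasDerivAt_id (1 : ℝ)).const_mul 2
  have h3 := h1.div h2 (by norm_num)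
  have he : ((fun n : ℝ => 1 - n) / fun n : ℝ => 2 * n) = cc := rfl
  rw [he] at h3
  refine h3.congr_deriv ?_
  norm_num

lemma continuous_mpow_of_posDef (hσ : σ.PosDef) : Continuous fun r => mpow σ r := by
  have he : (fun r => mpow σ r) = fun r =>
      (hσ.1.eigenvectorUnitary : Matrix d d ℂ) *
        Matrix.diagonal (fun i => ((hσ.1.eigenvalues i ^ r : ℝ) : ℂ)) *
        (star (hσ.1.eigenvectorUnitary : Matrix d d ℂ)) := funext fun r => mpow_eq hσ.1 r
  rw [he]
  refine (Continuous.matrix_mul (Continuous.matrix_mul continuous_const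
    (Continuous.matrix_diagonal ?_)) continuous_const)
  refine continuous_pi fun i => Complex.continuous_ofReal.comp ?_
  exact Continuous.congr (Real.continuous_exp.comp (continuous_const.mul continuous_id))
    (fun r => (Real.rpow_def_of_pos (hσ.eigenvalues_pos i) r).symm)

lemma continuous_NN (hσ : σ.PosDef) : Continuous fun r => NN ρ σ r :=
  ((continuous_mpow_of_posDef σ hσ).matrix_mul continuous_const).matrix_mul
    (continuous_mpow_of_posDef σ hσ)

lemma continuous_matrix_pow {f : ℝ → Matrix d d ℂ} (hf : Continuous f) (k : ℕ) :
    Continuous fun r => (f r) ^ k := by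
  induction k with
  | zero => simpa using continuous_const
  | succ k ih =>
      simp only [pow_succ]
      exact ih.matrix_mul hf

/-- real trace function -/
noncomputable def trN (ρ σ : Matrix d d ℂ) (hσ : σ.PosDef) : ℝ → ℝ := fun n =>
  ∑ j, rr ρ σ hσ j * hσ.1.eigenvalues j ^ (2 * cc n)

lemma trN_eq_sum_muN (n : ℝ) : trN ρ σ hσ n = ∑ i, muN ρ σ hρ hσ (cc n) i :=
  ((sum_muN ρ σ hρ hσ (cc n)).trans (trace_NN ρ σ hσ (cc n))).symm

lemma trN_hasDerivAt :
    HasDerivAt (trN ρ σ hσ) (-(∑ j, rr ρ σ hσ j * Real.log (hσ.1.eigenvalues j))) 1 := by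
  have key : ∀ j : d, HasDerivAt
      (fun n => rr ρ σ hσ j * hσ.1.eigenvalues j ^ (2 * cc n))
      (-(rr ρ σ hσ j * Real.log (hσ.1.eigenvalues j))) 1 := by
    intro j
    have hν := hσ.eigenvalues_pos j
    have h2c : HasDerivAt (fun n => 2 * cc n) (-1) 1 := by
      have := cc_hasDerivAt.const_mul (2 : ℝ)
      rw [show (-1 : ℝ) = 2 * -(1 / 2) by norm_num]
      exact this
    have hr := (Real.hasStrictDerivAt_const_rpow hν (2 * cc 1)).hasDerivAt.comp 1 h2c
    have := hr.const_mul (rr ρ σ hσ j)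
    refine HasDerivAt.congr_deriv this ?_
    have hcc1 : cc 1 = 0 := by norm_num [cc]
    rw [hcc1]
    norm_num [Real.rpow_zero]
  have hsum := HasDerivAt.fun_sum (fun j (_ : j ∈ Finset.univ) => key j)
  have he : ∑ j, -(rr ρ σ hσ j * Real.log (hσ.1.eigenvalues j))
      = -(∑ j, rr ρ σ hσ j * Real.log (hσ.1.eigenvalues j)) := by
    rw [Finset.sum_neg_distrib]
  rw [he] at hsum
  exact hsum

lemma sum_pow_muN (k : ℕ) (r : ℝ) :
    ∑ i, muN ρ σ hρ hσ r i ^ k = ((NN ρ σ r) ^ k).trace.re := by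
  rw [herm_pow_trace (NN_posSemidef ρ σ hρ hσ r).isHermitian k, Complex.ofReal_re]
  rfl

lemma sum_eval (P : Polynomial ℝ) (r : ℝ) :
    ∑ i, P.eval (muN ρ σ hρ hσ r i)
      = ∑ k ∈ Finset.range (P.natDegree + 1), P.coeff k * ((NN ρ σ r) ^ k).trace.re := by
  have he : ∀ i, P.eval (muN ρ σ hρ hσ r i)
      = ∑ k ∈ Finset.range (P.natDegree + 1), P.coeff k * muN ρ σ hρ hσ r i ^ k :=
    fun i => Polynomial.eval_eq_sum_range _
  simp_rw [he]
  rw [Finset.sum_comm]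
  refine Finset.sum_congr rfl fun k _ => ?_
  rw [← Finset.mul_sum, sum_pow_muN]

lemma unif_aux {x t B : ℝ} (hx : 0 < x) (hBx : |Real.log x| ≤ B) (ht : t ≠ 0)
    (htB : |t| * B ≤ 1) : |(x ^ t - 1) / t - Real.log x| ≤ |t| * B ^ 2 := by
  set u := Real.log x * t with hu
  have habs : |t| ≠ 0 := fun h => ht (abs_eq_zero.1 h)
  have h1 : |u| ≤ 1 := by
    calc |u| = |t| * |Real.log x| := by rw [hu, abs_mul]; ring
      _ ≤ |t| * B := by
          exact mul_le_mul_of_nonneg_left hBx (abs_nonneg t)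
      _ ≤ 1 := htB
  have h2 := Real.abs_exp_sub_one_sub_id_le h1
  have hxu : x ^ t = Real.exp u := Real.rpow_def_of_pos hx t
  have h3 : (x ^ t - 1) / t - Real.log x = (Real.exp u - 1 - u) / t := by
    rw [hxu, hu]
    field_simp
  rw [h3, abs_div]
  have hpos : 0 < |t| := abs_pos.2 ht
  have h4 : |Real.exp u - 1 - u| / |t| ≤ u ^ 2 / |t| := (div_le_div_iff_of_pos_right hpos).2 h2
  have h5 : u ^ 2 / |t| = (Real.log x) ^ 2 * |t| := by
    rw [hu, mul_pow, div_eq_iff habs, mul_assoc, abs_mul_abs_self]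
    ring
  have h6 : (Real.log x) ^ 2 * |t| ≤ B ^ 2 * |t| := by
    refine mul_le_mul_of_nonneg_right ?_ (abs_nonneg t)
    calc (Real.log x) ^ 2 = |Real.log x| ^ 2 := (sq_abs _).symm
      _ ≤ B ^ 2 := pow_le_pow_left₀ (abs_nonneg _) hBx 2
  calc |Real.exp u - 1 - u| / |t| ≤ u ^ 2 / |t| := h4
    _ = (Real.log x) ^ 2 * |t| := h5
    _ ≤ B ^ 2 * |t| := h6
    _ = |t| * B ^ 2 := mul_comm _ _

lemma mu_bounds (hρ : ρ.PosDef) (hσ : σ.PosDef) : ∃ mb Kb : ℝ, 0 < mb ∧ 1 ≤ Kb ∧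
    ∀ n ∈ Set.Icc (1/2 : ℝ) (3/2), ∀ i, muN ρ σ hρ hσ (cc n) i ∈ Set.Icc mb Kb := by
  set ν := hσ.1.eigenvalues with hν
  set Kb := max (∑ j, rr ρ σ hσ j * max (ν j) (ν j)⁻¹) 1 with hKb
  set m0 := (∏ j, min (ν j) (ν j)⁻¹) * ∏ i, hρ.1.eigenvalues i with hm0def
  have hνpos : ∀ j, 0 < ν j := fun j => hσ.eigenvalues_pos j
  have hm0 : 0 < m0 := by
    refine mul_pos (Finset.prod_pos fun j _ => ?_) (Finset.prod_pos fun i _ =>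
      hρ.eigenvalues_pos i)
    exact lt_min (hνpos j) (inv_pos.2 (hνpos j))
  have hKb1 : (1 : ℝ) ≤ Kb := le_max_right _ _
  have hKb0 : (0 : ℝ) < Kb := lt_of_lt_of_le one_pos hKb1
  refine ⟨m0 / Kb ^ Fintype.card d, Kb, by positivity, hKb1, ?_⟩
  rintro n ⟨hn1, hn2⟩ i
  have hn0 : 0 < n := lt_of_lt_of_le (by norm_num) hn1
  have ht : |2 * cc n| ≤ 1 := by
    have he : 2 * cc n = (1 - n) / n := by
      rw [cc]; field_simp
    rw [he, abs_div, abs_of_pos hn0, div_le_one hn0]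
    rw [abs_le]
    constructor <;> linarith
  have hup : ∀ j, muN ρ σ hρ hσ (cc n) j ≤ Kb := by
    intro j
    have h1 : muN ρ σ hρ hσ (cc n) j ≤ ∑ j', muN ρ σ hρ hσ (cc n) j' :=
      Finset.single_le_sum (fun j' _ => muN_nonneg ρ σ hρ hσ (cc n) j') (Finset.mem_univ j)
    have h2 : ∑ j', muN ρ σ hρ hσ (cc n) j' = ∑ j', rr ρ σ hσ j' * ν j' ^ (2 * cc n) :=
      (trN_eq_sum_muN ρ σ hρ hσ n).symm
    have h3 : ∑ j', rr ρ σ hσ j' * ν j' ^ (2 * cc n)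
        ≤ ∑ j', rr ρ σ hσ j' * max (ν j') (ν j')⁻¹ := by
      refine Finset.sum_le_sum fun j' _ => ?_
      exact mul_le_mul_of_nonneg_left ((rpow_le_max (hνpos j') ht).1) (rr_nonneg ρ σ hσ hρ j')
    calc muN ρ σ hρ hσ (cc n) j ≤ ∑ j', muN ρ σ hρ hσ (cc n) j' := h1
      _ = ∑ j', rr ρ σ hσ j' * ν j' ^ (2 * cc n) := h2
      _ ≤ ∑ j', rr ρ σ hσ j' * max (ν j') (ν j')⁻¹ := h3
      _ ≤ Kb := le_max_left _ _
  refine ⟨?_, hup i⟩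
  have hsq : (∏ j, ν j ^ (cc n)) ^ 2 = ∏ j, ν j ^ (2 * cc n) := by
    rw [← Finset.prod_pow]
    refine Finset.prod_congr rfl fun j _ => ?_
    rw [sq, ← Real.rpow_add (hνpos j), two_mul]
  have hm0le : m0 ≤ ∏ j, muN ρ σ hρ hσ (cc n) j := by
    rw [prod_muN, hsq]
    refine mul_le_mul_of_nonneg_right (Finset.prod_le_prod (fun j _ => ?_) (fun j _ => ?_))
      (Finset.prod_nonneg fun i _ => (hρ.eigenvalues_pos i).le)
    · exact (lt_min (hνpos j) (inv_pos.2 (hνpos j))).le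
    · exact (rpow_le_max (hνpos j) ht).2
  have herase : ∏ j ∈ Finset.univ.erase i, muN ρ σ hρ hσ (cc n) j ≤ Kb ^ Fintype.card d := by
    calc ∏ j ∈ Finset.univ.erase i, muN ρ σ hρ hσ (cc n) j
        ≤ ∏ _j ∈ Finset.univ.erase i, Kb :=
          Finset.prod_le_prod (fun j _ => muN_nonneg ρ σ hρ hσ (cc n) j) (fun j _ => hup j)
      _ = Kb ^ (Finset.univ.erase i).card := by rw [Finset.prod_const]
      _ ≤ Kb ^ Fintype.card d := by
          refine pow_le_pow_right₀ hKb1 ?_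
          exact le_trans (Finset.card_le_card (Finset.erase_subset _ _))
            (le_of_eq Finset.card_univ)
  have hfinal : m0 ≤ muN ρ σ hρ hσ (cc n) i * Kb ^ Fintype.card d := by
    refine le_trans hm0le ?_
    rw [← Finset.mul_prod_erase _ _ (Finset.mem_univ i)]
    exact mul_le_mul_of_nonneg_left herase (muN_nonneg ρ σ hρ hσ (cc n) i)
  exact (div_le_iff₀ (by positivity)).2 hfinal

lemma NN_cc_one (hσ : σ.PosDef) : NN ρ σ (cc 1) = ρ := by
  have h : cc 1 = 0 := by norm_num [cc]
  rw [NN, h, mpow_zero hσ.1, Matrix.one_mul, Matrix.mul_one]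

lemma trace_mul_mlog_right (hσ : σ.PosDef) :
    (ρ * mlog σ).trace.re = ∑ j, rr ρ σ hσ j * Real.log (hσ.1.eigenvalues j) := by
  rw [mlog_eq hσ.1, Matrix.trace_mul_comm, trace_mul_conj, trace_diagonal_mul, Complex.re_sum]
  refine Finset.sum_congr rfl fun j _ => ?_
  rw [Complex.re_ofReal_mul, mul_comm]
  rfl

lemma trace_mul_mlog_self {A : Matrix d d ℂ} (hA : A.IsHermitian) :
    (A * mlog A).trace.re = ∑ i, hA.eigenvalues i * Real.log (hA.eigenvalues i) := by
  have hdg : star (hA.eigenvectorUnitary : Matrix d d ℂ) * A * (hA.eigenvectorUnitary : Matrix d d ℂ)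
      = Matrix.diagonal (RCLike.ofReal ∘ hA.eigenvalues) := by
    have := hA.conjStarAlgAut_star_eigenvectorUnitary
    simpa [Unitary.conjStarAlgAut_apply] using this
  rw [mlog_eq hA, Matrix.trace_mul_comm, trace_mul_conj, hdg]
  rw [Matrix.diagonal_mul_diagonal, Matrix.trace_diagonal, Complex.re_sum]
  refine Finset.sum_congr rfl fun i _ => ?_
  rw [Complex.re_ofReal_mul]
  simp [mul_comm]

lemma relEnt_eq (hρ : ρ.PosDef) (hσ : σ.PosDef) :
    relEnt ρ σ = (∑ i, muN ρ σ hρ hσ (cc 1) i * Real.log (muN ρ σ hρ hσ (cc 1) i))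
      - ∑ j, rr ρ σ hσ j * Real.log (hσ.1.eigenvalues j) := by
  rw [relEnt, Complex.sub_re, trace_mul_mlog_right ρ σ hσ]
  congr 1
  have h : NN ρ σ (cc 1) = ρ := NN_cc_one ρ σ hσ
  conv_lhs => rw [← h]
  exact trace_mul_mlog_self (NN_posSemidef ρ σ hρ hσ (cc 1)).isHermitian

/-- the trace function appearing in the sandwiched Rényi entropy -/
noncomputable def TT (ρ σ : Matrix d d ℂ) : ℝ → ℝ := fun n =>
  (mpow (mpow σ ((1 - n) / (2 * n)) * ρ * mpow σ ((1 - n) / (2 * n))) n).trace.re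

lemma TT_eq (hρ : ρ.PosDef) (hσ : σ.PosDef) (n : ℝ) :
    TT ρ σ n = ∑ i, muN ρ σ hρ hσ (cc n) i ^ n := by
  have h : TT ρ σ n = (mpow (NN ρ σ (cc n)) n).trace.re := rfl
  rw [h, mpow_trace (NN_posSemidef ρ σ hρ hσ (cc n)).isHermitian n, Complex.ofReal_re]
  rfl

lemma TT_pos (hρ : ρ.PosDef) (hσ : σ.PosDef) [Nonempty d] (n : ℝ) : 0 < TT ρ σ n := by
  rw [TT_eq ρ σ hρ hσ n]
  exact Finset.sum_pos (fun i _ => Real.rpow_pos_of_pos (muN_pos ρ σ hρ hσ (cc n) i) n)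
    Finset.univ_nonempty

lemma TT_one (hρ : ρ.PosDef) (hσ : σ.PosDef) (hρ1 : ρ.trace = 1) : TT ρ σ 1 = 1 := by
  rw [TT_eq ρ σ hρ hσ 1]
  simp_rw [Real.rpow_one]
  rw [sum_muN, NN_cc_one ρ σ hσ, hρ1, Complex.one_re]

lemma trN_one (hρ : ρ.PosDef) (hσ : σ.PosDef) (hρ1 : ρ.trace = 1) : trN ρ σ hσ 1 = 1 := by
  rw [trN_eq_sum_muN ρ σ hρ hσ 1, sum_muN, NN_cc_one ρ σ hσ, hρ1, Complex.one_re]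

lemma E_tendsto (hρ : ρ.PosDef) (hσ : σ.PosDef) :
    Filter.Tendsto
      (fun n => ∑ i, (muN ρ σ hρ hσ (cc n) i ^ n - muN ρ σ hρ hσ (cc n) i) / (n - 1))
      (nhdsWithin 1 {(1:ℝ)}ᶜ)
      (nhds (∑ i, muN ρ σ hρ hσ (cc 1) i * Real.log (muN ρ σ hρ hσ (cc 1) i))) := by
  obtain ⟨mb, Kb, hmb, hKb1, hbound⟩ := mu_bounds ρ σ hρ hσ
  rw [Metric.tendsto_nhds]
  intro ε hε
  set L := ∑ i, muN ρ σ hρ hσ (cc 1) i * Real.log (muN ρ σ hρ hσ (cc 1) i) with hLdef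
  set Dd := (Fintype.card d : ℝ) with hDddef
  have hDd0 : (0:ℝ) ≤ Dd := Nat.cast_nonneg _
  have hKb0 : (0:ℝ) < Kb := lt_of_lt_of_le one_pos hKb1
  have hfc : ContinuousOn (fun x : ℝ => x * Real.log x) (Set.Icc mb Kb) := by
    refine ContinuousOn.mul continuousOn_id (Real.continuousOn_log.mono ?_)
    intro x hx
    exact ne_of_gt (lt_of_lt_of_le hmb hx.1)
  set ε' := ε / (4 * (Dd + 1)) with hε'def
  have hε' : 0 < ε' := by positivity
  obtain ⟨P, hP⟩ := exists_polynomial_near_of_continuousOn mb Kb _ hfc ε' hε'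
  have hgcont : ContinuousAt (fun n : ℝ => ∑ k ∈ Finset.range (P.natDegree + 1),
      P.coeff k * ((NN ρ σ (cc n)) ^ k).trace.re) 1 := by
    have hccc : ContinuousAt cc 1 := cc_hasDerivAt.continuousAt
    have hg : Continuous (fun r : ℝ => ∑ k ∈ Finset.range (P.natDegree + 1),
        P.coeff k * ((NN ρ σ r) ^ k).trace.re) := by
      refine continuous_finset_sum _ fun k _ => ?_
      exact continuous_const.mul (Complex.continuous_re.comp
        ((continuous_matrix_pow (continuous_NN ρ σ hσ) k).matrix_trace))
    have h2 : ContinuousAt ((fun r : ℝ => ∑ k ∈ Finset.range (P.natDegree + 1),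
        P.coeff k * ((NN ρ σ r) ^ k).trace.re) ∘ cc) 1 := hg.continuousAt.comp hccc
    exact h2
  have hgev : ∀ᶠ n in nhds (1:ℝ),
      |(∑ k ∈ Finset.range (P.natDegree + 1), P.coeff k * ((NN ρ σ (cc n)) ^ k).trace.re)
        - (∑ k ∈ Finset.range (P.natDegree + 1), P.coeff k * ((NN ρ σ (cc 1)) ^ k).trace.re)|
        < ε / 4 := by
    have h := Metric.tendsto_nhds.1 hgcont (ε/4) (by positivity)
    simpa [Real.dist_eq] using h
  set B := max |Real.log mb| |Real.log Kb| with hBdef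
  have hB0 : (0:ℝ) ≤ B := le_trans (abs_nonneg _) (le_max_left _ _)
  set C := Dd * Kb * B ^ 2 with hCdef
  have hC0 : (0:ℝ) ≤ C := by positivity
  set δ := min (min (1 / (B + 1)) ((ε / 4) / (C + 1))) (1/2 : ℝ) with hδdef
  have hδ0 : 0 < δ := by
    refine lt_min (lt_min (by positivity) (by positivity)) (by norm_num)
  have hball : ∀ᶠ n in nhds (1:ℝ), |n - 1| < δ := by
    refine Filter.eventually_of_mem (Metric.ball_mem_nhds 1 hδ0) (fun y hy => ?_)
    simpa [Real.dist_eq] using hy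
  filter_upwards [self_mem_nhdsWithin, hball.filter_mono nhdsWithin_le_nhds,
    hgev.filter_mono nhdsWithin_le_nhds] with n hn1 hn2 hn3
  have hne : n ≠ 1 := hn1
  have htne : n - 1 ≠ 0 := sub_ne_zero.2 hne
  have hδ1 : |n - 1| ≤ 1 / (B + 1) :=
    le_trans hn2.le (le_trans (min_le_left _ _) (min_le_left _ _))
  have hδ2 : |n - 1| < (ε / 4) / (C + 1) :=
    lt_of_lt_of_le hn2 (le_trans (min_le_left _ _) (min_le_right _ _))
  have hδ3 : |n - 1| < 1/2 := lt_of_lt_of_le hn2 (min_le_right _ _)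
  have hnIcc : n ∈ Set.Icc (1/2:ℝ) (3/2) := by
    obtain ⟨h1, h2⟩ := abs_lt.1 hδ3
    exact ⟨by linarith, by linarith⟩
  have hbn := hbound n hnIcc
  have hb1 := hbound 1 (by norm_num)
  have hμpos : ∀ i, 0 < muN ρ σ hρ hσ (cc n) i := muN_pos ρ σ hρ hσ (cc n)
  have hlogB : ∀ x : ℝ, mb ≤ x → x ≤ Kb → |Real.log x| ≤ B := by
    intro x h1 h2
    have hx0 : 0 < x := lt_of_lt_of_le hmb h1
    rw [abs_le]
    constructor
    · calc -B ≤ -|Real.log mb| := neg_le_neg (le_max_left _ _)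
        _ ≤ Real.log mb := neg_abs_le _
        _ ≤ Real.log x := (Real.log_le_log_iff hmb hx0).2 h1
    · calc Real.log x ≤ Real.log Kb := (Real.log_le_log_iff hx0 hKb0).2 h2
        _ ≤ |Real.log Kb| := le_abs_self _
        _ ≤ B := le_max_right _ _
  have htB : |n - 1| * B ≤ 1 := by
    calc |n - 1| * B ≤ (1 / (B + 1)) * B := mul_le_mul_of_nonneg_right hδ1 hB0
      _ ≤ 1 := by
          rw [div_mul_eq_mul_div, one_mul, div_le_one (by positivity)]
          linarith
  set S1 := ∑ i, muN ρ σ hρ hσ (cc n) i * ((muN ρ σ hρ hσ (cc n) i ^ (n - 1) - 1) / (n - 1))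
    with hS1def
  set S2 := ∑ i, muN ρ σ hρ hσ (cc n) i * Real.log (muN ρ σ hρ hσ (cc n) i) with hS2def
  set S3 := ∑ i, P.eval (muN ρ σ hρ hσ (cc n) i) with hS3def
  set S4 := ∑ i, P.eval (muN ρ σ hρ hσ (cc 1) i) with hS4def
  have hform : ∑ i, (muN ρ σ hρ hσ (cc n) i ^ n - muN ρ σ hρ hσ (cc n) i) / (n - 1) = S1 := by
    rw [hS1def]
    refine Finset.sum_congr rfl fun i _ => ?_
    have hμ := hμpos i
    have hrw : muN ρ σ hρ hσ (cc n) i ^ n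
        = muN ρ σ hρ hσ (cc n) i * muN ρ σ hρ hσ (cc n) i ^ (n - 1) := by
      have h := Real.rpow_add hμ 1 (n - 1)
      rw [Real.rpow_one] at h
      rw [show (1 : ℝ) + (n - 1) = n from by ring] at h
      exact h
    rw [hrw]
    field_simp
  have piece1 : |S1 - S2| < ε / 4 := by
    have hterm : ∀ i : d, |muN ρ σ hρ hσ (cc n) i * ((muN ρ σ hρ hσ (cc n) i ^ (n - 1) - 1)
        / (n - 1)) - muN ρ σ hρ hσ (cc n) i * Real.log (muN ρ σ hρ hσ (cc n) i)|
        ≤ Kb * (|n - 1| * B ^ 2) := by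
      intro i
      obtain ⟨hlo, hhi⟩ := hbn i
      rw [← mul_sub, abs_mul, abs_of_pos (hμpos i)]
      refine mul_le_mul (hhi) ?_ (abs_nonneg _) hKb0.le
      exact unif_aux (hμpos i) (hlogB _ hlo hhi) htne htB
    calc |S1 - S2| = |∑ i, (muN ρ σ hρ hσ (cc n) i * ((muN ρ σ hρ hσ (cc n) i ^ (n - 1) - 1)
          / (n - 1)) - muN ρ σ hρ hσ (cc n) i * Real.log (muN ρ σ hρ hσ (cc n) i))| := by
            rw [hS1def, hS2def, Finset.sum_sub_distrib]
      _ ≤ ∑ i, |muN ρ σ hρ hσ (cc n) i * ((muN ρ σ hρ hσ (cc n) i ^ (n - 1) - 1)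
          / (n - 1)) - muN ρ σ hρ hσ (cc n) i * Real.log (muN ρ σ hρ hσ (cc n) i)| :=
            Finset.abs_sum_le_sum_abs _ _
      _ ≤ ∑ _i : d, Kb * (|n - 1| * B ^ 2) := Finset.sum_le_sum fun i _ => hterm i
      _ = Dd * Kb * (|n - 1| * B ^ 2) := by
            rw [Finset.sum_const, Finset.card_univ, nsmul_eq_mul]
            ring
      _ ≤ (C + 1) * |n - 1| := by
            rw [hCdef]
            nlinarith [abs_nonneg (n - 1)]
      _ < (C + 1) * ((ε / 4) / (C + 1)) := by
            refine mul_lt_mul_of_pos_left hδ2 (by positivity)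
      _ = ε / 4 := by
            field_simp
  have hDdε' : Dd * ε' < ε / 4 := by
    have h1 : Dd * ε' = (Dd / (Dd + 1)) * (ε / 4) := by
      rw [hε'def]
      rw [eq_comm, mul_comm (Dd / (Dd + 1)) (ε / 4), div_mul_div_comm]
      congr 1
      ring
    rw [h1]
    have h2 : Dd / (Dd + 1) < 1 := (div_lt_one (by positivity)).2 (by linarith)
    calc (Dd / (Dd + 1)) * (ε / 4) < 1 * (ε / 4) := mul_lt_mul_of_pos_right h2 (by positivity)
      _ = ε / 4 := one_mul _
  have piece2 : |S2 - S3| < ε / 4 := by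
    have hterm : ∀ i : d, |muN ρ σ hρ hσ (cc n) i * Real.log (muN ρ σ hρ hσ (cc n) i)
        - P.eval (muN ρ σ hρ hσ (cc n) i)| ≤ ε' := by
      intro i
      have h := hP _ ⟨(hbn i).1, (hbn i).2⟩
      rw [abs_sub_comm]
      exact h.le
    calc |S2 - S3| ≤ ∑ i, |muN ρ σ hρ hσ (cc n) i * Real.log (muN ρ σ hρ hσ (cc n) i)
          - P.eval (muN ρ σ hρ hσ (cc n) i)| := by
            rw [hS2def, hS3def, ← Finset.sum_sub_distrib]
            exact Finset.abs_sum_le_sum_abs _ _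
      _ ≤ ∑ _i : d, ε' := Finset.sum_le_sum fun i _ => hterm i
      _ = Dd * ε' := by rw [Finset.sum_const, Finset.card_univ, nsmul_eq_mul]
      _ < ε / 4 := hDdε'
  have piece4 : |S4 - L| < ε / 4 := by
    have hterm : ∀ i : d, |P.eval (muN ρ σ hρ hσ (cc 1) i)
        - muN ρ σ hρ hσ (cc 1) i * Real.log (muN ρ σ hρ hσ (cc 1) i)| ≤ ε' := by
      intro i
      exact (hP _ ⟨(hb1 i).1, (hb1 i).2⟩).le
    calc |S4 - L| ≤ ∑ i, |P.eval (muN ρ σ hρ hσ (cc 1) i)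
          - muN ρ σ hρ hσ (cc 1) i * Real.log (muN ρ σ hρ hσ (cc 1) i)| := by
            rw [hS4def, hLdef, ← Finset.sum_sub_distrib]
            exact Finset.abs_sum_le_sum_abs _ _
      _ ≤ ∑ _i : d, ε' := Finset.sum_le_sum fun i _ => hterm i
      _ = Dd * ε' := by rw [Finset.sum_const, Finset.card_univ, nsmul_eq_mul]
      _ < ε / 4 := hDdε'
  have piece3 : |S3 - S4| < ε / 4 := by
    rw [hS3def, hS4def, sum_eval, sum_eval]
    exact hn3
  rw [Real.dist_eq, hform]
  calc |S1 - L| ≤ |S1 - S2| + |S2 - L| := abs_sub_le _ _ _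
    _ ≤ |S1 - S2| + (|S2 - S3| + |S3 - L|) := by
        have := abs_sub_le S2 S3 L
        linarith
    _ ≤ |S1 - S2| + (|S2 - S3| + (|S3 - S4| + |S4 - L|)) := by
        have := abs_sub_le S3 S4 L
        linarith
    _ < ε / 4 + (ε / 4 + (ε / 4 + ε / 4)) := by
        linarith
    _ = ε := by ring

lemma TT_hasDerivAt (hρ : ρ.PosDef) (hσ : σ.PosDef) (hρ1 : ρ.trace = 1) :
    HasDerivAt (TT ρ σ) (relEnt ρ σ) 1 := by
  rw [hasDerivAt_iff_tendsto_slope]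
  have h1 := E_tendsto ρ σ hρ hσ
  have h2 := hasDerivAt_iff_tendsto_slope.mp (trN_hasDerivAt ρ σ hσ)
  have h3 := h1.add h2
  rw [relEnt_eq ρ σ hρ hσ, sub_eq_add_neg]
  refine Filter.Tendsto.congr' ?_ h3
  filter_upwards [self_mem_nhdsWithin] with n hn
  have hne : n ≠ 1 := hn
  have htne : n - 1 ≠ 0 := sub_ne_zero.2 hne
  rw [slope_def_field, slope_def_field]
  rw [TT_one ρ σ hρ hσ hρ1, trN_one ρ σ hρ hσ hρ1]
  rw [TT_eq ρ σ hρ hσ n, trN_eq_sum_muN ρ σ hρ hσ n]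
  rw [← Finset.sum_div, Finset.sum_sub_distrib, ← add_div]
  congr 1
  ring

end SRenyiProof

open Filter in
/-- the algebraic sandwiched Rényi relative entropy converges to the
algebraic relative entropy as the Rényi index tends to 1. -/
theorem srenyi_alg_tendsto_relEnt {ι : Type*} [Fintype ι] (da : ι → ℕ)
    (p q : ι → ℝ) (hp : ∀ α, 0 < p α) (hp1 : ∑ α, p α = 1)
    (hq : ∀ α, 0 < q α) (hq1 : ∑ α, q α = 1)
    (ρ σ : ∀ α, Matrix (Fin (da α)) (Fin (da α)) ℂ)
    (hρ : ∀ α, IsDensity (ρ α)) (hσ : ∀ α, IsDensity (σ α))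
    (hρpd : ∀ α, (ρ α).PosDef) (hσpd : ∀ α, (σ α).PosDef) :
    Tendsto
      (fun n : ℝ => (n - 1)⁻¹ *
        Real.log (∑ α, p α ^ n * q α ^ (1 - n) * Real.exp ((n - 1) * SRenyi n (ρ α) (σ α))))
      (nhdsWithin 1 {(1 : ℝ)}ᶜ)
      (nhds (∑ α, p α * Real.log (p α / q α) + ∑ α, p α * relEnt (ρ α) (σ α))) := by
  classical
  have hnem : ∀ α, Nonempty (Fin (da α)) := by
    intro α
    rcases isEmpty_or_nonempty (Fin (da α)) with h | h
    · exfalso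
      have h2 := (hρ α).2
      rw [Matrix.trace] at h2
      simp [Finset.univ_eq_empty] at h2
    · exact h
  set T : ι → ℝ → ℝ := fun α => SRenyiProof.TT (ρ α) (σ α) with hT
  set F : ℝ → ℝ := fun n => ∑ α, p α ^ n * q α ^ (1 - n) * T α n with hF
  have hT1 : ∀ α, T α 1 = 1 := fun α =>
    SRenyiProof.TT_one _ _ (hρpd α) (hσpd α) (hρ α).2
  have hTpos : ∀ α n, 0 < T α n := fun α n => by
    haveI := hnem α
    exact SRenyiProof.TT_pos _ _ (hρpd α) (hσpd α) n
  have hTd : ∀ α, HasDerivAt (T α) (relEnt (ρ α) (σ α)) 1 := fun α =>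
    SRenyiProof.TT_hasDerivAt _ _ (hρpd α) (hσpd α) (hρ α).2
  have hF1 : F 1 = 1 := by
    rw [hF]
    simp only [Real.rpow_one, sub_self, Real.rpow_zero, mul_one]
    rw [Finset.sum_congr rfl (fun α _ => by rw [hT1 α, mul_one])]
    exact hp1
  have hFd : HasDerivAt F
      (∑ α, (p α * Real.log (p α) - p α * Real.log (q α) + p α * relEnt (ρ α) (σ α))) 1 := by
    rw [hF]
    refine HasDerivAt.fun_sum fun α _ => ?_
    have h1 : HasDerivAt (fun n : ℝ => p α ^ n) (p α * Real.log (p α)) 1 := by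
      have := (Real.hasStrictDerivAt_const_rpow (hp α) 1).hasDerivAt
      simpa [Real.rpow_one] using this
    have h2 : HasDerivAt (fun n : ℝ => q α ^ (1 - n)) (-(Real.log (q α))) 1 := by
      have hinner : HasDerivAt (fun n : ℝ => 1 - n) (-1) 1 := by
        simpa using (hasDerivAt_id (1:ℝ)).const_sub 1
      have := (Real.hasStrictDerivAt_const_rpow (hq α) (1 - 1)).hasDerivAt.comp 1 hinner
      exact this.congr_deriv (by simp)
    have h12 := h1.mul h2
    have h123 := h12.mul (hTd α)
    refine h123.congr_deriv ?_
    rw [hT1 α]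
    simp only [Pi.mul_apply, Real.rpow_one, sub_self, Real.rpow_zero, mul_one, one_mul]
    ring
  have hFne : F 1 ≠ 0 := by rw [hF1]; exact one_ne_zero
  have hlog : HasDerivAt (fun n => Real.log (F n))
      (∑ α, (p α * Real.log (p α) - p α * Real.log (q α) + p α * relEnt (ρ α) (σ α))) 1 := by
    have := (Real.hasDerivAt_log hFne).comp 1 hFd
    exact this.congr_deriv (by rw [hF1, inv_one, one_mul])
  rw [hasDerivAt_iff_tendsto_slope] at hlog
  have hval : (∑ α, (p α * Real.log (p α) - p α * Real.log (q α) + p α * relEnt (ρ α) (σ α)))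
      = ∑ α, p α * Real.log (p α / q α) + ∑ α, p α * relEnt (ρ α) (σ α) := by
    rw [← Finset.sum_add_distrib]
    refine Finset.sum_congr rfl fun α _ => ?_
    rw [Real.log_div (hp α).ne' (hq α).ne']
    ring
  rw [← hval]
  refine Filter.Tendsto.congr' ?_ hlog
  filter_upwards [self_mem_nhdsWithin] with n hn
  have hne1 : n ≠ 1 := hn
  have htne : n - 1 ≠ 0 := sub_ne_zero.2 hne1
  have hsum : F n = ∑ α, p α ^ n * q α ^ (1 - n) * Real.exp ((n - 1) * SRenyi n (ρ α) (σ α)) := by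
    rw [hF]
    refine Finset.sum_congr rfl fun α _ => ?_
    congr 1
    have hsr : SRenyi n (ρ α) (σ α) = (n - 1)⁻¹ * Real.log (T α n) := rfl
    rw [hsr, ← mul_assoc, mul_inv_cancel₀ htne, one_mul, Real.exp_log (hTpos α n)]
  rw [slope_def_field, hF1, Real.log_one, sub_zero, ← hsum, div_eq_inv_mul]
end
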